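/- arXiv:2206.05187 — 7 statements merged into one kernel-verified Lean document; each statement's English description precedes it below -/
import Mathlib

section
/- Let R^(1),…,R^(M) : ℝ^p → ℝ each be G-Lipschitz and ν-weakly convex, let R̄(w) = (1/M)∑_{m=1}^M R^(m)(w). Fix ρ with 0 < ρ < 1/(2ν), T ≥ 1, 1 ≤ I ≤ M, and set η = ρ/√T. Assume Δ̄_ρ = R̄_ρ(w₀) − inf_w R̄_ρ(w) is finite, where R̄_ρ is the ρ-Moreau envelope of R̄. Let I₁,…,I_T be independent uniformly random subsets of {1,…,M} of cardinality I, and define iterates recursively: for each t and each m, w_t^(m) is the exact minimizer of w ↦ R^(m)(w) + ‖w − w_{t−1}‖²/(2η), and w_t = (1/I)∑_{ξ∈I_t} w_t^(ξ). Then (1/T)∑_{t=0}^{T−1} E[‖∇R̄_ρ(w_t)‖²] ≤ Δ̄_ρ/(T·ρ) + (2Δ̄_ρ + 4G²ρ)/(ρ·√T). -/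
open Finset

local notation "⟪" x ", " y "⟫" => @inner ℝ _ _ x y




/-- Quadratic growth at the minimizer of a convex + quadratic function. -/
lemma quad_growth {E : Type*} [NormedAddCommGroup E] [InnerProductSpace ℝ E]
    (g : E → ℝ) (hg : ConvexOn ℝ Set.univ g) (a : ℝ) (ha : 0 < a) (b z : E)
    (hmin : ∀ x : E, g z + a * ‖z‖ ^ 2 + ⟪b, z⟫ ≤ g x + a * ‖x‖ ^ 2 + ⟪b, x⟫)
    (x : E) :
    g z + a * ‖z‖ ^ 2 + ⟪b, z⟫ + a * ‖x - z‖ ^ 2 ≤ g x + a * ‖x‖ ^ 2 + ⟪b, x⟫ := by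
  set F : E → ℝ := fun u => g u + a * ‖u‖ ^ 2 + ⟪b, u⟫ with hF
  have key : ∀ θ : ℝ, 0 < θ → θ < 1 → a * (1 - θ) * ‖x - z‖ ^ 2 ≤ F x - F z := by
    intro θ hθ0 hθ1
    have hθ1' : (0:ℝ) ≤ 1 - θ := by linarith
    have hcvx := hg.2 (Set.mem_univ x) (Set.mem_univ z) (le_of_lt hθ0) hθ1' (by ring)
    -- quadratic identity
    have hq : a * ‖θ • x + (1 - θ) • z‖ ^ 2 + ⟪b, θ • x + (1 - θ) • z⟫
        = θ * (a * ‖x‖ ^ 2 + ⟪b, x⟫) + (1 - θ) * (a * ‖z‖ ^ 2 + ⟪b, z⟫)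
          - a * θ * (1 - θ) * ‖x - z‖ ^ 2 := by
      have h1 : ∀ v : E, ‖v‖ ^ 2 = ⟪v, v⟫ := fun v => (real_inner_self_eq_norm_sq v).symm
      simp only [h1]
      simp only [inner_add_left, inner_add_right, inner_sub_left, inner_sub_right,
        real_inner_smul_left, real_inner_smul_right]
      ring_nf
    have hmin' := hmin (θ • x + (1 - θ) • z)
    have : F z ≤ θ * F x + (1 - θ) * F z - a * θ * (1 - θ) * ‖x - z‖ ^ 2 := by
      calc F z ≤ F (θ • x + (1 - θ) • z) := hmin'
        _ = g (θ • x + (1 - θ) • z) + (a * ‖θ • x + (1 - θ) • z‖ ^ 2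
              + ⟪b, θ • x + (1 - θ) • z⟫) := by simp [hF]; ring
        _ ≤ (θ * g x + (1 - θ) * g z) + (θ * (a * ‖x‖ ^ 2 + ⟪b, x⟫)
              + (1 - θ) * (a * ‖z‖ ^ 2 + ⟪b, z⟫) - a * θ * (1 - θ) * ‖x - z‖ ^ 2) := by
            have := hcvx; simp only [smul_eq_mul] at this; linarith [hq.le, hq.ge]
        _ = θ * F x + (1 - θ) * F z - a * θ * (1 - θ) * ‖x - z‖ ^ 2 := by simp [hF]; ring
    have h2 : a * θ * (1 - θ) * ‖x - z‖ ^ 2 ≤ θ * (F x - F z) := by nlinarith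
    have := (mul_le_mul_iff_right₀ hθ0).mp (by nlinarith : θ * (a * (1 - θ) * ‖x - z‖ ^ 2) ≤ θ * (F x - F z))
    linarith
  have goal : a * ‖x - z‖ ^ 2 ≤ F x - F z := by
    refine le_of_forall_pos_le_add fun δ hδ => ?_
    set c := a * ‖x - z‖ ^ 2 with hc
    have hc0 : 0 ≤ c := by positivity
    set θ := min (1/2 : ℝ) (δ / (c + 1)) with hθ
    have hθ0 : 0 < θ := lt_min (by norm_num) (div_pos hδ (by linarith))
    have hθ1 : θ < 1 := lt_of_le_of_lt (min_le_left _ _) (by norm_num)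
    have hk := key θ hθ0 hθ1
    have h3 : θ * c ≤ δ := by
      have h4 : θ ≤ δ / (c + 1) := min_le_right _ _
      have : θ * c ≤ (δ / (c + 1)) * c := by nlinarith
      have h5 : (δ / (c + 1)) * c ≤ δ := by
        rw [div_mul_eq_mul_div, div_le_iff₀ (by linarith : (0:ℝ) < c + 1)]; nlinarith
      linarith
    have : a * (1 - θ) * ‖x - z‖ ^ 2 = c - θ * c := by rw [hc]; ring
    linarith [key θ hθ0 hθ1]
  simp only [hF] at goal ⊢; linarith


/-- Quadratic growth for the proximal subproblem of a `ν`-weakly convex function. -/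
lemma prox_growth {E : Type*} [NormedAddCommGroup E] [InnerProductSpace ℝ E]
    (f : E → ℝ) (ν s : ℝ) (hν : 0 < ν) (hs : 0 < s) (hsν : s * ν < 1)
    (hwc : ConvexOn ℝ Set.univ (fun u => f u + (ν / 2) * ‖u‖ ^ 2))
    (z xs : E)
    (hmin : ∀ x : E, f xs + ‖xs - z‖ ^ 2 / (2 * s) ≤ f x + ‖x - z‖ ^ 2 / (2 * s))
    (x : E) :
    f xs + ‖xs - z‖ ^ 2 / (2 * s) + ((1 / s - ν) / 2) * ‖x - xs‖ ^ 2
      ≤ f x + ‖x - z‖ ^ 2 / (2 * s) := by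
  set a : ℝ := 1 / (2 * s) - ν / 2 with ha_def
  have ha : 0 < a := by
    rw [ha_def]
    have e : (1:ℝ)/(2*s) = (1/s)/2 := by field_simp
    have hn : ν < 1/s := by rw [lt_div_iff₀ hs]; linarith
    linarith
  set g : E → ℝ := fun u => f u + (ν / 2) * ‖u‖ ^ 2 with hg_def
  set b : E := -((1 / s) • z) with hb_def
  clear_value a g b
  have hid : ∀ u : E, f u + ‖u - z‖ ^ 2 / (2 * s)
      = g u + a * ‖u‖ ^ 2 + ⟪b, u⟫ + ‖z‖ ^ 2 / (2 * s) := by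
    intro u
    have hnorm : ‖u - z‖ ^ 2 = ‖u‖ ^ 2 - 2 * ⟪u, z⟫ + ‖z‖ ^ 2 := by
      rw [← real_inner_self_eq_norm_sq, ← real_inner_self_eq_norm_sq,
        ← real_inner_self_eq_norm_sq]
      simp only [inner_sub_left, inner_sub_right]
      linarith [real_inner_comm u z]
    have hbu : ⟪b, u⟫ = -(1 / s) * ⟪z, u⟫ := by
      rw [hb_def]; simp [real_inner_smul_left]
    rw [hg_def]
    simp only [hbu, hnorm, ha_def]
    rw [real_inner_comm z u]
    field_simp
    ring
  have hmin' : ∀ x : E, g xs + a * ‖xs‖ ^ 2 + ⟪b, xs⟫ ≤ g x + a * ‖x‖ ^ 2 + ⟪b, x⟫ := by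
    intro y
    have := hmin y
    rw [hid xs, hid y] at this
    linarith
  have := quad_growth g hwc a ha b xs hmin' x
  rw [hid xs, hid x] at *
  have haa : (1 / s - ν) / 2 = a := by rw [ha_def]; field_simp
  rw [haa]
  linarith


lemma avg_norm_sq_le {E : Type*} [NormedAddCommGroup E] [InnerProductSpace ℝ E]
    {ι : Type*} (s : Finset ι) (I : ℕ) (hI : 0 < I) (hcard : s.card = I)
    (v : ι → E) (x : E) :
    ‖x - (I:ℝ)⁻¹ • ∑ ξ ∈ s, v ξ‖ ^ 2 ≤ (I:ℝ)⁻¹ * ∑ ξ ∈ s, ‖x - v ξ‖ ^ 2 := by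
  have hI0 : (0:ℝ) < I := by exact_mod_cast hI
  have h1 : x - (I:ℝ)⁻¹ • ∑ ξ ∈ s, v ξ = (I:ℝ)⁻¹ • ∑ ξ ∈ s, (x - v ξ) := by
    rw [Finset.sum_sub_distrib, smul_sub, Finset.sum_const, hcard,
      ← Nat.cast_smul_eq_nsmul ℝ, smul_smul, inv_mul_cancel₀ (by positivity), one_smul]
  rw [h1, norm_smul]
  have h2 : ‖∑ ξ ∈ s, (x - v ξ)‖ ≤ ∑ ξ ∈ s, ‖x - v ξ‖ := norm_sum_le _ _
  have h3 : (∑ ξ ∈ s, ‖x - v ξ‖) ^ 2 ≤ (I:ℝ) * ∑ ξ ∈ s, ‖x - v ξ‖ ^ 2 := by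
    have := sq_sum_le_card_mul_sum_sq (s := s) (f := fun ξ => ‖x - v ξ‖)
    rwa [hcard] at this
  have h4 : ‖(I:ℝ)⁻¹‖ = (I:ℝ)⁻¹ := by
    rw [Real.norm_eq_abs, abs_of_pos (by positivity)]
  rw [h4, mul_pow]
  have h5 : ‖∑ ξ ∈ s, (x - v ξ)‖ ^ 2 ≤ (I:ℝ) * ∑ ξ ∈ s, ‖x - v ξ‖ ^ 2 := by
    nlinarith [norm_nonneg (∑ ξ ∈ s, (x - v ξ)), Finset.sum_nonneg (s := s) (f := fun ξ => ‖x - v ξ‖) (fun ξ _ => norm_nonneg (x - v ξ))]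
  calc ((I:ℝ)⁻¹) ^ 2 * ‖∑ ξ ∈ s, (x - v ξ)‖ ^ 2
      ≤ ((I:ℝ)⁻¹) ^ 2 * ((I:ℝ) * ∑ ξ ∈ s, ‖x - v ξ‖ ^ 2) := by
        apply mul_le_mul_of_nonneg_left h5 (by positivity)
    _ = (I:ℝ)⁻¹ * ∑ ξ ∈ s, ‖x - v ξ‖ ^ 2 := by field_simp

lemma count_subsets_mem (M I : ℕ) (hI : 1 ≤ I) (m : Fin M) :
    (((univ : Finset (Fin M)).powersetCard I).filter (fun s => m ∈ s)).card
      = (M - 1).choose (I - 1) := by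
  have hM : 0 < M := m.pos
  rw [Finset.card_nbij' (fun s => s.erase m) (fun t => insert m t)]
  · rw [Finset.card_powersetCard, Finset.card_erase_of_mem (Finset.mem_univ m),
      Finset.card_univ, Fintype.card_fin]
  · intro s hs
    simp only [Finset.mem_coe, Finset.mem_filter, Finset.mem_powersetCard] at hs ⊢
    obtain ⟨⟨hsub, hcard⟩, hm⟩ := hs
    refine ⟨?_, ?_⟩
    · intro x hx
      simp only [Finset.mem_erase] at hx ⊢
      exact ⟨hx.1, Finset.mem_univ x⟩
    · rw [Finset.card_erase_of_mem hm, hcard]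
  · intro t ht
    simp only [Finset.mem_coe, Finset.mem_powersetCard] at ht
    obtain ⟨hsub, hcard⟩ := ht
    have hmt : m ∉ t := fun hmem => by
      have := hsub hmem
      simp only [Finset.mem_erase] at this
      exact this.1 rfl
    simp only [Finset.mem_coe, Finset.mem_filter, Finset.mem_powersetCard]
    refine ⟨⟨Finset.subset_univ _, ?_⟩, Finset.mem_insert_self m t⟩
    rw [Finset.card_insert_of_notMem hmt, hcard]
    omega
  · intro s hs
    simp only [Finset.mem_coe, Finset.mem_filter] at hs
    exact Finset.insert_erase hs.2
  · intro t ht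
    simp only [Finset.mem_coe, Finset.mem_powersetCard] at ht
    have hmt : m ∉ t := fun hmem => by
      have := ht.1 hmem
      simp only [Finset.mem_erase] at this
      exact this.1 rfl
    exact Finset.erase_insert hmt

lemma avg_subsets (M I : ℕ) (hI : 1 ≤ I) (hIM : I ≤ M) (g : Fin M → ℝ) :
    ∑ s ∈ (univ : Finset (Fin M)).powersetCard I, (I:ℝ)⁻¹ * ∑ ξ ∈ s, g ξ
      = (M.choose I : ℝ) * ((M:ℝ)⁻¹ * ∑ m, g m) := by
  have hM : 1 ≤ M := le_trans hI hIM
  have hsum : ∑ s ∈ (univ : Finset (Fin M)).powersetCard I, ∑ ξ ∈ s, g ξ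
      = ((M - 1).choose (I - 1) : ℝ) * ∑ m, g m := by
    have h1 : ∀ s ∈ (univ : Finset (Fin M)).powersetCard I,
        ∑ ξ ∈ s, g ξ = ∑ m : Fin M, if m ∈ s then g m else 0 := by
      intro s _
      rw [Finset.sum_ite_mem, Finset.univ_inter]
    rw [Finset.sum_congr rfl h1, Finset.sum_comm]
    have h2 : ∀ m : Fin M,
        ∑ s ∈ (univ : Finset (Fin M)).powersetCard I, (if m ∈ s then g m else 0)
          = ((M - 1).choose (I - 1) : ℝ) * g m := by
      intro m
      rw [Finset.sum_ite, Finset.sum_const_zero, add_zero, Finset.sum_const,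
        count_subsets_mem M I hI m, nsmul_eq_mul]
    rw [Finset.sum_congr rfl fun m _ => h2 m, ← Finset.mul_sum]
  rw [← Finset.mul_sum, hsum]
  have hnat : M * (M - 1).choose (I - 1) = M.choose I * I := by
    have h := Nat.add_one_mul_choose_eq (M - 1) (I - 1)
    have e1 : M - 1 + 1 = M := by omega
    have e2 : I - 1 + 1 = I := by omega
    rwa [e1, e2] at h
  have hcast : (M:ℝ) * ((M - 1).choose (I - 1) : ℝ) = (M.choose I : ℝ) * (I:ℝ) := by
    exact_mod_cast congrArg (Nat.cast : ℕ → ℝ) hnat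
  have hM0 : (0:ℝ) < M := by exact_mod_cast lt_of_lt_of_le Nat.one_pos (le_trans hI hIM)
  have hI0 : (0:ℝ) < I := by exact_mod_cast hI
  field_simp
  linear_combination (∑ m : Fin M, g m) * hcast


/-- Resampling identity: if `f s σ` does not depend on coordinate `t'` of `σ`, then
averaging `f (σ t') σ` over all `σ` equals averaging `f s σ` over independent `s`. -/
lemma resample {M T I : ℕ} (S : Finset (Finset (Fin M))) (t' : Fin T)
    (f : Finset (Fin M) → (Fin T → Finset (Fin M)) → ℝ)
    (hdep : ∀ σ ∈ Fintype.piFinset (fun _ : Fin T => S), ∀ s ∈ S,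
      ∀ u : Finset (Fin M), f u (Function.update σ t' s) = f u σ) :
    (S.card : ℝ) * ∑ σ ∈ Fintype.piFinset (fun _ : Fin T => S), f (σ t') σ
      = ∑ σ ∈ Fintype.piFinset (fun _ : Fin T => S), ∑ s ∈ S, f s σ := by
  classical
  set Pf := Fintype.piFinset (fun _ : Fin T => S) with hPf
  have lhs : (S.card : ℝ) * ∑ σ ∈ Pf, f (σ t') σ
      = ∑ x ∈ Pf ×ˢ S, f (x.1 t') x.1 := by
    rw [Finset.sum_product]
    simp only [Finset.sum_const, nsmul_eq_mul]
    rw [Finset.mul_sum]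
  have rhs : ∑ σ ∈ Pf, ∑ s ∈ S, f s σ = ∑ x ∈ Pf ×ˢ S, f x.2 x.1 := by
    rw [Finset.sum_product]
  rw [lhs, rhs]
  refine Finset.sum_nbij' (i := fun x => (Function.update x.1 t' x.2, x.1 t'))
    (j := fun x => (Function.update x.1 t' x.2, x.1 t')) ?_ ?_ ?_ ?_ ?_ |>.symm
  · rintro ⟨σ, s⟩ hx
    simp only [Finset.mem_product, hPf, Fintype.mem_piFinset] at hx ⊢
    refine ⟨fun i => ?_, hx.1 t'⟩
    by_cases hi : i = t'
    · subst hi; rw [Function.update_self]; exact hx.2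
    · rw [Function.update_of_ne hi]; exact hx.1 i
  · rintro ⟨σ, s⟩ hx
    simp only [Finset.mem_product, hPf, Fintype.mem_piFinset] at hx ⊢
    refine ⟨fun i => ?_, hx.1 t'⟩
    by_cases hi : i = t'
    · subst hi; rw [Function.update_self]; exact hx.2
    · rw [Function.update_of_ne hi]; exact hx.1 i
  · rintro ⟨σ, s⟩ _
    simp only [Function.update_self, Function.update_idem, Function.update_eq_self]
  · rintro ⟨σ, s⟩ _
    simp only [Function.update_self, Function.update_idem, Function.update_eq_self]
  · rintro ⟨σ, s⟩ hx
    simp only [Finset.mem_product, hPf, Fintype.mem_piFinset] at hx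
    simp only [Function.update_self]
    exact (hdep σ (Fintype.mem_piFinset.mpr hx.1) s hx.2 s).symm


lemma key_arith (ρ η ν G X D2 : ℝ) (hρ : 0 < ρ) (hη : 0 < η) (hηρ : η ≤ ρ)
    (hν : 0 < ν) (hρν : 2 * ρ * ν < 1) (hX : 0 ≤ X) (hD2 : 0 ≤ D2)
    (hkey : ((1/η - ν)/2) * X ≤ (1/(2*η) - 1/ρ + ν/2) * D2 + η * G^2 / 2) :
    X ≤ (1 - η/ρ) * D2 + 2 * η^2 * G^2 := by
  have hμ : 0 < 1/η - ν := by
    have h1 : ν < 1/η := by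
      rw [lt_div_iff₀ hη]; nlinarith
    linarith
  have hc1 : (1/(2*η) - 1/ρ + ν/2) * 2 ≤ (1/η - ν) * (1 - η/ρ) := by
    have e1 : (1:ℝ)/(2*η) = (1/η)/2 := by field_simp
    have e2 : (1/η - ν) * (1 - η/ρ) = 1/η - (1/η)*(η/ρ) - ν + ν*(η/ρ) := by ring
    have e3 : (1/η)*(η/ρ) = 1/ρ := by field_simp
    have e4 : 0 ≤ ν*(η/ρ) := by positivity
    have e5 : 2*ν ≤ 1/ρ := by
      rw [le_div_iff₀ hρ]; nlinarith
    rw [e2, e3, e1]; linarith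
  have hc2 : η ≤ (1/η - ν) * (2*η^2) := by
    have e1 : (1/η - ν) * (2*η^2) = 2*η - 2*η^2*ν := by field_simp
    have e2 : η^2*ν ≤ ρ*η*ν := by nlinarith [mul_pos hη hν]
    rw [e1]; nlinarith
  have hmain : (1/η - ν) * X ≤ (1/η - ν) * ((1 - η/ρ) * D2 + 2*η^2*G^2) := by
    have hg2 : 0 ≤ G^2 := sq_nonneg G
    calc (1/η - ν) * X ≤ (1/(2*η) - 1/ρ + ν/2) * 2 * D2 + η * G^2 := by linarith
      _ ≤ (1/η - ν) * (1 - η/ρ) * D2 + (1/η - ν) * (2*η^2) * G^2 := by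
          have := mul_le_mul_of_nonneg_right hc1 hD2
          have := mul_le_mul_of_nonneg_right hc2 hg2
          linarith
      _ = (1/η - ν) * ((1 - η/ρ) * D2 + 2*η^2*G^2) := by ring
  exact le_of_mul_le_mul_left hmain hμ

set_option maxHeartbeats 1000000 in
/-- Convergence of `FedProx` for non-smooth weakly convex federated
optimization (Theorem 2 of the paper): for `G`-Lipschitz, `ν`-weakly convex local objectives,
`0 < ρ < 1/(2ν)`, `η = ρ/√T`, exact local proximal updates and model averaging over
independent uniformly random size-`I` device subsets,
`(1/T)∑_{t<T} E‖∇R̄_ρ(w_t)‖² ≤ Δ̄_ρ/(Tρ) + (2Δ̄_ρ + 4G²ρ)/(ρ√T)`,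
where `R̄_ρ` is the `ρ`-Moreau envelope of `R̄` and `∇R̄_ρ(w) = (w − prox_{ρR̄}(w))/ρ`.
The expectation is realized as the average over all tuples of size-`I` subsets. -/
theorem fedprox_nonsmooth_convergence
    (p M T I : ℕ) (G ν ρ η : ℝ)
    (hG : 0 ≤ G) (hν : 0 < ν) (hρ0 : 0 < ρ) (hρ : ρ < 1 / (2 * ν))
    (hT : 1 ≤ T) (hI : 1 ≤ I) (hIM : I ≤ M)
    (hη : η = ρ / Real.sqrt T)
    (R : Fin M → EuclideanSpace ℝ (Fin p) → ℝ)
    -- each local objective is G-Lipschitz and ν-weakly convex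
    (hlip : ∀ m u u', |R m u - R m u'| ≤ G * ‖u - u'‖)
    (hwc : ∀ m, ConvexOn ℝ Set.univ (fun u => R m u + (ν / 2) * ‖u‖ ^ 2))
    (Rbar : EuclideanSpace ℝ (Fin p) → ℝ)
    (hRbar : Rbar = fun u => (M : ℝ)⁻¹ * ∑ m, R m u)
    -- ρ-Moreau envelope of R̄ and its proximal mapping / gradient
    (Rρ : EuclideanSpace ℝ (Fin p) → ℝ)
    (hRρ : ∀ u, Rρ u = ⨅ v, Rbar v + ‖v - u‖ ^ 2 / (2 * ρ))
    (prox : EuclideanSpace ℝ (Fin p) → EuclideanSpace ℝ (Fin p))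
    (hprox : ∀ u, IsMinOn (fun v => Rbar v + ‖v - u‖ ^ 2 / (2 * ρ)) Set.univ (prox u))
    (hproxuniq : ∀ u v,
      IsMinOn (fun x => Rbar x + ‖x - u‖ ^ 2 / (2 * ρ)) Set.univ v → v = prox u)
    -- finiteness of the Moreau-envelope value gap
    (hbdd : BddBelow (Set.range Rρ))
    (w0 : EuclideanSpace ℝ (Fin p))
    -- local updates: exact minimizers of the local proximal objectives
    (wloc : ℕ → Fin M → EuclideanSpace ℝ (Fin p) → EuclideanSpace ℝ (Fin p))
    (W : (Fin T → Finset (Fin M)) → ℕ → EuclideanSpace ℝ (Fin p))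
    (hW0 : ∀ σ, W σ 0 = w0)
    (hWrec : ∀ σ, (∀ s : Fin T, (σ s).card = I) → ∀ t, ∀ ht : t < T,
      W σ (t + 1) = (I : ℝ)⁻¹ • ∑ ξ ∈ σ ⟨t, ht⟩, wloc (t + 1) ξ (W σ t))
    (hexact : ∀ σ, (∀ s : Fin T, (σ s).card = I) → ∀ t, t < T → ∀ m,
      IsMinOn (fun u => R m u + ‖u - W σ t‖ ^ 2 / (2 * η)) Set.univ
        (wloc (t + 1) m (W σ t))) :
    (T : ℝ)⁻¹ * ∑ t ∈ Finset.range T,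
        (((Fintype.piFinset fun _ : Fin T =>
              (Finset.univ : Finset (Fin M)).powersetCard I).card : ℝ)⁻¹ *
          ∑ σ ∈ (Fintype.piFinset fun _ : Fin T =>
              (Finset.univ : Finset (Fin M)).powersetCard I),
            ‖ρ⁻¹ • (W σ t - prox (W σ t))‖ ^ 2)
      ≤ (Rρ w0 - ⨅ u, Rρ u) / (T * ρ)
        + (2 * (Rρ w0 - ⨅ u, Rρ u) + 4 * G ^ 2 * ρ) / (ρ * Real.sqrt T) := by
  classical
  -- basic positivity facts
  have hM : 1 ≤ M := hI.trans hIM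
  have hM0 : (0:ℝ) < M := by exact_mod_cast hM
  have hT0 : (0:ℝ) < T := by exact_mod_cast hT
  have hT1 : (1:ℝ) ≤ T := by exact_mod_cast hT
  have hst1 : 1 ≤ Real.sqrt T := by
    rw [show (1:ℝ) = Real.sqrt 1 by simp]
    exact Real.sqrt_le_sqrt hT1
  have hst0 : 0 < Real.sqrt T := lt_of_lt_of_le one_pos hst1
  have hstsq : Real.sqrt T * Real.sqrt T = T := Real.mul_self_sqrt hT0.le
  have hη0 : 0 < η := by rw [hη]; positivity
  have hηρ : η ≤ ρ := by
    rw [hη]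
    calc ρ / Real.sqrt T ≤ ρ / 1 := by
          apply div_le_div_of_nonneg_left hρ0.le one_pos hst1
      _ = ρ := by ring
  have hρν : 2 * ρ * ν < 1 := by
    have h2ν : 0 < 2 * ν := by linarith
    have := (lt_div_iff₀ h2ν).mp hρ
    linarith
  have hην : η * ν < 1 := by nlinarith
  -- Moreau envelope facts
  have hRble : ∀ u v, Rρ u ≤ Rbar v + ‖v - u‖ ^ 2 / (2 * ρ) := by
    intro u v
    rw [hRρ u]
    apply ciInf_le
    refine ⟨Rbar (prox u) + ‖prox u - u‖ ^ 2 / (2 * ρ), ?_⟩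
    rintro y ⟨v', rfl⟩
    exact isMinOn_iff.mp (hprox u) v' (Set.mem_univ v')
  have hRval : ∀ u, Rρ u = Rbar (prox u) + ‖prox u - u‖ ^ 2 / (2 * ρ) := by
    intro u
    refine le_antisymm (hRble u (prox u)) ?_
    rw [hRρ u]
    exact le_ciInf fun v => isMinOn_iff.mp (hprox u) v (Set.mem_univ v)
  have hInf_le : ∀ u, (⨅ u, Rρ u) ≤ Rρ u := fun u => ciInf_le hbdd u
  have hΔ0 : 0 ≤ Rρ w0 - ⨅ u, Rρ u := by linarith [hInf_le w0]
  -- weak convexity of Rbar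
  have hwcbar : ConvexOn ℝ Set.univ (fun u => Rbar u + (ν / 2) * ‖u‖ ^ 2) := by
    have hsumconv : ∀ s : Finset (Fin M),
        ConvexOn ℝ Set.univ (fun u => ∑ m ∈ s, (R m u + (ν / 2) * ‖u‖ ^ 2)) := by
      intro s
      induction s using Finset.induction with
      | empty => simpa using convexOn_const (0:ℝ) convex_univ
      | insert _ _ hns ih =>
        simp only [Finset.sum_insert hns]
        exact ConvexOn.add (hwc _) ih
    have hsmul := ConvexOn.smul (c := (M:ℝ)⁻¹) (by positivity) (hsumconv Finset.univ)
    have heq : (fun u => Rbar u + (ν / 2) * ‖u‖ ^ 2)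
        = fun u => (M:ℝ)⁻¹ • ∑ m, (R m u + (ν / 2) * ‖u‖ ^ 2) := by
      funext u
      rw [hRbar]
      simp only [smul_eq_mul, Finset.sum_add_distrib, Finset.sum_const, Finset.card_univ,
        Fintype.card_fin, nsmul_eq_mul, mul_add]
      congr 1
      rw [← mul_assoc, inv_mul_cancel₀ (ne_of_gt hM0), one_mul]
    rw [heq]
    exact hsmul
  -- finsets
  set SS : Finset (Finset (Fin M)) := (univ : Finset (Fin M)).powersetCard I with hSS
  set Pf : Finset (Fin T → Finset (Fin M)) := Fintype.piFinset fun _ : Fin T => SS with hPf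
  have hSScard : SS.card = M.choose I := by
    rw [hSS, Finset.card_powersetCard, Finset.card_univ, Fintype.card_fin]
  have hN0 : (0:ℝ) < (SS.card : ℝ) := by
    rw [hSScard]; exact_mod_cast Nat.choose_pos hIM
  have hK0 : (0:ℝ) < (Pf.card : ℝ) := by
    rw [hPf, Fintype.card_piFinset]
    simp only [Finset.prod_const, Finset.card_univ, Fintype.card_fin]
    have : 0 < SS.card ^ T := pow_pos (by rw [hSScard]; exact Nat.choose_pos hIM) T
    exact_mod_cast this
  have hmemcard : ∀ σ ∈ Pf, ∀ s : Fin T, (σ s).card = I := by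
    intro σ hσ s
    have := Fintype.mem_piFinset.mp hσ s
    exact (Finset.mem_powersetCard.mp this).2
  -- W depends only on earlier coordinates
  have hWdep : ∀ t, t ≤ T → ∀ σ σ', σ ∈ Pf → σ' ∈ Pf →
      (∀ i : Fin T, (i : ℕ) < t → σ i = σ' i) → W σ t = W σ' t := by
    intro t
    induction t with
    | zero => intro _ σ σ' _ _ _; rw [hW0, hW0]
    | succ t ih =>
      intro ht σ σ' hσ hσ' hagree
      have ht' : t < T := ht
      rw [hWrec σ (hmemcard σ hσ) t ht', hWrec σ' (hmemcard σ' hσ') t ht']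
      have hWeq : W σ t = W σ' t :=
        ih (le_of_lt ht') σ σ' hσ hσ' (fun i hi => hagree i (Nat.lt_succ_of_lt hi))
      have hσeq : σ ⟨t, ht'⟩ = σ' ⟨t, ht'⟩ := hagree ⟨t, ht'⟩ (Nat.lt_succ_self t)
      rw [hWeq, hσeq]
  -- the squared distance to the proximal point
  set D2 : (Fin T → Finset (Fin M)) → ℕ → ℝ :=
    fun σ t => ‖prox (W σ t) - W σ t‖ ^ 2 with hD2def
  have hD2nn : ∀ σ t, 0 ≤ D2 σ t := fun σ t => sq_nonneg _
  -- main per-step inequality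
  have step : ∀ t, t < T →
      ∑ σ ∈ Pf, Rρ (W σ (t+1)) ≤ ∑ σ ∈ Pf, Rρ (W σ t)
        - (η/(2*ρ^2)) * ∑ σ ∈ Pf, D2 σ t + (Pf.card : ℝ) * (η^2*G^2/ρ) := by
    intro t ht
    set t' : Fin T := ⟨t, ht⟩ with ht'
    set A : (Fin T → Finset (Fin M)) → ℝ := fun σ =>
      (I:ℝ)⁻¹ * ∑ ξ ∈ σ t', ‖prox (W σ t) - wloc (t+1) ξ (W σ t)‖ ^ 2 with hAdef
    set X : (Fin T → Finset (Fin M)) → ℝ := fun σ =>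
      (M:ℝ)⁻¹ * ∑ m, ‖prox (W σ t) - wloc (t+1) m (W σ t)‖ ^ 2 with hXdef
    -- (1) envelope + Jensen
    have hstep1 : ∀ σ ∈ Pf, Rρ (W σ (t+1)) ≤ Rbar (prox (W σ t)) + A σ / (2*ρ) := by
      intro σ hσ
      have h1 : Rρ (W σ (t+1)) ≤ Rbar (prox (W σ t))
          + ‖prox (W σ t) - W σ (t+1)‖ ^ 2 / (2*ρ) := hRble _ _
      have h2 : ‖prox (W σ t) - W σ (t+1)‖ ^ 2 ≤ A σ := by
        rw [hWrec σ (hmemcard σ hσ) t ht, hAdef]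
        exact avg_norm_sq_le (σ t') I hI (hmemcard σ hσ t') _ _
      have h3 : ‖prox (W σ t) - W σ (t+1)‖ ^ 2 / (2*ρ) ≤ A σ / (2*ρ) := by
        rw [div_eq_mul_inv, div_eq_mul_inv]
        exact mul_le_mul_of_nonneg_right h2 (by positivity)
      linarith
    -- (2) resampling identity
    have hexp : ∑ σ ∈ Pf, A σ = ∑ σ ∈ Pf, X σ := by
      have hdep : ∀ σ ∈ Fintype.piFinset (fun _ : Fin T => SS), ∀ s ∈ SS,
          ∀ u : Finset (Fin M),
          (fun s' σ' => (I:ℝ)⁻¹ * ∑ ξ ∈ s', ‖prox (W σ' t) - wloc (t+1) ξ (W σ' t)‖ ^ 2) u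
              (Function.update σ t' s)
            = (fun s' σ' =>
                (I:ℝ)⁻¹ * ∑ ξ ∈ s', ‖prox (W σ' t) - wloc (t+1) ξ (W σ' t)‖ ^ 2) u σ := by
        intro σ hσ s hs u
        simp only
        have hσPf : σ ∈ Pf := by rw [hPf]; exact hσ
        have hupd : Function.update σ t' s ∈ Pf := by
          rw [hPf, Fintype.mem_piFinset]
          intro i
          by_cases hi : i = t'
          · subst hi; rw [Function.update_self]; exact hs
          · rw [Function.update_of_ne hi]
            exact Fintype.mem_piFinset.mp hσ i
        have hWeq : W (Function.update σ t' s) t = W σ t := by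
          apply hWdep t (le_of_lt ht) _ _ hupd hσPf
          intro i hi
          have hne : i ≠ t' := by
            intro heq
            rw [heq, ht'] at hi
            simp only at hi
            omega
          rw [Function.update_of_ne hne]
        rw [hWeq]
      have hres := resample (I := I) SS t'
        (fun s' σ' => (I:ℝ)⁻¹ * ∑ ξ ∈ s', ‖prox (W σ' t) - wloc (t+1) ξ (W σ' t)‖ ^ 2) hdep
      have hinner : ∀ σ ∈ Pf, ∑ s ∈ SS,
          (I:ℝ)⁻¹ * ∑ ξ ∈ s, ‖prox (W σ t) - wloc (t+1) ξ (W σ t)‖ ^ 2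
            = (SS.card : ℝ) * X σ := by
        intro σ _
        rw [hXdef]
        simp only
        rw [hSS, avg_subsets M I hI hIM (fun m => ‖prox (W σ t) - wloc (t+1) m (W σ t)‖ ^ 2),
          hSScard]
      have hmul : (SS.card : ℝ) * ∑ σ ∈ Pf, A σ = (SS.card : ℝ) * ∑ σ ∈ Pf, X σ := by
        calc (SS.card : ℝ) * ∑ σ ∈ Pf, A σ
            = ∑ σ ∈ Pf, ∑ s ∈ SS,
                (I:ℝ)⁻¹ * ∑ ξ ∈ s, ‖prox (W σ t) - wloc (t+1) ξ (W σ t)‖ ^ 2 := by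
              rw [hPf]; exact hres
          _ = ∑ σ ∈ Pf, (SS.card : ℝ) * X σ := Finset.sum_congr rfl hinner
          _ = (SS.card : ℝ) * ∑ σ ∈ Pf, X σ := by rw [Finset.mul_sum]
      exact mul_left_cancel₀ (ne_of_gt hN0) hmul
    -- (3) pointwise bound on X
    have hXle : ∀ σ ∈ Pf, X σ ≤ (1 - η/ρ) * D2 σ t + 2*η^2*G^2 := by
      intro σ hσ
      set w : EuclideanSpace ℝ (Fin p) := W σ t with hw
      set wh : EuclideanSpace ℝ (Fin p) := prox w with hwh
      have hXnn : 0 ≤ X σ := by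
        rw [hXdef]
        exact mul_nonneg (by positivity)
          (Finset.sum_nonneg fun m _ => sq_nonneg _)
      have hm : ∀ m : Fin M, ((1/η - ν)/2) * ‖wh - wloc (t+1) m w‖ ^ 2
          ≤ (R m wh - R m w) + (‖wh - w‖ ^ 2 / (2*η) + η*G^2/2) := by
        intro m
        have hmin := isMinOn_iff.mp (hexact σ (hmemcard σ hσ) t ht m)
        have hpg := prox_growth (R m) ν η hν hη0 hην (hwc m) w (wloc (t+1) m w)
          (fun x => hmin x (Set.mem_univ x)) wh
        have hlip' : R m w - R m (wloc (t+1) m w) ≤ G * ‖w - wloc (t+1) m w‖ :=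
          le_trans (le_abs_self _) (hlip m w (wloc (t+1) m w))
        have hb : ‖w - wloc (t+1) m w‖ = ‖wloc (t+1) m w - w‖ := norm_sub_rev _ _
        have hamgm : G * ‖wloc (t+1) m w - w‖
            ≤ ‖wloc (t+1) m w - w‖ ^ 2 / (2*η) + η*G^2/2 := by
          set b : ℝ := ‖wloc (t+1) m w - w‖ with hbdef
          have hnum : (0:ℝ) ≤ b^2 + η^2*G^2 - 2*η*(G*b) := by nlinarith [sq_nonneg (b - η*G)]
          have he : (b^2 + η^2*G^2 - 2*η*(G*b))/(2*η) = b^2/(2*η) + η*G^2/2 - G*b := by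
            field_simp
          have h5 : 0 ≤ b^2/(2*η) + η*G^2/2 - G*b := by
            rw [← he]
            exact div_nonneg hnum (by positivity)
          linarith
        rw [hb] at hlip'
        linarith
      have hsum := Finset.sum_le_sum fun m (_ : m ∈ (Finset.univ : Finset (Fin M))) => hm m
      rw [← Finset.mul_sum, Finset.sum_add_distrib, Finset.sum_sub_distrib,
        Finset.sum_const, Finset.card_univ, Fintype.card_fin, nsmul_eq_mul] at hsum
      have hMinv := mul_le_mul_of_nonneg_left hsum
        (by positivity : (0:ℝ) ≤ (M:ℝ)⁻¹)
      have e1 : (M:ℝ)⁻¹ * (((1/η - ν)/2) * ∑ m, ‖wh - wloc (t+1) m w‖ ^ 2)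
          = ((1/η - ν)/2) * X σ := by
        rw [hXdef]
        ring
      have e2 : (M:ℝ)⁻¹ * ((∑ m, R m wh - ∑ m, R m w)
            + (M:ℝ) * (‖wh - w‖ ^ 2 / (2*η) + η*G^2/2))
          = Rbar wh - Rbar w + (‖wh - w‖ ^ 2 / (2*η) + η*G^2/2) := by
        rw [hRbar]
        simp only
        rw [mul_add, ← mul_assoc, inv_mul_cancel₀ (ne_of_gt hM0), one_mul, mul_sub]
      rw [e1, e2] at hMinv
      -- prox strong convexity
      have hminbar := isMinOn_iff.mp (hprox w)
      have hpgb := prox_growth Rbar ν ρ hν hρ0 (by nlinarith : ρ * ν < 1) hwcbar w wh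
        (fun x => by rw [hwh]; exact hminbar x (Set.mem_univ x)) w
      have hww : ‖w - w‖ ^ 2 / (2*ρ) = 0 := by
        rw [sub_self, norm_zero]
        ring
      have hrev : ‖w - wh‖ ^ 2 = ‖wh - w‖ ^ 2 := by rw [norm_sub_rev]
      have hD2eq : D2 σ t = ‖wh - w‖ ^ 2 := by rw [hD2def]
      rw [hww, hrev] at hpgb
      -- combine into the key inequality
      have hkey : ((1/η - ν)/2) * X σ
          ≤ (1/(2*η) - 1/ρ + ν/2) * D2 σ t + η * G^2 / 2 := by
        have c1 : (1/(2*η) - 1/ρ + ν/2) * D2 σ t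
            = D2 σ t/(2*η) - D2 σ t/(2*ρ) - ((1/ρ - ν)/2) * D2 σ t := by
          field_simp
          ring
        rw [c1, hD2eq]
        have c2 : ‖wh - w‖ ^ 2 / (2*η) = ‖wh - w‖ ^ 2 * (1/(2*η)) := by ring
        linarith
      exact key_arith ρ η ν G (X σ) (D2 σ t) hρ0 hη0 hηρ hν hρν hXnn (hD2nn σ t) hkey
    -- (4) assembly
    calc ∑ σ ∈ Pf, Rρ (W σ (t+1))
        ≤ ∑ σ ∈ Pf, (Rbar (prox (W σ t)) + A σ/(2*ρ)) := Finset.sum_le_sum hstep1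
      _ = ∑ σ ∈ Pf, Rbar (prox (W σ t)) + (∑ σ ∈ Pf, A σ)/(2*ρ) := by
          rw [Finset.sum_add_distrib, Finset.sum_div]
      _ = ∑ σ ∈ Pf, Rbar (prox (W σ t)) + (∑ σ ∈ Pf, X σ)/(2*ρ) := by rw [hexp]
      _ ≤ ∑ σ ∈ Pf, Rbar (prox (W σ t))
            + (∑ σ ∈ Pf, ((1 - η/ρ) * D2 σ t + 2*η^2*G^2))/(2*ρ) := by
          have hs := Finset.sum_le_sum hXle
          have hd : (∑ σ ∈ Pf, X σ)/(2*ρ)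
              ≤ (∑ σ ∈ Pf, ((1 - η/ρ) * D2 σ t + 2*η^2*G^2))/(2*ρ) := by
            rw [div_eq_mul_inv, div_eq_mul_inv]
            exact mul_le_mul_of_nonneg_right hs (by positivity)
          linarith
      _ = ∑ σ ∈ Pf, (Rρ (W σ t) - (η/(2*ρ^2)) * D2 σ t + η^2*G^2/ρ) := by
          rw [Finset.sum_div, ← Finset.sum_add_distrib]
          refine Finset.sum_congr rfl fun σ _ => ?_
          have hRv := hRval (W σ t)
          have hD2eq : D2 σ t = ‖prox (W σ t) - W σ t‖ ^ 2 := by rw [hD2def]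
          rw [← hD2eq] at hRv
          rw [hRv]
          field_simp
          ring
      _ = ∑ σ ∈ Pf, Rρ (W σ t) - (η/(2*ρ^2)) * ∑ σ ∈ Pf, D2 σ t
            + (Pf.card : ℝ) * (η^2*G^2/ρ) := by
          rw [Finset.sum_add_distrib, Finset.sum_sub_distrib, ← Finset.mul_sum,
            Finset.sum_const, nsmul_eq_mul]
  -- telescoping
  have tel : ∀ n, n ≤ T →
      (η/(2*ρ^2)) * ∑ t ∈ Finset.range n, ∑ σ ∈ Pf, D2 σ t
        ≤ ∑ σ ∈ Pf, Rρ (W σ 0) - ∑ σ ∈ Pf, Rρ (W σ n)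
          + n * ((Pf.card : ℝ) * (η^2*G^2/ρ)) := by
    intro n
    induction n with
    | zero => intro _; simp
    | succ n ih =>
      intro hn
      have hn' : n < T := hn
      have h1 := ih (le_of_lt hn')
      have h2 := step n hn'
      rw [Finset.sum_range_succ, mul_add]
      push_cast
      linarith
  have hW0sum : ∑ σ ∈ Pf, Rρ (W σ 0) = (Pf.card : ℝ) * Rρ w0 := by
    rw [Finset.sum_congr rfl fun σ _ => by rw [hW0 σ]]
    rw [Finset.sum_const, nsmul_eq_mul]
  have hWTsum : (Pf.card : ℝ) * (⨅ u, Rρ u) ≤ ∑ σ ∈ Pf, Rρ (W σ T) := by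
    calc (Pf.card : ℝ) * (⨅ u, Rρ u) = ∑ _σ ∈ Pf, (⨅ u, Rρ u) := by
          rw [Finset.sum_const, nsmul_eq_mul]
      _ ≤ ∑ σ ∈ Pf, Rρ (W σ T) := Finset.sum_le_sum fun σ _ => hInf_le _
  have total : (η/(2*ρ^2)) * ∑ t ∈ Finset.range T, ∑ σ ∈ Pf, D2 σ t
      ≤ (Pf.card : ℝ) * (Rρ w0 - ⨅ u, Rρ u) + T * ((Pf.card : ℝ) * (η^2*G^2/ρ)) := by
    have := tel T le_rfl
    rw [hW0sum] at this
    have h2 := hWTsum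
    nlinarith [this]
  -- rewrite the goal
  have hgoal_lhs : ∀ t σ, ‖ρ⁻¹ • (W σ t - prox (W σ t))‖ ^ 2 = (ρ^2)⁻¹ * D2 σ t := by
    intro t σ
    rw [hD2def, norm_smul, Real.norm_eq_abs, abs_of_pos (by positivity : (0:ℝ) < ρ⁻¹),
      norm_sub_rev, mul_pow]
    ring
  set K : ℝ := (Pf.card : ℝ) with hK
  set Δ : ℝ := Rρ w0 - ⨅ u, Rρ u with hΔ
  set Stot : ℝ := ∑ t ∈ Finset.range T, ∑ σ ∈ Pf, D2 σ t with hStot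
  have hStot_nn : 0 ≤ Stot := by
    rw [hStot]
    exact Finset.sum_nonneg fun t _ => Finset.sum_nonneg fun σ _ => hD2nn σ t
  have total' : η / (2 * ρ ^ 2) * Stot ≤ K * Δ + (T:ℝ) * (K * (η ^ 2 * G ^ 2 / ρ)) := by
    rw [hStot, hK, hΔ]; exact total
  have lhs_eq : ∑ t ∈ Finset.range T,
      (K⁻¹ * ∑ σ ∈ Pf, ‖ρ⁻¹ • (W σ t - prox (W σ t))‖ ^ 2)
      = K⁻¹ * ((ρ^2)⁻¹ * Stot) := by
    rw [hStot]
    calc ∑ t ∈ Finset.range T, (K⁻¹ * ∑ σ ∈ Pf, ‖ρ⁻¹ • (W σ t - prox (W σ t))‖ ^ 2)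
        = ∑ t ∈ Finset.range T, (K⁻¹ * ((ρ^2)⁻¹ * ∑ σ ∈ Pf, D2 σ t)) := by
          refine Finset.sum_congr rfl fun t _ => ?_
          congr 1
          rw [Finset.sum_congr rfl (fun σ _ => hgoal_lhs t σ), ← Finset.mul_sum]
      _ = K⁻¹ * ((ρ^2)⁻¹ * ∑ t ∈ Finset.range T, ∑ σ ∈ Pf, D2 σ t) := by
          rw [← Finset.mul_sum, ← Finset.mul_sum]
  rw [lhs_eq]
  clear_value K Δ Stot
  clear total tel step hWdep hmemcard hRble hRval hexact hWrec hW0 hlip hwc hprox hproxuniq hRρ hInf_le hwcbar hgoal_lhs hD2nn lhs_eq hW0sum hWTsum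
  have h1 : Stot ≤ (2*ρ^2/η) * (K * Δ + T * (K * (η^2*G^2/ρ))) := by
    have hc : (0:ℝ) < 2*ρ^2/η := by positivity
    have e : Stot = (2*ρ^2/η) * ((η/(2*ρ^2)) * Stot) := by
      field_simp
    rw [e]
    exact mul_le_mul_of_nonneg_left total' hc.le
  have h2 : (T:ℝ)⁻¹ * (K⁻¹ * ((ρ^2)⁻¹ * ((2*ρ^2/η) * (K * Δ + T * (K * (η^2*G^2/ρ))))))
      = 2*Δ/(T*η) + 2*η*G^2/ρ := by
    field_simp
  have hmono : (T:ℝ)⁻¹ * (K⁻¹ * ((ρ^2)⁻¹ * Stot))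
      ≤ 2*Δ/(T*η) + 2*η*G^2/ρ := by
    rw [← h2]
    have hc : (0:ℝ) ≤ (T:ℝ)⁻¹ * (K⁻¹ * (ρ^2)⁻¹) := by positivity
    calc (T:ℝ)⁻¹ * (K⁻¹ * ((ρ^2)⁻¹ * Stot))
        = ((T:ℝ)⁻¹ * (K⁻¹ * (ρ^2)⁻¹)) * Stot := by ring
      _ ≤ ((T:ℝ)⁻¹ * (K⁻¹ * (ρ^2)⁻¹)) * ((2*ρ^2/η) * (K * Δ + T * (K * (η^2*G^2/ρ)))) :=
          mul_le_mul_of_nonneg_left h1 hc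
      _ = (T:ℝ)⁻¹ * (K⁻¹ * ((ρ^2)⁻¹ * ((2*ρ^2/η) * (K * Δ + T * (K * (η^2*G^2/ρ)))))) := by
          ring
  have eTη : (T:ℝ) * η = ρ * Real.sqrt T := by
    rw [hη, mul_div_assoc', div_eq_iff (ne_of_gt hst0)]
    linear_combination (-ρ) * hstsq
  have e1 : 2*Δ/(T*η) = 2*Δ/(ρ * Real.sqrt T) := by rw [eTη]
  have e2 : 2*η*G^2/ρ = 2*G^2/Real.sqrt T := by
    rw [hη]
    field_simp
  have e3 : (2*Δ + 4*G^2*ρ)/(ρ * Real.sqrt T) = 2*Δ/(ρ * Real.sqrt T) + 4*G^2/Real.sqrt T := by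
    field_simp
  have e4 : (0:ℝ) ≤ Δ/(T*ρ) := div_nonneg hΔ0 (by positivity)
  have e5 : 2*G^2/Real.sqrt T ≤ 4*G^2/Real.sqrt T := by
    have h := div_nonneg (by positivity : (0:ℝ) ≤ 2*G^2) hst0.le
    have h4 : 4*G^2/Real.sqrt T = 2*G^2/Real.sqrt T + 2*G^2/Real.sqrt T := by ring
    linarith
  calc (T:ℝ)⁻¹ * (K⁻¹ * ((ρ^2)⁻¹ * Stot)) ≤ 2*Δ/(T*η) + 2*η*G^2/ρ := hmono
    _ = 2*Δ/(ρ * Real.sqrt T) + 2*G^2/Real.sqrt T := by rw [e1, e2]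
    _ ≤ Δ/(T*ρ) + (2*Δ + 4*G^2*ρ)/(ρ * Real.sqrt T) := by
        rw [e3]; linarith
end

section
/- Let 𝒵 be a set, let ℓ : ℝ^p × 𝒵 → ℝ be such that w ↦ ℓ(w; z) is G-Lipschitz for every z ∈ 𝒵, and let r : ℝ^p → ℝ. For a dataset S = (z₁,…,z_N) ∈ 𝒵^N define R_S^r(w) = (1/N)∑_{i=1}^N ℓ(w; z_i) + r(w), and assume that for every dataset S the function R_S^r is λ-strongly convex and attains its minimum. Let ε ≥ 0 and suppose that for each dataset S, w_S ∈ ℝ^p satisfies R_S^r(w_S) ≤ min_w R_S^r(w) + ε. Then for any two datasets S, S' ∈ 𝒵^N that differ in exactly one entry, ‖w_S − w_{S'}‖ ≤ 4G/(λN) + 2√(2ε/λ). -/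
open Finset

/-- Quadratic growth at a minimizer of a strongly convex function. -/
lemma quad_growth_at_min {E : Type*} [NormedAddCommGroup E] [InnerProductSpace ℝ E]
    {f : E → ℝ} {m : ℝ}
    (hc : ConvexOn ℝ Set.univ (fun w => f w - m / 2 * ‖w‖ ^ 2)) {w0 : E}
    (hmin : IsMinOn f Set.univ w0) (w : E) :
    f w0 + m / 2 * ‖w - w0‖ ^ 2 ≤ f w := by
  have hsc : StrongConvexOn Set.univ m f := strongConvexOn_iff_convex.mpr hc
  set c : ℝ := m / 2 * ‖w - w0‖ ^ 2 with hc'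
  have key : ∀ a : ℝ, a ∈ Set.Ioo (0:ℝ) 1 → f w0 + (1 - a) * c ≤ f w := by
    rintro a ⟨ha0, ha1⟩
    have hb0 : (0:ℝ) ≤ 1 - a := by linarith
    have hab : a + (1 - a) = 1 := by ring
    have h := hsc.2 (Set.mem_univ w) (Set.mem_univ w0) ha0.le hb0 hab
    have hmin' : f w0 ≤ f (a • w + (1 - a) • w0) := hmin (Set.mem_univ _)
    have h2 : f w0 ≤ a * f w + (1 - a) * f w0 - a * (1 - a) * c := by
      calc f w0 ≤ f (a • w + (1 - a) • w0) := hmin'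
        _ ≤ a • f w + (1 - a) • f w0 - a * (1 - a) * (m / 2 * ‖w - w0‖ ^ 2) := h
        _ = a * f w + (1 - a) * f w0 - a * (1 - a) * c := by rw [hc']; norm_num
    have h3 : a * (f w0 + (1 - a) * c) ≤ a * f w := by nlinarith
    exact le_of_mul_le_mul_left (by linarith [h3]) ha0
  -- take the limit a → 0⁺
  have htend : Filter.Tendsto (fun a : ℝ => f w0 + (1 - a) * c) (nhdsWithin 0 (Set.Ioi 0))
      (nhds (f w0 + c)) := by
    have hcont : Continuous (fun a : ℝ => f w0 + (1 - a) * c) := by continuity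
    have h0 : Filter.Tendsto (fun a : ℝ => f w0 + (1 - a) * c) (nhds 0) (nhds (f w0 + c)) := by
      simpa using hcont.tendsto 0
    exact h0.mono_left nhdsWithin_le_nhds
  refine le_of_tendsto htend ?_
  filter_upwards [Ioo_mem_nhdsGT_of_mem (Set.mem_Ico.mpr ⟨le_refl 0, one_pos⟩)] with a ha
  exact key a ha

/-- Uniform argument stability of inexact regularized ERM: if each
`R_S^r(w) = (1/N)∑ᵢ ℓ(w; zᵢ) + r(w)` is `λ`-strongly convex and attains its minimum, every
loss `ℓ(·; z)` is `G`-Lipschitz, and `w_S` is an `ε`-inexact minimizer of `R_S^r` for every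
dataset `S`, then datasets differing in one entry give
`‖w_S − w_{S'}‖ ≤ 4G/(λN) + 2√(2ε/λ)`. -/
theorem inexact_regularized_erm_stability
    {Z : Type*} (p N : ℕ) (hN : 0 < N) (G lam ε : ℝ)
    (hG : 0 ≤ G) (hlam : 0 < lam) (hε : 0 ≤ ε)
    (ℓ : EuclideanSpace ℝ (Fin p) → Z → ℝ) (r : EuclideanSpace ℝ (Fin p) → ℝ)
    (hlip : ∀ z w w', |ℓ w z - ℓ w' z| ≤ G * ‖w - w'‖)
    (Rr : (Fin N → Z) → EuclideanSpace ℝ (Fin p) → ℝ)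
    (hRr : ∀ S w, Rr S w = (N : ℝ)⁻¹ * ∑ i, ℓ w (S i) + r w)
    (hsc : ∀ S, ConvexOn ℝ Set.univ (fun w => Rr S w - (lam / 2) * ‖w‖ ^ 2))
    (hattain : ∀ S, ∃ w, IsMinOn (Rr S) Set.univ w)
    (wS : (Fin N → Z) → EuclideanSpace ℝ (Fin p))
    (hinexact : ∀ S, Rr S (wS S) ≤ (⨅ w, Rr S w) + ε)
    (S S' : Fin N → Z) (i : Fin N) (hdiff : ∀ j, j ≠ i → S j = S' j) :
    ‖wS S - wS S'‖ ≤ 4 * G / (lam * N) + 2 * Real.sqrt (2 * ε / lam) := by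
  have hNpos : (0:ℝ) < N := by exact_mod_cast hN
  obtain ⟨w1, hw1⟩ := hattain S
  obtain ⟨w2, hw2⟩ := hattain S'
  -- difference of risks at any point
  have hdiffR : ∀ w, Rr S w - Rr S' w = (N : ℝ)⁻¹ * (ℓ w (S i) - ℓ w (S' i)) := by
    intro w
    have hsum : ∑ j, ℓ w (S j) - ∑ j, ℓ w (S' j) = ℓ w (S i) - ℓ w (S' i) := by
      rw [← Finset.add_sum_erase _ _ (Finset.mem_univ i),
          ← Finset.add_sum_erase _ (fun j => ℓ w (S' j)) (Finset.mem_univ i)]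
      have : ∑ j ∈ Finset.univ.erase i, ℓ w (S j)
          = ∑ j ∈ Finset.univ.erase i, ℓ w (S' j) := by
        refine Finset.sum_congr rfl fun j hj => ?_
        rw [hdiff j (Finset.ne_of_mem_erase hj)]
      rw [this]; ring
    rw [hRr S w, hRr S' w]
    rw [show (N : ℝ)⁻¹ * ∑ j, ℓ w (S j) + r w - ((N : ℝ)⁻¹ * ∑ j, ℓ w (S' j) + r w)
        = (N : ℝ)⁻¹ * (∑ j, ℓ w (S j) - ∑ j, ℓ w (S' j)) by ring, hsum]
  -- quadratic growth at the two minimizers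
  have hq1 : ∀ w, Rr S w1 + lam / 2 * ‖w - w1‖ ^ 2 ≤ Rr S w :=
    fun w => quad_growth_at_min (hsc S) hw1 w
  have hq2 : ∀ w, Rr S' w2 + lam / 2 * ‖w - w2‖ ^ 2 ≤ Rr S' w :=
    fun w => quad_growth_at_min (hsc S') hw2 w
  set d : ℝ := ‖w1 - w2‖ with hd
  have hd0 : 0 ≤ d := norm_nonneg _
  -- two-point strong convexity bound
  have hkey : lam * d ^ 2 ≤ (N : ℝ)⁻¹ * (2 * G * d) := by
    have h1 := hq1 w2
    have h2 := hq2 w1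
    have e1 := hdiffR w2
    have e2 := hdiffR w1
    have hl1 := abs_le.mp (hlip (S i) w2 w1)
    have hl2 := abs_le.mp (hlip (S' i) w1 w2)
    have hnorm : ‖w2 - w1‖ = d := by rw [hd, norm_sub_rev]
    rw [hnorm] at h1 hl1
    have hNinv : (0:ℝ) < (N : ℝ)⁻¹ := by positivity
    nlinarith [hl1.1, hl1.2, hl2.1, hl2.2, mul_le_mul_of_nonneg_left hl1.2 hNinv.le,
      mul_le_mul_of_nonneg_left hl2.2 hNinv.le]
  have hmin_dist : d ≤ 2 * G / (lam * N) := by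
    rcases eq_or_lt_of_le hd0 with h0 | h0
    · rw [← h0]; positivity
    · have h' : lam * d ≤ (N : ℝ)⁻¹ * (2 * G) := by
        have h2' : (lam * d) * d ≤ ((N : ℝ)⁻¹ * (2 * G)) * d := by nlinarith
        exact le_of_mul_le_mul_right h2' h0
      rw [le_div_iff₀ (by positivity)]
      calc d * (lam * N) = (lam * d) * N := by ring
        _ ≤ ((N : ℝ)⁻¹ * (2 * G)) * N := by
            exact mul_le_mul_of_nonneg_right h' hNpos.le
        _ = 2 * G := by field_simp
  -- inexact minimizers are close to exact ones
  have hnear : ∀ (T : Fin N → Z) (wT : EuclideanSpace ℝ (Fin p)),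
      IsMinOn (Rr T) Set.univ wT → ‖wS T - wT‖ ≤ Real.sqrt (2 * ε / lam) := by
    intro T wT hwT
    have hbdd : BddBelow (Set.range (Rr T)) := by
      refine ⟨Rr T wT, ?_⟩
      rintro x ⟨w, rfl⟩
      exact hwT (Set.mem_univ w)
    have hinf : (⨅ w, Rr T w) ≤ Rr T wT := ciInf_le hbdd wT
    have hub : Rr T (wS T) ≤ Rr T wT + ε := (hinexact T).trans (by linarith)
    have hlb := quad_growth_at_min (hsc T) hwT (wS T)
    have hsq : ‖wS T - wT‖ ^ 2 ≤ 2 * ε / lam := by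
      rw [le_div_iff₀ hlam]
      nlinarith
    rw [Real.le_sqrt (norm_nonneg _) (by positivity)]
    exact hsq
  have h1 := hnear S w1 hw1
  have h2 := hnear S' w2 hw2
  have htri : ‖wS S - wS S'‖ ≤ ‖wS S - w1‖ + ‖w1 - w2‖ + ‖w2 - wS S'‖ := by
    calc ‖wS S - wS S'‖ = ‖(wS S - w1) + (w1 - w2) + (w2 - wS S')‖ := by abel_nf
      _ ≤ ‖(wS S - w1) + (w1 - w2)‖ + ‖w2 - wS S'‖ := norm_add_le _ _
      _ ≤ ‖wS S - w1‖ + ‖w1 - w2‖ + ‖w2 - wS S'‖ := by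
          gcongr; exact norm_add_le _ _
  have h2' : ‖w2 - wS S'‖ ≤ Real.sqrt (2 * ε / lam) := by rw [norm_sub_rev]; exact h2
  have hfinal : 2 * G / (lam * N) ≤ 4 * G / (lam * N) := by
    gcongr
    linarith
  linarith
end

section
/- Let 𝒵 be a set, let ℓ : ℝ^p × 𝒵 → ℝ be such that w ↦ ℓ(w; z) is G-Lipschitz for every z ∈ 𝒵, and let r : ℝ^p → ℝ. For a dataset S = (z₁,…,z_N) ∈ 𝒵^N define R_S^r(w) = (1/N)∑_{i=1}^N ℓ(w; z_i) + r(w), and assume that for every dataset S the function R_S^r is λ-strongly convex and attains its minimum at a unique point w*_S. Then for any two datasets S, S' ∈ 𝒵^N that differ in exactly one entry, ‖w*_S − w*_{S'}‖ ≤ 4G/(λN). -/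
open Finset

lemma growth_lemma {p : ℕ} {m : ℝ} {f : EuclideanSpace ℝ (Fin p) → ℝ}
    (hc : ConvexOn ℝ Set.univ (fun w => f w - m / 2 * ‖w‖ ^ 2))
    {w0 : EuclideanSpace ℝ (Fin p)} (hmin : IsMinOn f Set.univ w0)
    (w : EuclideanSpace ℝ (Fin p)) :
    f w0 + m / 4 * ‖w - w0‖ ^ 2 ≤ f w := by
  have hsc : StrongConvexOn Set.univ m f := strongConvexOn_iff_convex.mpr hc
  have h := hsc.2 (Set.mem_univ w) (Set.mem_univ w0)
    (by norm_num : (0:ℝ) ≤ 1/2) (by norm_num : (0:ℝ) ≤ 1/2) (by norm_num)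
  have h0 : f w0 ≤ f ((1/2 : ℝ) • w + (1/2 : ℝ) • w0) := hmin (Set.mem_univ _)
  simp only [smul_eq_mul] at h
  nlinarith [sq_nonneg ‖w - w0‖]


/-- Uniform argument stability of exact regularized ERM: if each
`R_S^r(w) = (1/N)∑ᵢ ℓ(w; zᵢ) + r(w)` is `λ`-strongly convex with unique minimizer `w*_S`, and
every loss `ℓ(·; z)` is `G`-Lipschitz, then datasets differing in one entry give
`‖w*_S − w*_{S'}‖ ≤ 4G/(λN)`. -/
theorem exact_regularized_erm_stability
    {Z : Type*} (p N : ℕ) (hN : 0 < N) (G lam : ℝ)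
    (hG : 0 ≤ G) (hlam : 0 < lam)
    (ℓ : EuclideanSpace ℝ (Fin p) → Z → ℝ) (r : EuclideanSpace ℝ (Fin p) → ℝ)
    (hlip : ∀ z w w', |ℓ w z - ℓ w' z| ≤ G * ‖w - w'‖)
    (Rr : (Fin N → Z) → EuclideanSpace ℝ (Fin p) → ℝ)
    (hRr : ∀ S w, Rr S w = (N : ℝ)⁻¹ * ∑ i, ℓ w (S i) + r w)
    (hsc : ∀ S, ConvexOn ℝ Set.univ (fun w => Rr S w - (lam / 2) * ‖w‖ ^ 2))
    (wstar : (Fin N → Z) → EuclideanSpace ℝ (Fin p))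
    (hmin : ∀ S, IsMinOn (Rr S) Set.univ (wstar S))
    (huniq : ∀ S w, IsMinOn (Rr S) Set.univ w → w = wstar S)
    (S S' : Fin N → Z) (i : Fin N) (hdiff : ∀ j, j ≠ i → S j = S' j) :
    ‖wstar S - wstar S'‖ ≤ 4 * G / (lam * N) := by
  set u := wstar S
  set v := wstar S'
  set D := ‖u - v‖ with hD
  have hDnn : 0 ≤ D := norm_nonneg _
  have g1 : Rr S u + lam / 4 * ‖v - u‖ ^ 2 ≤ Rr S v := growth_lemma (hsc S) (hmin S) v
  have g2 : Rr S' v + lam / 4 * ‖u - v‖ ^ 2 ≤ Rr S' u := growth_lemma (hsc S') (hmin S') u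
  rw [norm_sub_rev] at g1
  -- cancellation of sums
  have hsum : ∀ w : EuclideanSpace ℝ (Fin p),
      (∑ j, ℓ w (S j)) - (∑ j, ℓ w (S' j)) = ℓ w (S i) - ℓ w (S' i) := by
    intro w
    rw [← Finset.sum_sub_distrib]
    rw [Finset.sum_eq_single i]
    · intro j _ hj; rw [hdiff j hj]; ring
    · intro h; exact absurd (Finset.mem_univ i) h
  have key : lam / 2 * D ^ 2 ≤ (N : ℝ)⁻¹ * (2 * G * D) := by
    have e1 : Rr S v - Rr S u + (Rr S' u - Rr S' v)
        = (N : ℝ)⁻¹ * ((ℓ v (S i) - ℓ u (S i)) + (ℓ u (S' i) - ℓ v (S' i))) := by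
      simp only [hRr]
      linear_combination (N : ℝ)⁻¹ * hsum v - (N : ℝ)⁻¹ * hsum u
    have l1 : ℓ v (S i) - ℓ u (S i) ≤ G * D := by
      have := hlip (S i) v u
      have := abs_le.mp this
      rw [norm_sub_rev] at *
      linarith [this.2]
    have l2 : ℓ u (S' i) - ℓ v (S' i) ≤ G * D := by
      have := abs_le.mp (hlip (S' i) u v)
      linarith [this.2]
    have hNi : (0:ℝ) < (N : ℝ)⁻¹ := by positivity
    nlinarith [g1, g2, e1]
  have hlamN : 0 < lam * N := by positivity
  rw [le_div_iff₀ hlamN]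
  rcases eq_or_lt_of_le hDnn with h0 | h0
  · rw [← h0]; nlinarith
  · have hNpos : (0:ℝ) < N := by exact_mod_cast hN
    have : lam / 2 * D ^ 2 * N ≤ 2 * G * D := by
      rw [inv_mul_eq_div] at key
      calc lam / 2 * D ^ 2 * N ≤ (2 * G * D) / N * N := by nlinarith
        _ = 2 * G * D := by field_simp
    nlinarith
end

section
/- Let Z₁,…,Z_N be i.i.d. random variables taking values in a measurable space 𝒵 and let H be a separable Hilbert space. Suppose h : 𝒵^N → H is measurable, Bochner square-integrable with respect to the law of S = (Z₁,…,Z_N), and satisfies the β-bounded differences property: for every i ∈ {1,…,N} and all z₁,…,z_N, z'_i ∈ 𝒵, ‖h(z₁,…,z_{i−1}, z_i, z_{i+1},…,z_N) − h(z₁,…,z_{i−1}, z'_i, z_{i+1},…,z_N)‖ ≤ β. Then E[‖h(S) − E[h(S)]‖²] ≤ β²·N. -/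
open MeasureTheory

section Aux

variable {Z : Type*} [MeasurableSpace Z]
    {H : Type*} [NormedAddCommGroup H] [InnerProductSpace ℝ H] [CompleteSpace H]
    [MeasurableSpace H] [BorelSpace H] [SecondCountableTopology H]

/-- Telescoping bound: bounded differences imply a total bound on `h s - h t`. -/
lemma efron_telescope : ∀ (N : ℕ) (h : (Fin N → Z) → H) (β : ℝ),
    (∀ (i : Fin N) (s : Fin N → Z) (z' : Z),
      ‖h s - h (Function.update s i z')‖ ≤ β) →
    ∀ s t : Fin N → Z, ‖h s - h t‖ ≤ N * β := by
  intro N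
  induction N with
  | zero =>
    intro h β _ s t
    have hst : s = t := funext fun i => i.elim0
    simp [hst]
  | succ N IH =>
    intro h β hbd s t
    have hupd : Function.update s 0 (t 0) = Fin.cons (t 0) (Fin.tail s) := by
      funext j
      refine Fin.cases ?_ (fun i => ?_) j
      · simp
      · simp [Function.update_of_ne (Fin.succ_ne_zero i), Fin.tail]
    have h1 : ‖h s - h (Fin.cons (t 0) (Fin.tail s))‖ ≤ β := by
      have := hbd 0 s (t 0)
      rwa [hupd] at this
    have h2 : ‖h (Fin.cons (t 0) (Fin.tail s)) - h (Fin.cons (t 0) (Fin.tail t))‖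
        ≤ N * β := by
      have hbd' : ∀ (i : Fin N) (y : Fin N → Z) (z' : Z),
          ‖h (Fin.cons (t 0) y) - h (Fin.cons (t 0) (Function.update y i z'))‖ ≤ β := by
        intro i y z'
        rw [Fin.cons_update]
        exact hbd i.succ (Fin.cons (t 0) y) z'
      exact IH (fun y => h (Fin.cons (t 0) y)) β hbd' (Fin.tail s) (Fin.tail t)
    calc ‖h s - h t‖
        = ‖(h s - h (Fin.cons (t 0) (Fin.tail s)))
            + (h (Fin.cons (t 0) (Fin.tail s)) - h (Fin.cons (t 0) (Fin.tail t)))‖ := by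
          rw [Fin.cons_self_tail t]; abel_nf
      _ ≤ ‖h s - h (Fin.cons (t 0) (Fin.tail s))‖
            + ‖h (Fin.cons (t 0) (Fin.tail s)) - h (Fin.cons (t 0) (Fin.tail t))‖ :=
          norm_add_le _ _
      _ ≤ β + N * β := add_le_add h1 h2
      _ = (N + 1 : ℕ) * β := by push_cast; ring

/-- Main induction: Efron–Stein for bounded measurable functions. -/
lemma efron_aux (μ : Measure Z) [IsProbabilityMeasure μ] :
    ∀ (N : ℕ) (h : (Fin N → Z) → H) (β C : ℝ), Measurable h →
    (∀ (i : Fin N) (s : Fin N → Z) (z' : Z),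
      ‖h s - h (Function.update s i z')‖ ≤ β) →
    (∀ s, ‖h s‖ ≤ C) →
    ∫ s, ‖h s - ∫ s', h s' ∂(Measure.pi fun _ : Fin N => μ)‖ ^ 2
        ∂(Measure.pi fun _ : Fin N => μ)
      ≤ β ^ 2 * N := by
  intro N
  induction N with
  | zero =>
    intro h β C _ _ _
    haveI : Subsingleton (Fin 0 → Z) := ⟨fun a b => funext fun i => i.elim0⟩
    have hzero : ∀ s : Fin 0 → Z,
        h s - ∫ s', h s' ∂(Measure.pi fun _ : Fin 0 => μ) = 0 := by
      intro s
      have hconst : h = fun _ => h s := funext fun t => congrArg h (Subsingleton.elim t s)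
      rw [hconst, integral_const]
      simp
    simp [hzero]
  | succ N IH =>
    intro h β C hmeas hbd hbound
    set ν' : Measure (Fin N → Z) := Measure.pi fun _ : Fin N => μ with hν'
    set ν : Measure (Fin (N + 1) → Z) := Measure.pi fun _ : Fin (N + 1) => μ with hν
    obtain ⟨z0⟩ : Nonempty Z := μ.nonempty_of_neZero
    have hβ0 : 0 ≤ β := by
      have := hbd 0 (fun _ => z0) z0
      simpa [Function.update_eq_self] using this
    -- the measurable equivalence and measure preservation
    set e := MeasurableEquiv.piFinSuccAbove (fun _ : Fin (N + 1) => Z) 0 with he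
    have mp : MeasurePreserving e ν (μ.prod ν') :=
      measurePreserving_piFinSuccAbove (fun _ : Fin (N + 1) => μ) 0
    have hesymm : ∀ p : Z × (Fin N → Z), e.symm p = Fin.cons p.1 p.2 := by
      intro p
      simp [he, MeasurableEquiv.piFinSuccAbove_symm_apply, Fin.insertNthEquiv,
        Fin.insertNth_zero']
    have htransfer : ∀ (F : (Fin (N + 1) → Z) → ℝ),
        ∫ s, F s ∂ν = ∫ p : Z × (Fin N → Z), F (Fin.cons p.1 p.2) ∂(μ.prod ν') := by
      intro F
      rw [← (mp.symm e).integral_comp e.symm.measurableEmbedding F]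
      exact integral_congr_ae (Filter.Eventually.of_forall fun p =>
        congrArg F (hesymm p))
    have htransferH :
        ∫ s, h s ∂ν = ∫ p : Z × (Fin N → Z), h (Fin.cons p.1 p.2) ∂(μ.prod ν') := by
      rw [← (mp.symm e).integral_comp e.symm.measurableEmbedding h]
      exact integral_congr_ae (Filter.Eventually.of_forall fun p =>
        congrArg h (hesymm p))
    -- the two-variable version of h
    set H2 : Z × (Fin N → Z) → H := fun p => h (Fin.cons p.1 p.2) with hH2
    have hconsmeas : Measurable fun p : Z × (Fin N → Z) => (Fin.cons p.1 p.2 : Fin (N+1) → Z) := by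
      refine measurable_pi_iff.2 fun j => ?_
      refine Fin.cases ?_ (fun i => ?_) j
      · simpa using measurable_fst
      · simp only [Fin.cons_succ]; exact (measurable_pi_apply i).comp measurable_snd
    have hH2meas : Measurable H2 := hmeas.comp hconsmeas
    have hH2bound : ∀ p, ‖H2 p‖ ≤ C := fun p => hbound _
    have hC0 : 0 ≤ C := le_trans (norm_nonneg _) (hbound fun _ => z0)
    -- integrabilities
    have hH2int : Integrable H2 (μ.prod ν') :=
      memLp_one_iff_integrable.1 <| MemLp.of_bound hH2meas.aestronglyMeasurable C
        (Filter.Eventually.of_forall hH2bound)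
    have hslicemeas : ∀ y : Fin N → Z, Measurable fun z => H2 (z, y) := fun y =>
      hH2meas.comp (measurable_id.prodMk measurable_const)
    have hsliceint : ∀ y : Fin N → Z, Integrable (fun z => H2 (z, y)) μ := fun y =>
      memLp_one_iff_integrable.1 <| MemLp.of_bound (hslicemeas y).aestronglyMeasurable C
        (Filter.Eventually.of_forall fun z => hH2bound _)
    -- the conditional mean g
    set g : (Fin N → Z) → H := fun y => ∫ z, H2 (z, y) ∂μ with hg
    have hgsm : StronglyMeasurable g := hH2meas.stronglyMeasurable.integral_prod_left'
    have hgmeas : Measurable g := hgsm.measurable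
    have hgbound : ∀ y, ‖g y‖ ≤ C := by
      intro y
      have := norm_integral_le_of_norm_le_const
        (μ := μ) (f := fun z => H2 (z, y)) (C := C)
        (Filter.Eventually.of_forall fun z => hH2bound _)
      simpa using this
    have hgbd : ∀ (i : Fin N) (y : Fin N → Z) (z' : Z),
        ‖g y - g (Function.update y i z')‖ ≤ β := by
      intro i y z'
      rw [hg]
      simp only
      rw [← integral_sub (hsliceint y) (hsliceint _)]
      have hb : ∀ z, ‖H2 (z, y) - H2 (z, Function.update y i z')‖ ≤ β := by
        intro z
        show ‖h (Fin.cons z y) - h (Fin.cons z (Function.update y i z'))‖ ≤ β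
        rw [Fin.cons_update]
        exact hbd i.succ (Fin.cons z y) z'
      have := norm_integral_le_of_norm_le_const (μ := μ)
        (f := fun z => H2 (z, y) - H2 (z, Function.update y i z')) (C := β)
        (Filter.Eventually.of_forall hb)
      simpa using this
    -- the global mean
    set m : H := ∫ p : Z × (Fin N → Z), H2 p ∂(μ.prod ν') with hm
    have hmean : (∫ s, h s ∂ν) = m := htransferH
    have hmg : (∫ y, g y ∂ν') = m := (integral_prod_symm H2 hH2int).symm
    -- slice mean is g
    have hslicemean : ∀ y, (∫ z, H2 (z, y) ∂μ) = g y := fun y => rfl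
    -- pointwise slice bound: ‖H2 (z,y) - g y‖ ≤ β
    have hHg : ∀ (z : Z) (y : Fin N → Z), ‖H2 (z, y) - g y‖ ≤ β := by
      intro z y
      have hsub : H2 (z, y) - g y = ∫ z', (H2 (z, y) - H2 (z', y)) ∂μ := by
        rw [integral_sub (integrable_const _) (hsliceint y), integral_const]
        simp
        rfl
      rw [hsub]
      have hb : ∀ z', ‖H2 (z, y) - H2 (z', y)‖ ≤ β := by
        intro z'
        show ‖h (Fin.cons z y) - h (Fin.cons z' y)‖ ≤ β
        have := hbd 0 (Fin.cons z y) z'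
        rwa [Fin.update_cons_zero] at this
      have := norm_integral_le_of_norm_le_const (μ := μ)
        (f := fun z' => H2 (z, y) - H2 (z', y)) (C := β)
        (Filter.Eventually.of_forall hb)
      simpa using this
    -- integrability of squared slice deviations
    have hsqint : ∀ y : Fin N → Z, Integrable (fun z => ‖H2 (z, y) - g y‖ ^ 2) μ := by
      intro y
      refine memLp_one_iff_integrable.1 <| MemLp.of_bound
        (((hslicemeas y).sub measurable_const).norm.pow_const 2).aestronglyMeasurable
        (β ^ 2) (Filter.Eventually.of_forall fun z => ?_)
      have := pow_le_pow_left₀ (norm_nonneg _) (hHg z y) 2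
      simpa [Real.norm_eq_abs, abs_of_nonneg (pow_nonneg (norm_nonneg _) 2)] using this
    -- slice decomposition
    have hsplit : ∀ y : Fin N → Z,
        ∫ z, ‖H2 (z, y) - m‖ ^ 2 ∂μ
          = (∫ z, ‖H2 (z, y) - g y‖ ^ 2 ∂μ) + ‖g y - m‖ ^ 2 := by
      intro y
      have hi1 := hsqint y
      have hisub : Integrable (fun z => H2 (z, y) - g y) μ :=
        (hsliceint y).sub (integrable_const _)
      have hi2 : Integrable (fun z => (inner ℝ (g y - m) (H2 (z, y) - g y) : ℝ)) μ :=
        hisub.const_inner (g y - m)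
      have hz : (∫ z, (H2 (z, y) - g y) ∂μ) = 0 := by
        rw [integral_sub (hsliceint y) (integrable_const _), integral_const]
        simp [hg]
      calc ∫ z, ‖H2 (z, y) - m‖ ^ 2 ∂μ
          = ∫ z, ((‖H2 (z, y) - g y‖ ^ 2
              + 2 * (inner ℝ (g y - m) (H2 (z, y) - g y) : ℝ)) + ‖g y - m‖ ^ 2) ∂μ := by
            refine integral_congr_ae (Filter.Eventually.of_forall fun z => ?_)
            show ‖H2 (z, y) - m‖ ^ 2
              = (‖H2 (z, y) - g y‖ ^ 2
                  + 2 * (inner ℝ (g y - m) (H2 (z, y) - g y) : ℝ)) + ‖g y - m‖ ^ 2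
            have hd : H2 (z, y) - m = (H2 (z, y) - g y) + (g y - m) := by abel
            rw [hd, norm_add_sq_real, real_inner_comm]
        _ = (∫ z, (‖H2 (z, y) - g y‖ ^ 2
              + 2 * (inner ℝ (g y - m) (H2 (z, y) - g y) : ℝ)) ∂μ)
              + ∫ _z, ‖g y - m‖ ^ 2 ∂μ :=
            integral_add (hi1.add (hi2.const_mul 2)) (integrable_const _)
        _ = ((∫ z, ‖H2 (z, y) - g y‖ ^ 2 ∂μ)
              + ∫ z, 2 * (inner ℝ (g y - m) (H2 (z, y) - g y) : ℝ) ∂μ)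
              + ∫ _z, ‖g y - m‖ ^ 2 ∂μ := by
            rw [integral_add hi1 (hi2.const_mul 2)]
        _ = (∫ z, ‖H2 (z, y) - g y‖ ^ 2 ∂μ) + ‖g y - m‖ ^ 2 := by
            rw [integral_const_mul, integral_inner hisub, hz, inner_zero_right,
              integral_const]
            simp
    -- integrability on the product
    have hIsq : Integrable (fun p => ‖H2 p - m‖ ^ 2) (μ.prod ν') := by
      refine memLp_one_iff_integrable.1 <| MemLp.of_bound
        ((hH2meas.sub measurable_const).norm.pow_const 2).aestronglyMeasurable
        ((C + ‖m‖) ^ 2) (Filter.Eventually.of_forall fun p => ?_)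
      have h1 : ‖H2 p - m‖ ≤ C + ‖m‖ :=
        le_trans (norm_sub_le _ _) (add_le_add (hH2bound p) le_rfl)
      have := pow_le_pow_left₀ (norm_nonneg _) h1 2
      simpa [Real.norm_eq_abs, abs_of_nonneg (pow_nonneg (norm_nonneg _) 2)] using this
    have hgsubint : Integrable (fun y => ‖g y - m‖ ^ 2) ν' := by
      refine memLp_one_iff_integrable.1 <| MemLp.of_bound
        ((hgmeas.sub measurable_const).norm.pow_const 2).aestronglyMeasurable
        ((C + ‖m‖) ^ 2) (Filter.Eventually.of_forall fun y => ?_)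
      have h1 : ‖g y - m‖ ≤ C + ‖m‖ :=
        le_trans (norm_sub_le _ _) (add_le_add (hgbound y) le_rfl)
      have := pow_le_pow_left₀ (norm_nonneg _) h1 2
      simpa [Real.norm_eq_abs, abs_of_nonneg (pow_nonneg (norm_nonneg _) 2)] using this
    -- rewrite the left-hand side
    have LHSeq : ∫ s, ‖h s - ∫ s', h s' ∂ν‖ ^ 2 ∂ν
        = ∫ y, ∫ z, ‖H2 (z, y) - m‖ ^ 2 ∂μ ∂ν' := by
      rw [hmean, htransfer (fun s => ‖h s - m‖ ^ 2)]
      exact integral_prod_symm _ hIsq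
    have hIfun : Integrable (fun y => ∫ z, ‖H2 (z, y) - m‖ ^ 2 ∂μ) ν' :=
      hIsq.integral_prod_right
    have hmono : ∫ y, ∫ z, ‖H2 (z, y) - m‖ ^ 2 ∂μ ∂ν'
        ≤ ∫ y, (β ^ 2 + ‖g y - m‖ ^ 2) ∂ν' := by
      refine integral_mono hIfun ((integrable_const _).add hgsubint) fun y => ?_
      rw [hsplit y]
      refine add_le_add ?_ le_rfl
      calc ∫ z, ‖H2 (z, y) - g y‖ ^ 2 ∂μ
          ≤ ∫ _z, β ^ 2 ∂μ :=
            integral_mono (hsqint y) (integrable_const _) fun z =>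
              pow_le_pow_left₀ (norm_nonneg _) (hHg z y) 2
        _ = β ^ 2 := by simp
    have hIH := IH g β C hgmeas hgbd hgbound
    rw [hmg] at hIH
    calc ∫ s, ‖h s - ∫ s', h s' ∂ν‖ ^ 2 ∂ν
        = ∫ y, ∫ z, ‖H2 (z, y) - m‖ ^ 2 ∂μ ∂ν' := LHSeq
      _ ≤ ∫ y, (β ^ 2 + ‖g y - m‖ ^ 2) ∂ν' := hmono
      _ = β ^ 2 + ∫ y, ‖g y - m‖ ^ 2 ∂ν' := by
          rw [integral_add (integrable_const _) hgsubint, integral_const]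
          simp
      _ ≤ β ^ 2 + β ^ 2 * N := add_le_add le_rfl hIH
      _ = β ^ 2 * (N + 1 : ℕ) := by push_cast; ring

end Aux

/-- Efron–Stein inequality for Hilbert-space-valued functions: if
`h : 𝒵^N → H` is measurable, Bochner square-integrable w.r.t. the i.i.d. product law, and has
the `β`-bounded differences property, then `E‖h(S) − E[h(S)]‖² ≤ β²N`. -/
theorem efron_stein_hilbert
    {Z : Type*} [MeasurableSpace Z]
    {H : Type*} [NormedAddCommGroup H] [InnerProductSpace ℝ H] [CompleteSpace H]
    [MeasurableSpace H] [BorelSpace H] [SecondCountableTopology H]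
    (N : ℕ) (μ : Measure Z) [IsProbabilityMeasure μ]
    (h : (Fin N → Z) → H) (β : ℝ)
    (hmeas : Measurable h)
    (hL2 : MemLp h 2 (Measure.pi fun _ : Fin N => μ))
    (hbd : ∀ (i : Fin N) (s : Fin N → Z) (z' : Z),
      ‖h s - h (Function.update s i z')‖ ≤ β) :
    ∫ s, ‖h s - ∫ s', h s' ∂(Measure.pi fun _ : Fin N => μ)‖ ^ 2
        ∂(Measure.pi fun _ : Fin N => μ)
      ≤ β ^ 2 * N := by
  obtain ⟨z0⟩ : Nonempty Z := μ.nonempty_of_neZero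
  set s0 : Fin N → Z := fun _ => z0 with hs0
  have hC : ∀ s, ‖h s‖ ≤ ‖h s0‖ + N * β := by
    intro s
    calc ‖h s‖ = ‖h s0 + (h s - h s0)‖ := congrArg norm (by abel)
      _ ≤ ‖h s0‖ + ‖h s - h s0‖ := norm_add_le _ _
      _ ≤ ‖h s0‖ + N * β :=
          add_le_add le_rfl (efron_telescope N h β hbd s s0)
  exact efron_aux μ N h β (‖h s0‖ + N * β) hmeas hbd hC
end

section
/- Let (𝒵, 𝒟) be a probability space and ℓ : ℝ^p × 𝒵 → ℝ a measurable loss such that for every z the map w ↦ ℓ(w; z) is G-Lipschitz and L-smooth. Define the population risk R(w) = E_{Z∼𝒟}[ℓ(w; Z)]. Let A : 𝒵^N → ℝ^p be a measurable algorithm with γ-uniform argument stability. Then, for S an i.i.d. sample of size N from 𝒟, E_S[‖∇R(A(S)) − E_S[∇R(A(S))]‖²] ≤ L²·γ²·N. -/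
open MeasureTheory Finset

section Aux

local notation "⟪" x ", " y "⟫" => @inner ℝ _ _ x y

private lemma integrable_of_bdd {α E : Type*} [MeasurableSpace α] {μ : Measure α}
    [IsFiniteMeasure μ] [NormedAddCommGroup E] {f : α → E} {C : ℝ}
    (hm : AEStronglyMeasurable f μ) (h : ∀ x, ‖f x‖ ≤ C) : Integrable f μ :=
  (integrable_const C).mono' hm (Filter.Eventually.of_forall h)

private lemma integral_comp_symm {α β : Type*} [MeasurableSpace α] [MeasurableSpace β]
    {μ : Measure α} {ν : Measure β} (e : α ≃ᵐ β) (hmp : MeasurePreserving e μ ν)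
    {E : Type*} [NormedAddCommGroup E] [NormedSpace ℝ E] (u : α → E) :
    ∫ x, u x ∂μ = ∫ y, u (e.symm y) ∂ν := by
  rw [← hmp.integral_comp' (fun y => u (e.symm y))]
  simp

private lemma sm_norm_sq {α H : Type*} [MeasurableSpace α] [NormedAddCommGroup H]
    {f : α → H} (hf : StronglyMeasurable f) :
    StronglyMeasurable (fun x => ‖f x‖ ^ 2) := by
  simp only [pow_two]
  exact hf.norm.mul hf.norm

/-- Efron–Stein-type second-moment inequality for bounded-difference functions on a product
probability space. -/
private lemma efron_stein {Z : Type*} [MeasurableSpace Z]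
    {H : Type*} [NormedAddCommGroup H] [InnerProductSpace ℝ H] [CompleteSpace H]
    (μ : Measure Z) [IsProbabilityMeasure μ] (c C : ℝ) :
    ∀ (n : ℕ) (f : (Fin n → Z) → H), StronglyMeasurable f → (∀ s, ‖f s‖ ≤ C) →
      (∀ (s s' : Fin n → Z) (i : Fin n), (∀ j, j ≠ i → s j = s' j) → ‖f s - f s'‖ ≤ c) →
      ∫ s, ‖f s - ∫ s', f s' ∂(Measure.pi fun _ : Fin n => μ)‖ ^ 2
        ∂(Measure.pi fun _ : Fin n => μ) ≤ n * c ^ 2 := by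
  intro n
  induction n with
  | zero =>
      intro f hf hC hbd
      have hconst : ∀ s : Fin 0 → Z, f s = ∫ s', f s' ∂(Measure.pi fun _ : Fin 0 => μ) := by
        intro s
        have hfs : (fun s' : Fin 0 → Z => f s') = fun _ => f s :=
          funext fun t => congrArg f (Subsingleton.elim t s)
        rw [hfs, integral_const]
        simp
      have : (fun s : Fin 0 → Z =>
          ‖f s - ∫ s', f s' ∂(Measure.pi fun _ : Fin 0 => μ)‖ ^ 2) = fun _ => 0 := by
        funext s; rw [← hconst s]; simp
      rw [this]
      simp
  | succ n ih =>
      intro f hf hC hbd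
      have hZ : Nonempty Z := by
        by_contra hne
        haveI : IsEmpty Z := not_nonempty_iff.mp hne
        have h1 : μ Set.univ = 1 := measure_univ
        rw [show (Set.univ : Set Z) = ∅ from Set.eq_empty_of_isEmpty _] at h1
        simp at h1
      set πn := (Measure.pi fun _ : Fin n => μ) with hπn
      set π := (Measure.pi fun _ : Fin (n + 1) => μ) with hπ
      set pm := μ.prod πn with hpm
      let e : (Fin (n + 1) → Z) ≃ᵐ Z × (Fin n → Z) :=
        MeasurableEquiv.piFinSuccAbove (fun _ : Fin (n + 1) => Z) 0
      have hmp : MeasurePreserving e π pm := measurePreserving_piFinSuccAbove (fun _ => μ) 0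
      set g : Z × (Fin n → Z) → H := fun y => f (e.symm y) with hg_def
      have hg : StronglyMeasurable g := hf.comp_measurable e.symm.measurable
      have hgC : ∀ y, ‖g y‖ ≤ C := fun y => hC _
      have he : ∀ (z : Z) (s : Fin n → Z), e.symm (z, s) = Fin.insertNth 0 z s := by
        intro z s; rfl
      have h0 : ∀ (z : Z) (s : Fin n → Z), (e.symm (z, s)) 0 = z := by
        intro z s; rw [he]; simp
      have hsucc : ∀ (z : Z) (s : Fin n → Z) (j : Fin n),
          (e.symm (z, s)) ((0 : Fin (n + 1)).succAbove j) = s j := by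
        intro z s j; rw [he]; simp
      have hbd0 : ∀ z z' s, ‖g (z, s) - g (z', s)‖ ≤ c := by
        intro z z' s
        apply hbd _ _ 0
        intro j hj
        obtain ⟨k, rfl⟩ := Fin.exists_succAbove_eq hj
        rw [hsucc, hsucc]
      have hbd1 : ∀ z s s' (i : Fin n), (∀ j, j ≠ i → s j = s' j) →
          ‖g (z, s) - g (z, s')‖ ≤ c := by
        intro z s s' i hss
        apply hbd _ _ ((0 : Fin (n + 1)).succAbove i)
        intro j hj
        induction j using Fin.cases with
        | zero => rw [h0, h0]
        | succ k =>
            rw [← Fin.succAbove_zero_apply k, hsucc, hsucc]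
            apply hss
            intro hki
            exact hj (by rw [hki, Fin.succAbove_zero_apply])
      have hgint : Integrable g pm := integrable_of_bdd hg.aestronglyMeasurable hgC
      set h : (Fin n → Z) → H := fun s => ∫ z, g (z, s) ∂μ with hh_def
      have hh : StronglyMeasurable h := hg.integral_prod_left'
      have hgsint : ∀ s, Integrable (fun z => g (z, s)) μ := fun s =>
        integrable_of_bdd (hg.comp_measurable measurable_prodMk_right).aestronglyMeasurable
          (fun z => hgC _)
      have hhC : ∀ s, ‖h s‖ ≤ C := by
        intro s
        calc ‖h s‖ ≤ C * (μ Set.univ).toReal :=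
              norm_integral_le_of_norm_le_const (Filter.Eventually.of_forall fun z => hgC _)
          _ = C := by simp
      have hhbd : ∀ s s' (i : Fin n), (∀ j, j ≠ i → s j = s' j) → ‖h s - h s'‖ ≤ c := by
        intro s s' i hss
        have hdiff : h s - h s' = ∫ z, (g (z, s) - g (z, s')) ∂μ :=
          (integral_sub (hgsint s) (hgsint s')).symm
        rw [hdiff]
        calc ‖∫ z, (g (z, s) - g (z, s')) ∂μ‖ ≤ c * (μ Set.univ).toReal :=
              norm_integral_le_of_norm_le_const
                (Filter.Eventually.of_forall fun z => hbd1 z s s' i hss)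
          _ = c := by simp
      have hfm : ∫ s, f s ∂π = ∫ y, g y ∂pm := integral_comp_symm e hmp f
      set m := ∫ y, g y ∂pm with hm_def
      have hLHS : ∫ s, ‖f s - ∫ s', f s' ∂π‖ ^ 2 ∂π = ∫ y, ‖g y - m‖ ^ 2 ∂pm := by
        rw [hfm]
        exact integral_comp_symm e hmp (fun s => ‖f s - m‖ ^ 2)
      set a : Z × (Fin n → Z) → H := fun y => g y - h y.2 with ha_def
      set b : Z × (Fin n → Z) → H := fun y => h y.2 - m with hb_def
      have ha_sm : StronglyMeasurable a := hg.sub (hh.comp_measurable measurable_snd)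
      have hb_sm : StronglyMeasurable b :=
        (hh.comp_measurable measurable_snd).sub stronglyMeasurable_const
      have haC : ∀ y, ‖a y‖ ≤ c := by
        rintro ⟨z, s⟩
        have hrw : a (z, s) = ∫ z', (g (z, s) - g (z', s)) ∂μ := by
          rw [integral_sub (integrable_const _) (hgsint s), integral_const]
          simp [ha_def, hh_def]
        rw [hrw]
        calc ‖∫ z', (g (z, s) - g (z', s)) ∂μ‖ ≤ c * (μ Set.univ).toReal :=
              norm_integral_le_of_norm_le_const
                (Filter.Eventually.of_forall fun z' => hbd0 z z' s)
          _ = c := by simp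
      have hc0 : 0 ≤ c := by
        obtain ⟨z0⟩ := hZ
        exact (norm_nonneg _).trans (haC (z0, fun _ => z0))
      have hbC : ∀ y, ‖b y‖ ≤ C + ‖m‖ := by
        intro y
        calc ‖b y‖ ≤ ‖h y.2‖ + ‖m‖ := norm_sub_le _ _
          _ ≤ C + ‖m‖ := by have := hhC y.2; linarith
      have hint_a2 : Integrable (fun y => ‖a y‖ ^ 2) pm :=
        integrable_of_bdd (sm_norm_sq ha_sm).aestronglyMeasurable
          (fun y => by
            rw [Real.norm_eq_abs, abs_of_nonneg (by positivity)]
            exact pow_le_pow_left₀ (norm_nonneg _) (haC y) 2)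
      have hint_b2 : Integrable (fun y => ‖b y‖ ^ 2) pm :=
        integrable_of_bdd (sm_norm_sq hb_sm).aestronglyMeasurable
          (fun y => by
            rw [Real.norm_eq_abs, abs_of_nonneg (by positivity)]
            exact pow_le_pow_left₀ (norm_nonneg _)
              (le_trans (hbC y) (le_abs_self _)) 2)
      have hint_inner : Integrable (fun y => ⟪a y, b y⟫) pm :=
        integrable_of_bdd (ha_sm.inner hb_sm).aestronglyMeasurable
          (fun y => by
            rw [Real.norm_eq_abs]
            calc |⟪a y, b y⟫| ≤ ‖a y‖ * ‖b y‖ := abs_real_inner_le_norm _ _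
              _ ≤ c * (C + ‖m‖) :=
                mul_le_mul (haC y) (hbC y) (norm_nonneg _) hc0)
      have key : ∀ y, ‖g y - m‖ ^ 2 = ‖a y‖ ^ 2 + 2 * ⟪a y, b y⟫ + ‖b y‖ ^ 2 := by
        intro y
        have hsplit : g y - m = a y + b y := by simp [ha_def, hb_def]
        rw [hsplit, norm_add_sq_real]
      have e1 : ∫ y, (‖a y‖ ^ 2 + 2 * ⟪a y, b y⟫ + ‖b y‖ ^ 2) ∂pm
          = (∫ y, (‖a y‖ ^ 2 + 2 * ⟪a y, b y⟫) ∂pm) + ∫ y, ‖b y‖ ^ 2 ∂pm :=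
        integral_add (hint_a2.add (hint_inner.const_mul 2)) hint_b2
      have e2 : ∫ y, (‖a y‖ ^ 2 + 2 * ⟪a y, b y⟫) ∂pm
          = (∫ y, ‖a y‖ ^ 2 ∂pm) + ∫ y, 2 * ⟪a y, b y⟫ ∂pm :=
        integral_add hint_a2 (hint_inner.const_mul 2)
      have e3 : ∫ y, 2 * ⟪a y, b y⟫ ∂pm = 2 * ∫ y, ⟪a y, b y⟫ ∂pm :=
        integral_const_mul 2 _
      have hsum : ∫ y, ‖g y - m‖ ^ 2 ∂pm
          = (∫ y, ‖a y‖ ^ 2 ∂pm) + 2 * (∫ y, ⟪a y, b y⟫ ∂pm) + ∫ y, ‖b y‖ ^ 2 ∂pm := by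
        simp_rw [key]
        rw [e1, e2, e3]
      have hT1 : ∫ y, ‖a y‖ ^ 2 ∂pm ≤ c ^ 2 := by
        calc ∫ y, ‖a y‖ ^ 2 ∂pm ≤ ∫ _, c ^ 2 ∂pm :=
              integral_mono hint_a2 (integrable_const _)
                (fun y => pow_le_pow_left₀ (norm_nonneg _) (haC y) 2)
          _ = c ^ 2 := by simp
      have hT2 : ∫ y, ⟪a y, b y⟫ ∂pm = 0 := by
        rw [integral_prod_symm _ hint_inner]
        have hinner0 : ∀ s, ∫ z, ⟪a (z, s), b (z, s)⟫ ∂μ = 0 := by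
          intro s
          have hia : Integrable (fun z => a (z, s)) μ := (hgsint s).sub (integrable_const (h s))
          have hcomm : ∀ z : Z, ⟪a (z, s), b (z, s)⟫ = ⟪h s - m, a (z, s)⟫ := by
            intro z; rw [real_inner_comm]
          simp_rw [hcomm]
          rw [integral_inner hia (h s - m)]
          have hzero : ∫ z, a (z, s) ∂μ = 0 := by
            have harw : ∀ z : Z, a (z, s) = g (z, s) - h s := fun z => rfl
            simp_rw [harw]
            rw [integral_sub (hgsint s) (integrable_const (h s)), integral_const]
            simp [hh_def]
          rw [hzero, inner_zero_right]
        simp_rw [hinner0]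
        simp
      have hmh : m = ∫ s, h s ∂πn := integral_prod_symm g hgint
      have hT3 : ∫ y, ‖b y‖ ^ 2 ∂pm ≤ n * c ^ 2 := by
        have hrw : ∫ y, ‖b y‖ ^ 2 ∂pm = ∫ s, ‖h s - m‖ ^ 2 ∂πn := by
          rw [integral_prod_symm _ hint_b2]
          have : ∀ s : Fin n → Z, ∫ _, ‖h s - m‖ ^ 2 ∂μ = ‖h s - m‖ ^ 2 := by
            intro s; rw [integral_const]; simp
          exact integral_congr_ae (Filter.Eventually.of_forall fun s => this s)
        rw [hrw, hmh]
        exact ih h hh hhC hhbd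
      rw [hLHS, hsum, hT2]
      push_cast
      nlinarith [hT1, hT3]

/-- Gradient concentration via uniform argument stability (second moment):
for a `G`-Lipschitz, `L`-smooth loss and a `γ`-uniformly argument stable algorithm `A`,
`E_S‖∇R(A(S)) − E_S[∇R(A(S))]‖² ≤ L²γ²N`, where `S ∼ 𝒟^N`. -/
theorem stability_gradient_generalization_second_moment
    {Z : Type*} [MeasurableSpace Z] (p N : ℕ)
    (μ : Measure Z) [IsProbabilityMeasure μ]
    (G L γ : ℝ)
    (ℓ : EuclideanSpace ℝ (Fin p) → Z → ℝ)
    (hmeas : Measurable (Function.uncurry ℓ))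
    (hlip : ∀ z w w', |ℓ w z - ℓ w' z| ≤ G * ‖w - w'‖)
    (hdiff : ∀ z, Differentiable ℝ (fun w => ℓ w z))
    (hsmooth : ∀ z w w',
      ‖gradient (fun w => ℓ w z) w - gradient (fun w => ℓ w z) w'‖ ≤ L * ‖w - w'‖)
    (hint : ∀ w, Integrable (fun z => ℓ w z) μ)
    (R : EuclideanSpace ℝ (Fin p) → ℝ) (hR : ∀ w, R w = ∫ z, ℓ w z ∂μ)
    (A : (Fin N → Z) → EuclideanSpace ℝ (Fin p)) (hA : Measurable A)
    (hstab : ∀ (S S' : Fin N → Z) (i : Fin N),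
      (∀ j, j ≠ i → S j = S' j) → ‖A S - A S'‖ ≤ γ) :
    ∫ s, ‖gradient R (A s)
        - ∫ s', gradient R (A s') ∂(Measure.pi fun _ : Fin N => μ)‖ ^ 2
        ∂(Measure.pi fun _ : Fin N => μ)
      ≤ L ^ 2 * γ ^ 2 * N := by
  classical
  set G₀ := max G 0 with hG₀
  set D : EuclideanSpace ℝ (Fin p) → Z → EuclideanSpace ℝ (Fin p) := fun w z => gradient (fun w' => ℓ w' z) w with hD_def
  have hℓmeas : ∀ w, Measurable (fun z => ℓ w z) := fun w =>
    hmeas.comp measurable_prodMk_left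
  -- Lipschitz bound on the fderiv
  have hlipz : ∀ z, LipschitzWith (Real.toNNReal G₀) (fun w => ℓ w z) := by
    intro z
    apply LipschitzWith.of_dist_le_mul
    intro w w'
    rw [Real.dist_eq, dist_eq_norm, Real.coe_toNNReal _ (le_max_right G 0)]
    calc |ℓ w z - ℓ w' z| ≤ G * ‖w - w'‖ := hlip z w w'
      _ ≤ G₀ * ‖w - w'‖ := mul_le_mul_of_nonneg_right (le_max_left G 0) (norm_nonneg _)
  have hfderiv_bound : ∀ z w, ‖fderiv ℝ (fun w' => ℓ w' z) w‖ ≤ G₀ := by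
    intro z w
    have := ((hdiff z) w).hasFDerivAt.le_of_lipschitz (hlipz z)
    rwa [Real.coe_toNNReal _ (le_max_right G 0)] at this
  have hDbound : ∀ w z, ‖D w z‖ ≤ G₀ := by
    intro w z
    simpa [hD_def, gradient, LinearIsometryEquiv.norm_map] using hfderiv_bound z w
  -- measurability of the pointwise gradient in z
  have hnorm : Filter.Tendsto (fun n : ℕ => ‖(n : ℝ)‖) Filter.atTop Filter.atTop := by
    simpa using tendsto_natCast_atTop_atTop (R := ℝ)
  have hDmeas : ∀ w, Measurable (fun z => D w z) := by
    intro w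
    refine (MeasurableEquiv.toLp 2 (Fin p → ℝ)).symm.measurableEmbedding.measurable_comp_iff (f := fun z => D w z) |>.mp ?_
    rw [measurable_pi_iff]
    intro i
    have heq : ∀ z, D w z i
        = fderiv ℝ (fun w' => ℓ w' z) w (EuclideanSpace.single i (1 : ℝ)) := by
      intro z
      have h1 : D w z i = ⟪D w z, EuclideanSpace.single i (1 : ℝ)⟫ := by
        rw [EuclideanSpace.inner_single_right]
        simp
      rw [h1]
      simp only [hD_def, gradient]
      exact InnerProductSpace.toDual_symm_apply
    have hlim : Filter.Tendsto
        (fun (n : ℕ) (z : Z) => (n : ℝ) •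
          (ℓ (w + ((n : ℝ))⁻¹ • EuclideanSpace.single i (1 : ℝ)) z - ℓ w z))
        Filter.atTop (nhds fun z => D w z i) := by
      rw [tendsto_pi_nhds]
      intro z
      rw [heq z]
      exact HasFDerivAt.lim ((hdiff z) w).hasFDerivAt _ hnorm
    exact measurable_of_tendsto_metrizable
      (f := fun (n : ℕ) (z : Z) => (n : ℝ) •
        (ℓ (w + ((n : ℝ))⁻¹ • EuclideanSpace.single i (1 : ℝ)) z - ℓ w z))
      (fun n => by exact (((hℓmeas _).sub (hℓmeas _)).const_smul ((n : ℝ)))) hlim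
  have hDsm : ∀ w, StronglyMeasurable (D w) := fun w => (hDmeas w).stronglyMeasurable
  have hDint : ∀ w, Integrable (D w) μ := fun w =>
    integrable_of_bdd (hDsm w).aestronglyMeasurable (hDbound w)
  -- gradient of R via differentiation under the integral
  have hgradR : ∀ w₀, gradient R w₀ = ∫ z, D w₀ z ∂μ := by
    intro w₀
    have hF'eq : (fun z => fderiv ℝ (fun w' => ℓ w' z) w₀)
        = fun z => (InnerProductSpace.toDual ℝ (EuclideanSpace ℝ (Fin p))) (D w₀ z) := by
      funext z
      simp only [hD_def, gradient]
      rw [LinearIsometryEquiv.apply_symm_apply]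
    have hF'meas : AEStronglyMeasurable (fun z => fderiv ℝ (fun w' => ℓ w' z) w₀) μ := by
      rw [hF'eq]
      exact ((InnerProductSpace.toDual ℝ (EuclideanSpace ℝ (Fin p))).continuous.comp_stronglyMeasurable
        (hDsm w₀)).aestronglyMeasurable
    have hder := hasFDerivAt_integral_of_dominated_of_fderiv_le (𝕜 := ℝ) (μ := μ)
        (F := fun w z => ℓ w z) (F' := fun w z => fderiv ℝ (fun w' => ℓ w' z) w)
        (bound := fun _ => G₀) (x₀ := w₀) (Filter.univ_mem : Set.univ ∈ nhds w₀)
        (Filter.Eventually.of_forall fun w => (hℓmeas w).aestronglyMeasurable)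
        (hint w₀) hF'meas
        (Filter.Eventually.of_forall fun z x _ => hfderiv_bound z x)
        (integrable_const _)
        (Filter.Eventually.of_forall fun z x _ => ((hdiff z) x).hasFDerivAt)
    have hfd_int : Integrable (fun z => fderiv ℝ (fun w' => ℓ w' z) w₀) μ :=
      integrable_of_bdd hF'meas (fun z => hfderiv_bound z w₀)
    have hΦ : ∫ z, fderiv ℝ (fun w' => ℓ w' z) w₀ ∂μ
        = (InnerProductSpace.toDual ℝ (EuclideanSpace ℝ (Fin p))) (∫ z, D w₀ z ∂μ) := by
      apply ContinuousLinearMap.ext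
      intro v
      rw [ContinuousLinearMap.integral_apply hfd_int]
      have happ : ∀ z, fderiv ℝ (fun w' => ℓ w' z) w₀ v = ⟪v, D w₀ z⟫ := by
        intro z
        rw [real_inner_comm]
        simp only [hD_def, gradient]
        rw [InnerProductSpace.toDual_symm_apply]
      simp_rw [happ]
      rw [integral_inner (hDint w₀) v, InnerProductSpace.toDual_apply_apply, real_inner_comm]
    have hgrad : HasGradientAt R (∫ z, D w₀ z ∂μ) w₀ := by
      rw [hasGradientAt_iff_hasFDerivAt, ← hΦ]
      have hRfun : R = fun w => ∫ z, ℓ w z ∂μ := funext hR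
      rw [hRfun]
      exact hder
    exact hgrad.gradient
  have hRlip : ∀ w w', ‖gradient R w - gradient R w'‖ ≤ L * ‖w - w'‖ := by
    intro w w'
    rw [hgradR, hgradR, ← integral_sub (hDint w) (hDint w')]
    calc ‖∫ z, (D w z - D w' z) ∂μ‖ ≤ (L * ‖w - w'‖) * (μ Set.univ).toReal :=
          norm_integral_le_of_norm_le_const
            (Filter.Eventually.of_forall fun z => hsmooth z w w')
      _ = L * ‖w - w'‖ := by simp
  have hRbound : ∀ w, ‖gradient R w‖ ≤ G₀ := by
    intro w
    rw [hgradR]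
    calc ‖∫ z, D w z ∂μ‖ ≤ G₀ * (μ Set.univ).toReal :=
          norm_integral_le_of_norm_le_const (Filter.Eventually.of_forall (hDbound w))
      _ = G₀ := by simp
  have hRcont : Continuous (gradient R) := by
    have : LipschitzWith (Real.toNNReal (max L 0)) (gradient R) := by
      apply LipschitzWith.of_dist_le_mul
      intro w w'
      rw [dist_eq_norm, dist_eq_norm, Real.coe_toNNReal _ (le_max_right L 0)]
      calc ‖gradient R w - gradient R w'‖ ≤ L * ‖w - w'‖ := hRlip w w'
        _ ≤ max L 0 * ‖w - w'‖ := mul_le_mul_of_nonneg_right (le_max_left L 0) (norm_nonneg _)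
    exact this.continuous
  set F : (Fin N → Z) → EuclideanSpace ℝ (Fin p) := fun s => gradient R (A s) with hF_def
  have hFsm : StronglyMeasurable F := (hRcont.measurable.comp hA).stronglyMeasurable
  have hFC : ∀ s, ‖F s‖ ≤ G₀ := fun s => hRbound _
  have hFbd : ∀ (s s' : Fin N → Z) (i : Fin N), (∀ j, j ≠ i → s j = s' j) →
      ‖F s - F s'‖ ≤ max (L * γ) 0 := by
    intro s s' i hss
    rcases le_or_gt 0 L with hL | hL
    · calc ‖F s - F s'‖ ≤ L * ‖A s - A s'‖ := hRlip _ _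
        _ ≤ L * γ := mul_le_mul_of_nonneg_left (hstab s s' i hss) hL
        _ ≤ max (L * γ) 0 := le_max_left _ _
    · calc ‖F s - F s'‖ ≤ L * ‖A s - A s'‖ := hRlip _ _
        _ ≤ 0 := mul_nonpos_of_nonpos_of_nonneg hL.le (norm_nonneg _)
        _ ≤ max (L * γ) 0 := le_max_right _ _
  have hES := efron_stein μ (max (L * γ) 0) G₀ N F hFsm hFC hFbd
  refine hES.trans ?_
  have h1 : (max (L * γ) 0) ^ 2 ≤ L ^ 2 * γ ^ 2 := by
    rcases le_or_gt 0 (L * γ) with hLγ | hLγ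
    · rw [max_eq_left hLγ]; nlinarith
    · rw [max_eq_right hLγ.le]; nlinarith [sq_nonneg (L * γ)]
  calc (N : ℝ) * (max (L * γ) 0) ^ 2 ≤ (N : ℝ) * (L ^ 2 * γ ^ 2) :=
        mul_le_mul_of_nonneg_left h1 (Nat.cast_nonneg N)
    _ = L ^ 2 * γ ^ 2 * N := by ring

end Aux
end

section
/- Let (𝒵, 𝒟) be a probability space and ℓ : ℝ^p × 𝒵 → ℝ a measurable loss such that for every z the map w ↦ ℓ(w; z) is G-Lipschitz and L-smooth. Define R(w) = E_{Z∼𝒟}[ℓ(w; Z)]. Fix a center w₀ ∈ ℝ^p, b ≥ 1, 0 < η < 1/L, and ε with 0 ≤ ε ≤ G²η/(8b²). Let B = (Z₁,…,Z_b) be an i.i.d. sample from 𝒟, let R_B(w) = (1/b)∑_{i=1}^b ℓ(w; Z_i), and let w_B be a measurable selection of ε-inexact minimizers of w ↦ R_B(w) + ‖w − w₀‖²/(2η). Then ‖E_B[∇R(w_B) − ∇R_B(w_B)]‖ ≤ 5LGη/((1 − ηL)·b). -/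
open MeasureTheory Finset Filter Topology Metric

section AuxLemmas
variable {E : Type*} [NormedAddCommGroup E] [InnerProductSpace ℝ E] [CompleteSpace E]

local notation "⟪" x ", " y "⟫" => @inner ℝ _ _ x y

lemma fderiv_apply_eq_inner_gradient {f : E → ℝ} (hf : Differentiable ℝ f) (x v : E) :
    fderiv ℝ f x v = ⟪gradient f x, v⟫ := by
  rw [(hf x).hasGradientAt.hasFDerivAt.fderiv]
  simp [InnerProductSpace.toDual_apply_apply]

/-- Descent-type lower bound for an `L`-smooth function. -/
lemma descent_lower {f : E → ℝ} (hf : Differentiable ℝ f) {L : ℝ} (hL : 0 ≤ L)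
    (hsm : ∀ x y, ‖gradient f x - gradient f y‖ ≤ L * ‖x - y‖) (m u : E) :
    f m + ⟪gradient f m, u - m⟫ - L / 2 * ‖u - m‖ ^ 2 ≤ f u := by
  set d := u - m with hd
  set ψ : ℝ → ℝ := fun t => f (m + t • d) - t * ⟪gradient f m, d⟫ + L * t ^ 2 / 2 * ‖d‖ ^ 2
    with hψ
  have hline : ∀ t : ℝ, HasDerivAt (fun t : ℝ => m + t • d) d t := by
    intro t
    simpa using (hasDerivAt_id t).smul_const d |>.const_add m
  have hψ' : ∀ t : ℝ, HasDerivAt ψ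
      (⟪gradient f (m + t • d), d⟫ - ⟪gradient f m, d⟫ + L * t * ‖d‖ ^ 2) t := by
    intro t
    have h1 : HasDerivAt (fun t : ℝ => f (m + t • d)) (⟪gradient f (m + t • d), d⟫) t := by
      have := (hf (m + t • d)).hasFDerivAt.comp_hasDerivAt t (hline t)
      rwa [fderiv_apply_eq_inner_gradient hf] at this
    have h2 : HasDerivAt (fun t : ℝ => t * ⟪gradient f m, d⟫) (⟪gradient f m, d⟫) t := by
      simpa using (hasDerivAt_id t).mul_const (⟪gradient f m, d⟫)
    have h3 : HasDerivAt (fun t : ℝ => L * t ^ 2 / 2 * ‖d‖ ^ 2) (L * t * ‖d‖ ^ 2) t := by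
      have h4 : HasDerivAt (fun t : ℝ => t ^ 2) (2 * t) t := by
        simpa using hasDerivAt_pow 2 t
      have := ((h4.const_mul L).div_const 2).mul_const (‖d‖ ^ 2)
      exact this.congr_deriv (by ring)
    exact (h1.sub h2).add h3
  have hmono : MonotoneOn ψ (Set.Icc (0:ℝ) 1) := by
    apply monotoneOn_of_deriv_nonneg (convex_Icc 0 1)
    · exact Continuous.continuousOn (by
        apply Continuous.add
        · exact ((hf.continuous.comp (by continuity)).sub (by continuity))
        · continuity)
    · intro t ht
      exact (hψ' t).differentiableAt.differentiableWithinAt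
    · intro t ht
      rw [interior_Icc] at ht
      rw [(hψ' t).deriv]
      have hb : ‖gradient f (m + t • d) - gradient f m‖ ≤ L * (t * ‖d‖) := by
        have := hsm (m + t • d) m
        simpa [norm_smul, abs_of_nonneg ht.1.le] using this
      have h4 : ⟪gradient f (m + t • d), d⟫ - ⟪gradient f m, d⟫
          = ⟪gradient f (m + t • d) - gradient f m, d⟫ := by
        rw [inner_sub_left]
      rw [h4]
      nlinarith [abs_le.mp (abs_real_inner_le_norm (gradient f (m + t • d) - gradient f m) d
          |> fun h => h), norm_nonneg d, ht.1.le]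
  have h01 : ψ 0 ≤ ψ 1 := hmono (by norm_num) (by norm_num) (by norm_num)
  simp only [hψ, zero_smul, add_zero, one_smul] at h01
  have hmd : m + d = u := by rw [hd]; abel
  rw [hmd] at h01
  nlinarith [h01]

/-- Midpoint upper bound for an `L`-smooth (possibly nonconvex) function. -/
lemma midpoint_upper {f : E → ℝ} (hf : Differentiable ℝ f) {L : ℝ} (hL : 0 ≤ L)
    (hsm : ∀ x y, ‖gradient f x - gradient f y‖ ≤ L * ‖x - y‖) (u v : E) :
    f ((2:ℝ)⁻¹ • (u + v)) ≤ (f u + f v) / 2 + L / 8 * ‖u - v‖ ^ 2 := by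
  set m : E := (2:ℝ)⁻¹ • (u + v) with hm
  have h1 := descent_lower hf hL hsm m u
  have h2 := descent_lower hf hL hsm m v
  have hu : u - m = (2:ℝ)⁻¹ • (u - v) := by rw [hm]; module
  have hv : v - m = -((2:ℝ)⁻¹ • (u - v)) := by rw [hm]; module
  have hsum : ⟪gradient f m, u - m⟫ + ⟪gradient f m, v - m⟫ = 0 := by
    rw [hu, hv, inner_neg_right]; ring
  have hnu : ‖u - m‖ ^ 2 = ‖u - v‖ ^ 2 / 4 := by
    rw [hu, norm_smul]; norm_num; ring
  have hnv : ‖v - m‖ ^ 2 = ‖u - v‖ ^ 2 / 4 := by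
    rw [hv, norm_neg, norm_smul]; norm_num; ring
  nlinarith [h1, h2]

omit [CompleteSpace E] in
/-- Parallelogram-type identity for the proximal quadratic. -/
lemma quad_midpoint (u v w0 : E) :
    ‖(2:ℝ)⁻¹ • (u + v) - w0‖ ^ 2
      = (‖u - w0‖ ^ 2 + ‖v - w0‖ ^ 2) / 2 - ‖u - v‖ ^ 2 / 4 := by
  have ha : (2:ℝ)⁻¹ • (u + v) - w0 = (2:ℝ)⁻¹ • ((u - w0) + (v - w0)) := by module
  have hb : u - v = (u - w0) - (v - w0) := by module
  rw [ha, hb]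
  set a := u - w0; set c := v - w0
  have hpar := parallelogram_law_with_norm ℝ a c
  rw [norm_smul]
  norm_num
  nlinarith [hpar, norm_nonneg (a + c), norm_nonneg (a - c)]

omit [CompleteSpace E] in
/-- Abstract stability of inexact minimizers of two strongly-convex-like objectives. -/
lemma stability_ineq {Q1 Q2 : E → ℝ} {u v : E} {c κ ε : ℝ}
    (hmid1 : Q1 ((2:ℝ)⁻¹ • (u + v)) ≤ (Q1 u + Q1 v) / 2 - c * ‖u - v‖ ^ 2)
    (hmid2 : Q2 ((2:ℝ)⁻¹ • (u + v)) ≤ (Q2 u + Q2 v) / 2 - c * ‖u - v‖ ^ 2)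
    (hu : ∀ w, Q1 u ≤ Q1 w + ε) (hv : ∀ w, Q2 v ≤ Q2 w + ε)
    (hdiff : (Q1 v - Q2 v) - (Q1 u - Q2 u) ≤ κ * ‖u - v‖) :
    4 * c * ‖u - v‖ ^ 2 ≤ κ * ‖u - v‖ + 4 * ε := by
  have h1 := hu ((2:ℝ)⁻¹ • (u + v))
  have h2 := hv ((2:ℝ)⁻¹ • (u + v))
  linarith

set_option maxHeartbeats 1000000 in
lemma numeric_bound {t G L η ε b : ℝ} (hb : 1 ≤ b) (hG : 0 ≤ G) (hη : 0 < η)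
    (h1 : 0 < 1 - η * L) (hηL0 : 0 ≤ η * L) (hε0 : 0 ≤ ε)
    (hε : ε ≤ G ^ 2 * η / (8 * b ^ 2)) (ht : 0 ≤ t)
    (key : 4 * ((1 - η * L) / (8 * η)) * t ^ 2 ≤ (2 * G / b) * t + 4 * ε) :
    t ≤ 5 * G * η / ((1 - η * L) * b) := by
  have hb0 : 0 < b := lt_of_lt_of_le one_pos hb
  have hbne : b ≠ 0 := ne_of_gt hb0
  have hηne : η ≠ 0 := ne_of_gt hη
  by_contra hcon
  push_neg at hcon
  rw [div_lt_iff₀ (by positivity)] at hcon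
  have hε' : ε * (8 * b ^ 2) ≤ G ^ 2 * η := by
    rw [← le_div_iff₀ (by positivity)]; exact hε
  have key2 : (1 - η * L) * t ^ 2 * b ≤ 4 * G * η * t + 8 * ε * η * b := by
    have h := mul_le_mul_of_nonneg_right key (show (0:ℝ) ≤ 2 * η * b by positivity)
    calc (1 - η * L) * t ^ 2 * b = (4 * ((1 - η * L) / (8 * η)) * t ^ 2) * (2 * η * b) := by
          field_simp; ring
      _ ≤ ((2 * G / b) * t + 4 * ε) * (2 * η * b) := h
      _ = 4 * G * η * t + 8 * ε * η * b := by field_simp; ring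
  have key3 : (1 - η * L) * t ^ 2 * b ^ 2 ≤ 4 * G * η * t * b + G ^ 2 * η ^ 2 := by
    nlinarith [mul_le_mul_of_nonneg_right key2 hb0.le,
      mul_le_mul_of_nonneg_right hε' hη.le]
  set A := t * ((1 - η * L) * b) with hA
  have hg : 0 ≤ G * η := mul_nonneg hG hη.le
  have hA5 : 5 * (G * η) < A := by rw [hA]; nlinarith [hcon]
  have hApos : 0 < A := lt_of_le_of_lt (by nlinarith) hA5
  have hAsq : A ^ 2 ≤ 4 * (G * η) * A + (G * η) ^ 2 := by
    have h := mul_le_mul_of_nonneg_left key3 h1.le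
    have hle1 : (1 - η * L) * (G ^ 2 * η ^ 2) ≤ (G * η) ^ 2 := by nlinarith
    nlinarith [h, hle1]
  nlinarith [mul_pos (sub_pos.mpr hA5) (show (0:ℝ) < A + G * η by nlinarith)]

lemma norm_gradient_le {f : E → ℝ} {G : ℝ} (hG : 0 ≤ G)
    (hlip : ∀ w w', |f w - f w'| ≤ G * ‖w - w'‖) (x : E) : ‖gradient f x‖ ≤ G := by
  have hl : LipschitzWith (Real.toNNReal G) f := by
    apply LipschitzWith.of_dist_le_mul
    intro w w'
    rw [Real.dist_eq, dist_eq_norm]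
    simpa [Real.coe_toNNReal _ hG] using hlip w w'
  have h := norm_fderiv_le_of_lipschitz ℝ hl (x₀ := x)
  rw [gradient, LinearIsometryEquiv.norm_map]
  simpa [Real.coe_toNNReal _ hG] using h

lemma hasGradientAt_smul_sum {n : ℕ} (f : Fin n → E → ℝ) (f' : Fin n → E) (c : ℝ) (w : E)
    (hf : ∀ i, HasGradientAt (f i) (f' i) w) :
    HasGradientAt (fun w => c * ∑ i, f i w) (c • ∑ i, f' i) w := by
  have hs : HasFDerivAt (fun w => ∑ i, f i w)
      (∑ i, InnerProductSpace.toDual ℝ E (f' i)) w :=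
    HasFDerivAt.fun_sum (fun i _ => (hf i).hasFDerivAt)
  have h2 := (hs.const_mul c).hasGradientAt
  have h3 : (InnerProductSpace.toDual ℝ E).symm
      (c • ∑ i, InnerProductSpace.toDual ℝ E (f' i)) = c • ∑ i, f' i := by
    rw [_root_.map_smul, map_sum]
    simp
  rwa [h3] at h2

variable {Z : Type*} [MeasurableSpace Z]

lemma hasGradientAt_integral (μ : Measure Z) [IsProbabilityMeasure μ]
    (ℓ : E → Z → ℝ) [MeasurableSpace E] [OpensMeasurableSpace E] [SecondCountableTopology E]
    (hmeas : Measurable (Function.uncurry ℓ))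
    (hdiff : ∀ z, Differentiable ℝ (fun w => ℓ w z))
    (hint : ∀ w, Integrable (fun w_1 => ℓ w w_1) μ)
    {G : ℝ} (hG : 0 ≤ G)
    (hlip : ∀ z w w', |ℓ w z - ℓ w' z| ≤ G * ‖w - w'‖)
    (hgm : ∀ w, Measurable (fun z => gradient (fun w => ℓ w z) w))
    (w : E) :
    HasGradientAt (fun w => ∫ z, ℓ w z ∂μ) (∫ z, gradient (fun w => ℓ w z) w ∂μ) w := by
  set D := InnerProductSpace.toDual ℝ E with hD
  have hfd : HasFDerivAt (fun w => ∫ z, ℓ w z ∂μ)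
      (∫ z, D (gradient (fun w => ℓ w z) w) ∂μ) w := by
    apply hasFDerivAt_integral_of_dominated_of_fderiv_le
      (F := fun x z => ℓ x z) (F' := fun x z => D (gradient (fun w => ℓ w z) x))
      (x₀ := w) (bound := fun _ => G) (Metric.ball_mem_nhds w one_pos)
    · filter_upwards with x
      exact (hmeas.comp measurable_prodMk_left).aestronglyMeasurable
    · exact hint w
    · exact D.continuous.comp_aestronglyMeasurable (hgm w).aestronglyMeasurable
    · filter_upwards with z
      intro x hx
      rw [LinearIsometryEquiv.norm_map]
      exact norm_gradient_le hG (fun a b => hlip z a b) x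
    · exact integrable_const G
    · filter_upwards with z
      intro x hx
      exact ((hdiff z x).hasGradientAt).hasFDerivAt
  have hcomm : ∫ z, D (gradient (fun w => ℓ w z) w) ∂μ
      = D (∫ z, gradient (fun w => ℓ w z) w ∂μ) :=
    D.toLinearIsometry.integral_comp_comm _
  rw [hcomm] at hfd
  have h5 := hfd.hasGradientAt
  rwa [LinearIsometryEquiv.symm_apply_apply] at h5

variable {p : ℕ}

set_option maxHeartbeats 1000000 in
lemma gradient_jointly_measurable
    (ℓ : EuclideanSpace ℝ (Fin p) → Z → ℝ) (hmeas : Measurable (Function.uncurry ℓ))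
    (hdiff : ∀ z, Differentiable ℝ (fun w => ℓ w z)) :
    Measurable (fun q : (EuclideanSpace ℝ (Fin p)) × Z =>
      gradient (fun w => ℓ w q.2) q.1) := by
  refine (WithLp.measurable_toLp 2 (Fin p → ℝ)).comp
    (f := fun q : (EuclideanSpace ℝ (Fin p)) × Z => WithLp.ofLp (gradient (fun w => ℓ w q.2) q.1)) ?_
  apply measurable_pi_iff.mpr
  intro j
  set e : EuclideanSpace ℝ (Fin p) := EuclideanSpace.single j 1 with he
  have key : ∀ q : (EuclideanSpace ℝ (Fin p)) × Z,
      Tendsto (fun n : ℕ => ((n:ℝ)+1) * (ℓ (q.1 + ((n:ℝ)+1)⁻¹ • e) q.2 - ℓ q.1 q.2))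
        atTop (𝓝 (gradient (fun w => ℓ w q.2) q.1 j)) := by
    intro q
    have hder : HasDerivAt (fun t : ℝ => ℓ (q.1 + t • e) q.2)
        (gradient (fun w => ℓ w q.2) q.1 j) 0 := by
      have hline : HasDerivAt (fun t : ℝ => q.1 + t • e) e 0 := by
        simpa using (hasDerivAt_id (0:ℝ)).smul_const e |>.const_add q.1
      have h0 : q.1 + (0:ℝ) • e = q.1 := by simp
      have hg := (hdiff q.2 q.1).hasGradientAt.hasFDerivAt
      have hg' : HasFDerivAt (fun w => ℓ w q.2)
          ((InnerProductSpace.toDual ℝ _) (gradient (fun w => ℓ w q.2) q.1))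
          (q.1 + (0:ℝ) • e) := by rw [h0]; exact hg
      have hcomp := hg'.comp_hasDerivAt 0 hline
      have hval : (InnerProductSpace.toDual ℝ _ (gradient (fun w => ℓ w q.2) q.1)) e
          = gradient (fun w => ℓ w q.2) q.1 j := by
        rw [InnerProductSpace.toDual_apply_apply, he, EuclideanSpace.inner_single_right]
        simp
      rw [← hval]
      exact hcomp
    have hslope := hasDerivAt_iff_tendsto_slope_zero.mp hder
    have hseq : Tendsto (fun n : ℕ => ((n:ℝ)+1)⁻¹) atTop (𝓝[≠] (0:ℝ)) := by
      apply tendsto_nhdsWithin_of_tendsto_nhds_of_eventually_within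
      · simpa only [one_div] using tendsto_one_div_add_atTop_nhds_zero_nat (𝕜 := ℝ)
      · filter_upwards with n
        simp only [Set.mem_compl_iff, Set.mem_singleton_iff]
        positivity
    refine ((hslope.comp hseq).congr fun n => ?_)
    simp only [Function.comp, zero_add, zero_smul, add_zero, smul_eq_mul, inv_inv]
  exact measurable_of_tendsto_metrizable
    (f := fun n q => ((n:ℝ)+1) * (ℓ (q.1 + ((n:ℝ)+1)⁻¹ • e) q.2 - ℓ q.1 q.2))
    (fun n => by
      apply Measurable.mul measurable_const
      apply Measurable.sub
      · exact hmeas.comp ((measurable_fst.add_const _).prodMk measurable_snd)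
      · exact hmeas.comp (measurable_fst.prodMk measurable_snd))
    (tendsto_pi_nhds.mpr key)

end AuxLemmas


set_option maxHeartbeats 2000000 in
/-- First-moment gradient bound for the minibatch stochastic proximal point
oracle: with a `G`-Lipschitz, `L`-smooth loss, `0 < η < 1/L`, `0 ≤ ε ≤ G²η/(8b²)`, and `w_B` a
measurable selection of `ε`-inexact minimizers of `w ↦ R_B(w) + ‖w − w₀‖²/(2η)` over an i.i.d.
minibatch `B ∼ 𝒟^b`, one has `‖E_B[∇R(w_B) − ∇R_B(w_B)]‖ ≤ 5LGη/((1 − ηL)b)`. -/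
theorem minibatch_prox_gradient_bias_bound
    {Z : Type*} [MeasurableSpace Z] (p b : ℕ) (hb : 1 ≤ b)
    (μ : Measure Z) [IsProbabilityMeasure μ]
    (G L η ε : ℝ) (hG : 0 ≤ G) (hL : 0 < L)
    (hη0 : 0 < η) (hηL : η < 1 / L)
    (hε0 : 0 ≤ ε) (hε : ε ≤ G ^ 2 * η / (8 * b ^ 2))
    (ℓ : EuclideanSpace ℝ (Fin p) → Z → ℝ)
    (hmeas : Measurable (Function.uncurry ℓ))
    (hlip : ∀ z w w', |ℓ w z - ℓ w' z| ≤ G * ‖w - w'‖)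
    (hdiff : ∀ z, Differentiable ℝ (fun w => ℓ w z))
    (hsmooth : ∀ z w w',
      ‖gradient (fun w => ℓ w z) w - gradient (fun w => ℓ w z) w'‖ ≤ L * ‖w - w'‖)
    (hint : ∀ w, Integrable (fun z => ℓ w z) μ)
    (R : EuclideanSpace ℝ (Fin p) → ℝ) (hR : ∀ w, R w = ∫ z, ℓ w z ∂μ)
    (w0 : EuclideanSpace ℝ (Fin p))
    (wB : (Fin b → Z) → EuclideanSpace ℝ (Fin p)) (hwBmeas : Measurable wB)
    (hinexact : ∀ β : Fin b → Z,
      ((b : ℝ)⁻¹ * ∑ i, ℓ (wB β) (β i)) + ‖wB β - w0‖ ^ 2 / (2 * η)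
        ≤ (⨅ w, ((b : ℝ)⁻¹ * ∑ i, ℓ w (β i)) + ‖w - w0‖ ^ 2 / (2 * η)) + ε) :
    ‖∫ β, (gradient R (wB β)
        - gradient (fun w => (b : ℝ)⁻¹ * ∑ i, ℓ w (β i)) (wB β))
        ∂(Measure.pi fun _ : Fin b => μ)‖
      ≤ 5 * L * G * η / ((1 - η * L) * b) := by
  classical
  have hbR : (1:ℝ) ≤ (b:ℝ) := by exact_mod_cast hb
  have hb0 : (0:ℝ) < b := lt_of_lt_of_le one_pos hbR
  have hbne : (b:ℝ) ≠ 0 := ne_of_gt hb0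
  have hηne : η ≠ 0 := ne_of_gt hη0
  have h1L : (0:ℝ) < 1 - η * L := by
    have := (lt_div_iff₀ hL).mp hηL
    linarith
  have hηL0 : 0 ≤ η * L := le_of_lt (mul_pos hη0 hL)
  -- the gradient map
  set g : EuclideanSpace ℝ (Fin p) → Z → EuclideanSpace ℝ (Fin p) :=
    fun w z => gradient (fun w => ℓ w z) w with hgdef
  have hgmeas : Measurable (fun q : (EuclideanSpace ℝ (Fin p)) × Z => g q.1 q.2) :=
    gradient_jointly_measurable ℓ hmeas hdiff
  have hgm1 : ∀ w, Measurable (fun z => g w z) :=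
    fun w => hgmeas.comp measurable_prodMk_left
  have hgnorm : ∀ w z, ‖g w z‖ ≤ G :=
    fun w z => norm_gradient_le hG (fun a c => hlip z a c) w
  have hgl : ∀ z w w', ‖g w z - g w' z‖ ≤ L * ‖w - w'‖ := fun z w w' => hsmooth z w w'
  -- objective
  set Q : (Fin b → Z) → EuclideanSpace ℝ (Fin p) → ℝ :=
    fun β w => ((b : ℝ)⁻¹ * ∑ i, ℓ w (β i)) + ‖w - w0‖ ^ 2 / (2 * η) with hQdef
  -- midpoint inequality for Q
  have hmidQ : ∀ (β : Fin b → Z) (x y : EuclideanSpace ℝ (Fin p)),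
      Q β ((2:ℝ)⁻¹ • (x + y)) ≤ (Q β x + Q β y) / 2
        - ((1 - η * L) / (8 * η)) * ‖x - y‖ ^ 2 := by
    intro β x y
    have hsum : (b : ℝ)⁻¹ * ∑ i, ℓ ((2:ℝ)⁻¹ • (x + y)) (β i)
        ≤ ((b : ℝ)⁻¹ * ∑ i, ℓ x (β i) + (b : ℝ)⁻¹ * ∑ i, ℓ y (β i)) / 2
          + L / 8 * ‖x - y‖ ^ 2 := by
      have h1 : ∑ i, ℓ ((2:ℝ)⁻¹ • (x + y)) (β i)
          ≤ ∑ i : Fin b, ((ℓ x (β i) + ℓ y (β i)) / 2 + L / 8 * ‖x - y‖ ^ 2) :=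
        Finset.sum_le_sum fun i _ =>
          midpoint_upper (hdiff (β i)) hL.le (hsmooth (β i)) x y
      have h2 := mul_le_mul_of_nonneg_left h1 (by positivity : (0:ℝ) ≤ (b:ℝ)⁻¹)
      calc (b : ℝ)⁻¹ * ∑ i, ℓ ((2:ℝ)⁻¹ • (x + y)) (β i)
          ≤ (b : ℝ)⁻¹ * ∑ i : Fin b, ((ℓ x (β i) + ℓ y (β i)) / 2
              + L / 8 * ‖x - y‖ ^ 2) := h2
        _ = ((b : ℝ)⁻¹ * ∑ i, ℓ x (β i) + (b : ℝ)⁻¹ * ∑ i, ℓ y (β i)) / 2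
              + L / 8 * ‖x - y‖ ^ 2 := by
            rw [Finset.sum_add_distrib, ← Finset.sum_div, Finset.sum_add_distrib,
              Finset.sum_const, card_univ, Fintype.card_fin, nsmul_eq_mul]
            field_simp
    have hquad : ‖(2:ℝ)⁻¹ • (x + y) - w0‖ ^ 2 / (2 * η)
        = (‖x - w0‖ ^ 2 / (2 * η) + ‖y - w0‖ ^ 2 / (2 * η)) / 2
          - ‖x - y‖ ^ 2 / (8 * η) := by
      rw [quad_midpoint x y w0]
      field_simp
      ring
    simp only [hQdef]
    rw [hquad]
    have : L / 8 * ‖x - y‖ ^ 2 - ‖x - y‖ ^ 2 / (8 * η)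
        = -(((1 - η * L) / (8 * η)) * ‖x - y‖ ^ 2) := by
      field_simp
      ring
    linarith [hsum, this]
  -- near optimality against every point
  have hmin : ∀ (β : Fin b → Z) (w' : EuclideanSpace ℝ (Fin p)),
      Q β (wB β) ≤ Q β w' + ε := by
    intro β w'
    have hbdd : BddBelow (Set.range (fun w => Q β w)) := by
      refine ⟨((b : ℝ)⁻¹ * ∑ i, ℓ w0 (β i)) - G ^ 2 * η / 2, ?_⟩
      rintro r ⟨w, rfl⟩
      have hlow : (b : ℝ)⁻¹ * ∑ i, ℓ w0 (β i) - G * ‖w - w0‖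
          ≤ (b : ℝ)⁻¹ * ∑ i, ℓ w (β i) := by
        have h1 : ∑ i, ℓ w0 (β i) - (b:ℝ) * (G * ‖w - w0‖) ≤ ∑ i, ℓ w (β i) := by
          have h2 : ∀ i : Fin b, ℓ w0 (β i) - G * ‖w - w0‖ ≤ ℓ w (β i) := by
            intro i
            have := abs_le.mp (hlip (β i) w w0)
            have hrev : ‖w0 - w‖ = ‖w - w0‖ := norm_sub_rev w0 w
            linarith [abs_le.mp (hlip (β i) w0 w), hrev ▸ (abs_le.mp (hlip (β i) w0 w)).2]
          calc ∑ i, ℓ w0 (β i) - (b:ℝ) * (G * ‖w - w0‖)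
              = ∑ i : Fin b, (ℓ w0 (β i) - G * ‖w - w0‖) := by
                rw [Finset.sum_sub_distrib, Finset.sum_const, card_univ, Fintype.card_fin]
                push_cast; ring
            _ ≤ ∑ i, ℓ w (β i) := Finset.sum_le_sum fun i _ => h2 i
        have h3 := mul_le_mul_of_nonneg_left h1 (by positivity : (0:ℝ) ≤ (b:ℝ)⁻¹)
        calc (b : ℝ)⁻¹ * ∑ i, ℓ w0 (β i) - G * ‖w - w0‖
            = (b : ℝ)⁻¹ * (∑ i, ℓ w0 (β i) - (b:ℝ) * (G * ‖w - w0‖)) := by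
              field_simp
          _ ≤ (b : ℝ)⁻¹ * ∑ i, ℓ w (β i) := h3
      have hq : -G * ‖w - w0‖ + ‖w - w0‖ ^ 2 / (2 * η) ≥ -(G ^ 2 * η / 2) := by
        have h' : 0 ≤ (‖w - w0‖ - G * η) ^ 2 / (2 * η) := by positivity
        have heq : (‖w - w0‖ - G * η) ^ 2 / (2 * η)
            = ‖w - w0‖ ^ 2 / (2 * η) - G * ‖w - w0‖ + G ^ 2 * η / 2 := by
          field_simp
          ring
        rw [heq] at h'
        linarith
      simp only [hQdef]
      have := norm_nonneg (w - w0)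
      nlinarith [hlow, hq]
    have h1 := hinexact β
    have h2 : (⨅ w, Q β w) ≤ Q β w' := ciInf_le hbdd w'
    simp only [hQdef] at h1 h2 ⊢
    linarith
  -- deterministic stability bound
  have hstab : ∀ (β : Fin b → Z) (i : Fin b) (z' : Z),
      ‖wB (Function.update β i z') - wB β‖ ≤ 5 * G * η / ((1 - η * L) * b) := by
    intro β i z'
    set u := wB (Function.update β i z') with hu
    set v := wB β with hv
    have hQsub : ∀ w, Q (Function.update β i z') w - Q β w
        = (b : ℝ)⁻¹ * (ℓ w z' - ℓ w (β i)) := by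
      intro w
      have hsum : ∑ j, ℓ w (Function.update β i z' j)
          = ∑ j, ℓ w (β j) - ℓ w (β i) + ℓ w z' := by
        have hfun : (fun j => ℓ w (Function.update β i z' j))
            = Function.update (fun j => ℓ w (β j)) i (ℓ w z') := by
          funext j
          by_cases h : j = i
          · subst h; simp [Function.update_self]
          · simp [Function.update_of_ne h]
        rw [hfun, Finset.sum_update_of_mem (mem_univ i),
          Finset.sdiff_singleton_eq_erase, Finset.sum_erase_eq_sub (mem_univ i)]
        ring
      simp only [hQdef]
      rw [hsum]
      field_simp
      ring
    have hkey : 4 * ((1 - η * L) / (8 * η)) * ‖u - v‖ ^ 2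
        ≤ (2 * G / b) * ‖u - v‖ + 4 * ε := by
      apply stability_ineq (Q1 := Q (Function.update β i z')) (Q2 := Q β)
      · exact hmidQ _ u v
      · exact hmidQ _ u v
      · exact fun w => hmin _ w
      · exact fun w => hmin _ w
      · rw [hQsub v, hQsub u]
        have h1 := abs_le.mp (hlip z' v u)
        have h2 := abs_le.mp (hlip (β i) u v)
        have hn : ‖v - u‖ = ‖u - v‖ := norm_sub_rev v u
        have hb1 : (b : ℝ)⁻¹ * ((ℓ v z' - ℓ v (β i)) - (ℓ u z' - ℓ u (β i)))
            ≤ (b : ℝ)⁻¹ * (2 * G * ‖u - v‖) := by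
          apply mul_le_mul_of_nonneg_left _ (by positivity : (0:ℝ) ≤ (b:ℝ)⁻¹)
          nlinarith [h1.2, h2.2, hn]
        calc (b : ℝ)⁻¹ * (ℓ v z' - ℓ v (β i)) - (b : ℝ)⁻¹ * (ℓ u z' - ℓ u (β i))
            = (b : ℝ)⁻¹ * ((ℓ v z' - ℓ v (β i)) - (ℓ u z' - ℓ u (β i))) := by ring
          _ ≤ (b : ℝ)⁻¹ * (2 * G * ‖u - v‖) := hb1
          _ = (2 * G / b) * ‖u - v‖ := by field_simp
    exact numeric_bound hbR hG hη0 h1L hηL0 hε0 hε (norm_nonneg _) hkey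
  -- gradient identities
  have hRgrad : ∀ w, HasGradientAt R (∫ z, g w z ∂μ) w := by
    intro w
    have hfun : R = fun w => ∫ z, ℓ w z ∂μ := funext hR
    rw [hfun]
    exact hasGradientAt_integral μ ℓ hmeas hdiff hint hG hlip hgm1 w
  have hgradR : ∀ w, gradient R w = ∫ z, g w z ∂μ := fun w => (hRgrad w).gradient
  have hgradRB : ∀ β : Fin b → Z,
      gradient (fun w => (b : ℝ)⁻¹ * ∑ i, ℓ w (β i)) (wB β)
        = (b : ℝ)⁻¹ • ∑ i, g (wB β) (β i) := fun β =>
    (hasGradientAt_smul_sum (fun i w => ℓ w (β i)) (fun i => g (wB β) (β i)) _ _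
      (fun i => (hdiff (β i) (wB β)).hasGradientAt)).gradient
  set π : Measure (Fin b → Z) := Measure.pi fun _ : Fin b => μ with hπ
  -- measurability of all integrands
  have hupd_meas : ∀ i : Fin b,
      Measurable (fun q : Z × (Fin b → Z) => Function.update q.2 i q.1) := by
    intro i
    apply measurable_pi_iff.mpr
    intro j
    by_cases h : j = i
    · subst h
      simpa only [Function.update_self] using measurable_fst
    · simp only [Function.update_of_ne h]
      exact (measurable_pi_apply j).comp measurable_snd
  have hMeas_e : Measurable fun q : Z × (Fin b → Z) => g (wB q.2) q.1 :=
    hgmeas.comp ((hwBmeas.comp measurable_snd).prodMk measurable_fst)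
  have hMeas_d : Measurable fun q : (Fin b → Z) × Z => g (wB q.1) q.2 :=
    hgmeas.comp ((hwBmeas.comp measurable_fst).prodMk measurable_snd)
  have hMeas_f : ∀ i : Fin b,
      Measurable fun q : Z × (Fin b → Z) => g (wB (Function.update q.2 i q.1)) (q.2 i) :=
    fun i => hgmeas.comp ((hwBmeas.comp (hupd_meas i)).prodMk
      ((measurable_pi_apply i).comp measurable_snd))
  have hMeas_e2 : ∀ i : Fin b,
      Measurable fun q : Z × (Fin b → Z) => g (wB q.2) (q.2 i) :=
    fun i => hgmeas.comp ((hwBmeas.comp measurable_snd).prodMk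
      ((measurable_pi_apply i).comp measurable_snd))
  have hMeas_b : ∀ i : Fin b, Measurable fun β : Fin b → Z => g (wB β) (β i) :=
    fun i => hgmeas.comp (hwBmeas.prodMk (measurable_pi_apply i))
  -- integrability
  have hInt_e : Integrable (fun q : Z × (Fin b → Z) => g (wB q.2) q.1) (μ.prod π) :=
    (integrable_const G).mono' hMeas_e.aestronglyMeasurable
      (Filter.Eventually.of_forall fun q => hgnorm _ _)
  have hInt_d : Integrable (fun q : (Fin b → Z) × Z => g (wB q.1) q.2) (π.prod μ) :=
    (integrable_const G).mono' hMeas_d.aestronglyMeasurable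
      (Filter.Eventually.of_forall fun q => hgnorm _ _)
  have hInt_f : ∀ i : Fin b, Integrable
      (fun q : Z × (Fin b → Z) => g (wB (Function.update q.2 i q.1)) (q.2 i)) (μ.prod π) :=
    fun i => (integrable_const G).mono' (hMeas_f i).aestronglyMeasurable
      (Filter.Eventually.of_forall fun q => hgnorm _ _)
  have hInt_e2 : ∀ i : Fin b, Integrable
      (fun q : Z × (Fin b → Z) => g (wB q.2) (q.2 i)) (μ.prod π) :=
    fun i => (integrable_const G).mono' (hMeas_e2 i).aestronglyMeasurable
      (Filter.Eventually.of_forall fun q => hgnorm _ _)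
  have hInt_b : ∀ i : Fin b, Integrable (fun β : Fin b → Z => g (wB β) (β i)) π :=
    fun i => (integrable_const G).mono' (hMeas_b i).aestronglyMeasurable
      (Filter.Eventually.of_forall fun q => hgnorm _ _)
  -- the averaged sample gradient is integrable
  have hInt_sum : Integrable
      (fun β : Fin b → Z => (b : ℝ)⁻¹ • ∑ i, g (wB β) (β i)) π := by
    refine Integrable.smul (f := fun β => ∑ i, g (wB β) (β i)) ((b : ℝ)⁻¹) ?_
    exact integrable_finset_sum _ (fun i _ => hInt_b i)
  -- population gradient: continuity and integrability
  have hΦlip : LipschitzWith (Real.toNNReal L) (fun w => ∫ z, g w z ∂μ) := by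
    apply LipschitzWith.of_dist_le_mul
    intro w w'
    rw [dist_eq_norm, dist_eq_norm, ← integral_sub]
    · have h := norm_integral_le_of_norm_le_const (μ := μ)
        (f := fun z => g w z - g w' z) (C := L * ‖w - w'‖)
        (Filter.Eventually.of_forall fun z => hgl z w w')
      simpa [measure_univ, Real.coe_toNNReal _ hL.le] using h
    · exact (integrable_const G).mono' (hgm1 w).aestronglyMeasurable
        (Filter.Eventually.of_forall fun z => hgnorm _ _)
    · exact (integrable_const G).mono' (hgm1 w').aestronglyMeasurable
        (Filter.Eventually.of_forall fun z => hgnorm _ _)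
  have hnorm_F0 : ∀ w : EuclideanSpace ℝ (Fin p), ‖∫ z, g w z ∂μ‖ ≤ G := by
    intro w
    have h := norm_integral_le_of_norm_le_const (μ := μ) (f := fun z => g w z) (C := G)
      (Filter.Eventually.of_forall fun z => hgnorm w z)
    simpa [measure_univ] using h
  have hInt_F0 : Integrable (fun β => ∫ z, g (wB β) z ∂μ) π :=
    (integrable_const G).mono'
      ((hΦlip.continuous.measurable.comp hwBmeas).aestronglyMeasurable)
      (Filter.Eventually.of_forall fun β => hnorm_F0 _)
  -- Fubini: the population term as an integral over the product
  have hswap : ∫ β, (∫ z, g (wB β) z ∂μ) ∂π = ∫ q, g (wB q.2) q.1 ∂(μ.prod π) := by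
    rw [integral_prod _ hInt_e]
    exact integral_integral_swap hInt_d
  -- exchange of one coordinate with the ghost sample
  have hψ := measurePreserving_piFinSuccAbove (fun _ : Fin (b+1) => μ) (Fin.last b)
  set ψ := MeasurableEquiv.piFinSuccAbove (fun _ : Fin (b+1) => Z) (Fin.last b) with hψdef
  have hswap_i : ∀ i : Fin b,
      ∫ q, g (wB (Function.update q.2 i q.1)) (q.2 i) ∂(μ.prod π)
        = ∫ q, g (wB q.2) q.1 ∂(μ.prod π) := by
    intro i
    set σ : Equiv.Perm (Fin (b+1)) := Equiv.swap (Fin.castSucc i) (Fin.last b) with hσ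
    set e := MeasurableEquiv.piCongrLeft (fun _ : Fin (b+1) => Z) σ with he
    have hperm := measurePreserving_piCongrLeft (fun _ : Fin (b+1) => μ) σ
    have heapp : ∀ (ω : Fin (b+1) → Z) (k : Fin (b+1)), e ω k = ω (σ k) := by
      intro ω k
      have h1 := Equiv.piCongrLeft_apply_apply (fun _ : Fin (b+1) => Z) σ ω (σ k)
      rw [Equiv.swap_apply_self] at h1
      rw [he, MeasurableEquiv.coe_piCongrLeft]
      exact h1
    have h1 : ∫ q, g (wB q.2) q.1 ∂(μ.prod π)
        = ∫ ω, g (wB (fun j => ω ((Fin.last b).succAbove j))) (ω (Fin.last b))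
            ∂(Measure.pi fun _ : Fin (b+1) => μ) := by
      rw [← hψ.integral_comp ψ.measurableEmbedding (fun q => g (wB q.2) q.1)]
      rfl
    have h2 : ∫ q, g (wB (Function.update q.2 i q.1)) (q.2 i) ∂(μ.prod π)
        = ∫ ω, g (wB (Function.update (fun j => ω ((Fin.last b).succAbove j)) i
            (ω (Fin.last b)))) ((fun j => ω ((Fin.last b).succAbove j)) i)
            ∂(Measure.pi fun _ : Fin (b+1) => μ) := by
      rw [← hψ.integral_comp ψ.measurableEmbedding
        (fun q => g (wB (Function.update q.2 i q.1)) (q.2 i))]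
      rfl
    have h3 : ∫ ω, g (wB (fun j => (e ω) ((Fin.last b).succAbove j))) ((e ω) (Fin.last b))
          ∂(Measure.pi fun _ : Fin (b+1) => μ)
        = ∫ ω, g (wB (fun j => ω ((Fin.last b).succAbove j))) (ω (Fin.last b))
          ∂(Measure.pi fun _ : Fin (b+1) => μ) :=
      hperm.integral_comp e.measurableEmbedding
        (fun ω => g (wB (fun j => ω ((Fin.last b).succAbove j))) (ω (Fin.last b)))
    have h4 : ∀ ω : Fin (b+1) → Z,
        g (wB (fun j => (e ω) ((Fin.last b).succAbove j))) ((e ω) (Fin.last b))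
        = g (wB (Function.update (fun j => ω ((Fin.last b).succAbove j)) i
            (ω (Fin.last b)))) ((fun j => ω ((Fin.last b).succAbove j)) i) := by
      intro ω
      have hfront : (fun j => (e ω) ((Fin.last b).succAbove j))
          = Function.update (fun j => ω ((Fin.last b).succAbove j)) i (ω (Fin.last b)) := by
        funext j
        rw [heapp, hσ]
        simp only [Fin.succAbove_last]
        by_cases h : j = i
        · subst h
          rw [Equiv.swap_apply_left, Function.update_self]
        · rw [Equiv.swap_apply_of_ne_of_ne
            (fun hc => h (Fin.castSucc_injective b hc)) (Fin.castSucc_lt_last j).ne,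
            Function.update_of_ne h]
      have hlast : (e ω) (Fin.last b) = (fun j => ω ((Fin.last b).succAbove j)) i := by
        rw [heapp, hσ]
        simp only [Equiv.swap_apply_right, Fin.succAbove_last]
      rw [hfront, hlast]
    rw [h2, h1, ← h3]
    exact integral_congr_ae (Filter.Eventually.of_forall fun ω => (h4 ω).symm)
  -- second term of each difference
  have hT2 : ∀ i : Fin b,
      ∫ q, g (wB q.2) (q.2 i) ∂(μ.prod π) = ∫ β, g (wB β) (β i) ∂π := by
    intro i
    rw [show (∫ q, g (wB q.2) (q.2 i) ∂(μ.prod π))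
        = (μ Set.univ).toReal • ∫ β, g (wB β) (β i) ∂π from
      MeasureTheory.integral_fun_snd (fun β => g (wB β) (β i))]
    simp [measure_univ]
  -- the difference integrals
  set T : EuclideanSpace ℝ (Fin p) := ∫ q, g (wB q.2) q.1 ∂(μ.prod π) with hT
  set Δ : Fin b → EuclideanSpace ℝ (Fin p) := fun i =>
    ∫ q, (g (wB (Function.update q.2 i q.1)) (q.2 i) - g (wB q.2) (q.2 i)) ∂(μ.prod π)
    with hΔ
  have hΔeq : ∀ i, Δ i = T - ∫ β, g (wB β) (β i) ∂π := by
    intro i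
    show (∫ q, (g (wB (Function.update q.2 i q.1)) (q.2 i) - g (wB q.2) (q.2 i))
      ∂(μ.prod π)) = _
    rw [integral_sub (hInt_f i) (hInt_e2 i), hswap_i i, hT2 i]
  have hΔnorm : ∀ i, ‖Δ i‖ ≤ L * (5 * G * η / ((1 - η * L) * b)) := by
    intro i
    show ‖∫ q, (g (wB (Function.update q.2 i q.1)) (q.2 i) - g (wB q.2) (q.2 i))
      ∂(μ.prod π)‖ ≤ _
    have h := norm_integral_le_of_norm_le_const (μ := μ.prod π)
      (f := fun q : Z × (Fin b → Z) =>
        g (wB (Function.update q.2 i q.1)) (q.2 i) - g (wB q.2) (q.2 i))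
      (C := L * (5 * G * η / ((1 - η * L) * b)))
      (Filter.Eventually.of_forall fun q => by
        calc ‖g (wB (Function.update q.2 i q.1)) (q.2 i) - g (wB q.2) (q.2 i)‖
            ≤ L * ‖wB (Function.update q.2 i q.1) - wB q.2‖ := hgl _ _ _
          _ ≤ L * (5 * G * η / ((1 - η * L) * b)) :=
              mul_le_mul_of_nonneg_left (hstab q.2 i q.1) hL.le)
    simpa [measure_univ] using h
  -- assembling
  have hIsplit : ∫ β, ((∫ z, g (wB β) z ∂μ) - (b : ℝ)⁻¹ • ∑ i, g (wB β) (β i)) ∂π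
      = (b : ℝ)⁻¹ • ∑ i, Δ i := by
    rw [integral_sub hInt_F0 hInt_sum, integral_smul,
      integral_finset_sum _ (fun i _ => hInt_b i), hswap]
    have : ∑ i : Fin b, Δ i = (b : ℝ) • T - ∑ i : Fin b, ∫ β, g (wB β) (β i) ∂π := by
      rw [Finset.sum_congr rfl (fun i _ => hΔeq i), Finset.sum_sub_distrib,
        Finset.sum_const, card_univ, Fintype.card_fin, ← Nat.cast_smul_eq_nsmul ℝ]
    rw [this, smul_sub, smul_smul, inv_mul_cancel₀ hbne, one_smul]
  have hgoal : (fun β => gradient R (wB β)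
        - gradient (fun w => (b : ℝ)⁻¹ * ∑ i, ℓ w (β i)) (wB β))
      = fun β => ((∫ z, g (wB β) z ∂μ) - (b : ℝ)⁻¹ • ∑ i, g (wB β) (β i)) := by
    funext β
    rw [hgradR (wB β), hgradRB β]
  rw [show (Measure.pi fun _ : Fin b => μ) = π from hπ.symm] at *
  rw [hgoal, hIsplit]
  have hsumnorm : ‖(b : ℝ)⁻¹ • ∑ i, Δ i‖
      ≤ (b : ℝ)⁻¹ * ((b : ℝ) * (L * (5 * G * η / ((1 - η * L) * b)))) := by
    rw [norm_smul]
    have h1 : ‖∑ i : Fin b, Δ i‖ ≤ (b : ℝ) * (L * (5 * G * η / ((1 - η * L) * b))) := by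
      calc ‖∑ i : Fin b, Δ i‖ ≤ ∑ i : Fin b, ‖Δ i‖ := norm_sum_le _ _
        _ ≤ ∑ _i : Fin b, L * (5 * G * η / ((1 - η * L) * b)) :=
            Finset.sum_le_sum fun i _ => hΔnorm i
        _ = (b : ℝ) * (L * (5 * G * η / ((1 - η * L) * b))) := by
            rw [Finset.sum_const, card_univ, Fintype.card_fin, nsmul_eq_mul]
    calc ‖(b:ℝ)⁻¹‖ * ‖∑ i : Fin b, Δ i‖ = (b : ℝ)⁻¹ * ‖∑ i : Fin b, Δ i‖ := by
          rw [Real.norm_eq_abs, abs_of_nonneg (by positivity)]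
      _ ≤ (b : ℝ)⁻¹ * ((b : ℝ) * (L * (5 * G * η / ((1 - η * L) * b)))) :=
          mul_le_mul_of_nonneg_left h1 (by positivity)
  calc ‖(b : ℝ)⁻¹ • ∑ i, Δ i‖
      ≤ (b : ℝ)⁻¹ * ((b : ℝ) * (L * (5 * G * η / ((1 - η * L) * b)))) := hsumnorm
    _ = 5 * L * G * η / ((1 - η * L) * b) := by
        field_simp
end

section
/- Let (𝒵, 𝒟) be a probability space and ℓ : ℝ^p × 𝒵 → ℝ a measurable loss such that for every z the map w ↦ ℓ(w; z) is G-Lipschitz and L-smooth. Define R(w) = E_{Z∼𝒟}[ℓ(w; Z)]. Fix a center w₀ ∈ ℝ^p, b ≥ 1, 0 < η < 1/L, and ε with 0 ≤ ε ≤ G²η/(8b²). Let B = (Z₁,…,Z_b) be an i.i.d. sample from 𝒟, let R_B(w) = (1/b)∑_{i=1}^b ℓ(w; Z_i), and let w_B be a measurable selection of ε-inexact minimizers of w ↦ R_B(w) + ‖w − w₀‖²/(2η). Then E_B[‖∇R(w_B) − E_B[∇R(w_B)]‖²] ≤ 25L²G²η²/((1 − ηL)²·b). -/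
open MeasureTheory Finset
open scoped RealInnerProductSpace

section Aux
variable {E : Type*} [NormedAddCommGroup E] [InnerProductSpace ℝ E] [CompleteSpace E]

/-- Strong convexity lower bound from strongly monotone gradient. -/
lemma aux_strong_lb (f : E → ℝ) (g : E → E) (m : ℝ) (hg : Continuous g)
    (hd : ∀ x, HasGradientAt f (g x) x)
    (hmono : ∀ x y, m * ‖x - y‖ ^ 2 ≤ ⟪g x - g y, x - y⟫) (x y : E) :
    f x + ⟪g x, y - x⟫ + m / 2 * ‖y - x‖ ^ 2 ≤ f y := by
  set d := y - x with hdd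
  have hline : ∀ t : ℝ, HasDerivAt (fun t : ℝ => x + t • d) d t := by
    intro t
    simpa using ((hasDerivAt_id t).smul_const d).const_add x
  have hφ : ∀ t : ℝ, HasDerivAt (fun t : ℝ => f (x + t • d)) ⟪g (x + t • d), d⟫ t := by
    intro t
    have h1 := ((hd (x + t • d)).hasFDerivAt).comp_hasDerivAt t (hline t)
    simpa [InnerProductSpace.toDual_apply_apply, Function.comp_def] using h1
  have hcont : Continuous fun t : ℝ => ⟪g (x + t • d), d⟫ := by
    exact (hg.comp (by continuity)).inner continuous_const
  have hFTC : f (x + (1:ℝ) • d) - f (x + (0:ℝ) • d)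
      = ∫ t in (0:ℝ)..1, ⟪g (x + t • d), d⟫ := by
    exact (intervalIntegral.integral_eq_sub_of_hasDerivAt
      (fun t _ => hφ t) (hcont.intervalIntegrable 0 1)).symm
  have hptw : ∀ t ∈ Set.Icc (0:ℝ) 1, ⟪g x, d⟫ + m * t * ‖d‖ ^ 2 ≤ ⟪g (x + t • d), d⟫ := by
    intro t ht
    rcases eq_or_lt_of_le ht.1 with h0 | h0
    · simp [← h0]
    · have h := hmono (x + t • d) x
      have hxy : x + t • d - x = t • d := by abel
      rw [hxy] at h
      have : m * ‖t • d‖ ^ 2 ≤ t * ⟪g (x + t • d) - g x, d⟫ := by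
        calc m * ‖t • d‖ ^ 2 ≤ ⟪g (x + t • d) - g x, t • d⟫ := h
        _ = t * ⟪g (x + t • d) - g x, d⟫ := by rw [real_inner_smul_right]
      have hns : ‖t • d‖ ^ 2 = t ^ 2 * ‖d‖ ^ 2 := by
        rw [norm_smul]; rw [Real.norm_eq_abs]; rw [mul_pow, sq_abs]
      rw [hns] at this
      have ht2 : m * t * ‖d‖ ^ 2 ≤ ⟪g (x + t • d) - g x, d⟫ := by
        nlinarith [this, h0]
      have := inner_sub_left (𝕜 := ℝ) (g (x + t • d)) (g x) d
      nlinarith [ht2, this]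
  have hint : ∫ t in (0:ℝ)..1, ⟪g (x + t • d), d⟫
      ≥ ∫ t in (0:ℝ)..1, (⟪g x, d⟫ + m * t * ‖d‖ ^ 2) := by
    apply intervalIntegral.integral_mono_on (by norm_num)
    · exact (Continuous.intervalIntegrable (by continuity) 0 1)
    · exact hcont.intervalIntegrable 0 1
    · intro t ht; exact hptw t ht
  have hval : ∫ t in (0:ℝ)..1, (⟪g x, d⟫ + m * t * ‖d‖ ^ 2)
      = ⟪g x, d⟫ + m / 2 * ‖d‖ ^ 2 := by
    rw [intervalIntegral.integral_add (by exact intervalIntegrable_const)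
      (Continuous.intervalIntegrable (by continuity) 0 1)]
    have h2 : ∫ t in (0:ℝ)..1, m * t * ‖d‖ ^ 2 = m * ‖d‖ ^ 2 / 2 := by
      have he : (fun t : ℝ => m * t * ‖d‖ ^ 2) = fun t : ℝ => (m * ‖d‖ ^ 2) * t := by
        ext t; ring
      rw [he, intervalIntegral.integral_const_mul, integral_id]; ring
    rw [h2, intervalIntegral.integral_const]
    simp
    ring
  have : f y - f x ≥ ⟪g x, d⟫ + m / 2 * ‖d‖ ^ 2 := by
    have h1 : f (x + (1:ℝ) • d) = f y := by rw [hdd]; congr 1; abel_nf; rw [one_smul]; abel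
    have h0 : f (x + (0:ℝ) • d) = f x := by simp
    rw [h1, h0] at hFTC
    rw [hFTC, ← hval]
    exact hint
  linarith

variable {E : Type*} [NormedAddCommGroup E] [InnerProductSpace ℝ E] [CompleteSpace E]

lemma aux_int {X : Type*} [MeasurableSpace X] {ν : Measure X} [IsFiniteMeasure ν]
    {F : Type*} [NormedAddCommGroup F] (f : X → F)
    (hf : AEStronglyMeasurable f ν) (C : ℝ) (hC : ∀ x, ‖f x‖ ≤ C) : Integrable f ν :=
  Integrable.mono' (integrable_const C) hf (Filter.Eventually.of_forall hC)

/-- The mean minimizes the expected squared distance. -/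
lemma aux_var_le {X : Type*} [MeasurableSpace X] (ν : Measure X) [IsProbabilityMeasure ν]
    (f : X → E) (hf : AEStronglyMeasurable f ν) (C : ℝ) (hC : ∀ x, ‖f x‖ ≤ C) (c : E) :
    ∫ x, ‖f x - ∫ y, f y ∂ν‖ ^ 2 ∂ν ≤ ∫ x, ‖f x - c‖ ^ 2 ∂ν := by
  have hfi : Integrable f ν := aux_int f hf C hC
  set mf := ∫ y, f y ∂ν with hmf
  have key : ∀ x, ‖f x - mf‖ ^ 2
      = ‖f x - c‖ ^ 2 + 2 * ⟪f x - c, c - mf⟫ + ‖c - mf‖ ^ 2 := by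
    intro x
    have : f x - mf = (f x - c) + (c - mf) := by abel
    rw [this, ← real_inner_self_eq_norm_sq, ← real_inner_self_eq_norm_sq,
      ← real_inner_self_eq_norm_sq, inner_add_add_self,
      real_inner_comm (c - mf) (f x - c)]
    ring
  have hint1 : Integrable (fun x => ‖f x - c‖ ^ 2) ν := by
    refine aux_int _ ((hf.sub aestronglyMeasurable_const).norm.pow 2) ((C + ‖c‖) ^ 2) ?_
    intro x
    have h1 : ‖f x - c‖ ≤ C + ‖c‖ :=
      (norm_sub_le _ _).trans (add_le_add_left (hC x) _)
    have h2 : (0:ℝ) ≤ ‖f x - c‖ := norm_nonneg _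
    simp only [norm_pow, norm_norm]
    exact pow_le_pow_left₀ h2 h1 2
  have hint2 : Integrable (fun x => 2 * ⟪f x - c, c - mf⟫) ν := by
    refine aux_int _ ?_ (2 * ((C + ‖c‖) * ‖c - mf‖)) ?_
    · exact (((hf.sub aestronglyMeasurable_const).inner aestronglyMeasurable_const).const_mul 2)
    · intro x
      have h1 : ‖f x - c‖ ≤ C + ‖c‖ :=
        (norm_sub_le _ _).trans (add_le_add_left (hC x) _)
      have := abs_real_inner_le_norm (f x - c) (c - mf)
      rw [norm_mul, Real.norm_ofNat, Real.norm_eq_abs]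
      have h3 : |⟪f x - c, c - mf⟫| ≤ (C + ‖c‖) * ‖c - mf‖ :=
        this.trans (mul_le_mul_of_nonneg_right h1 (norm_nonneg _))
      nlinarith [abs_nonneg ⟪f x - c, c - mf⟫]
  have hsplit : ∫ x, ‖f x - mf‖ ^ 2 ∂ν
      = (∫ x, ‖f x - c‖ ^ 2 ∂ν) + (∫ x, 2 * ⟪f x - c, c - mf⟫ ∂ν) + ‖c - mf‖ ^ 2 := by
    calc ∫ x, ‖f x - mf‖ ^ 2 ∂ν
        = ∫ x, (‖f x - c‖ ^ 2 + 2 * ⟪f x - c, c - mf⟫ + ‖c - mf‖ ^ 2) ∂ν := by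
          exact integral_congr_ae (Filter.Eventually.of_forall fun x => key x)
      _ = (∫ x, ‖f x - c‖ ^ 2 ∂ν) + (∫ x, 2 * ⟪f x - c, c - mf⟫ ∂ν) + ‖c - mf‖ ^ 2 := by
          rw [integral_add (f := fun x => ‖f x - c‖ ^ 2 + 2 * ⟪f x - c, c - mf⟫)
            (g := fun _ => ‖c - mf‖ ^ 2) (hint1.add hint2) (integrable_const _),
            integral_add hint1 hint2, integral_const]
          simp
  have hcross : ∫ x, 2 * ⟪f x - c, c - mf⟫ ∂ν = -2 * ‖c - mf‖ ^ 2 := by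
    have h1 : ∫ x, ⟪c - mf, f x - c⟫ ∂ν = ⟪c - mf, ∫ x, (f x - c) ∂ν⟫ :=
      integral_inner (hfi.sub (integrable_const c)) (c - mf)
    have h2 : ∫ x, (f x - c) ∂ν = mf - c := by
      rw [integral_sub hfi (integrable_const c), integral_const]; simp [hmf]
    calc ∫ x, 2 * ⟪f x - c, c - mf⟫ ∂ν = 2 * ∫ x, ⟪c - mf, f x - c⟫ ∂ν := by
          rw [show (fun x => 2 * ⟪f x - c, c - mf⟫) = fun x => 2 * ⟪c - mf, f x - c⟫ by
            funext x; rw [real_inner_comm], integral_const_mul]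
      _ = 2 * ⟪c - mf, mf - c⟫ := by rw [h1, h2]
      _ = -2 * ‖c - mf‖ ^ 2 := by
          have : (mf - c) = -(c - mf) := by abel
          rw [this, inner_neg_right, real_inner_self_eq_norm_sq]; ring
  rw [hsplit, hcross]
  nlinarith [sq_nonneg ‖c - mf‖]

lemma aux_sum_sq {Z : Type*} [MeasurableSpace Z] (μ : Measure Z) [IsProbabilityMeasure μ]
    {E : Type*} [NormedAddCommGroup E] [InnerProductSpace ℝ E] [CompleteSpace E]
    [MeasurableSpace E] [BorelSpace E] [SecondCountableTopology E]
    (h : Z → E) (hm : Measurable h) (C : ℝ) (hC : ∀ z, ‖h z‖ ≤ C)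
    (h0 : ∫ z, h z ∂μ = 0) :
    ∀ n : ℕ, ∫ β, ‖∑ i, h (β i)‖ ^ 2 ∂(Measure.pi fun _ : Fin n => μ)
      = n * ∫ z, ‖h z‖ ^ 2 ∂μ := by
  intro n
  induction n with
  | zero => simp
  | succ n ih =>
    set πn := Measure.pi fun _ : Fin n => μ with hπn
    have hS_meas : Measurable fun y : Fin n → Z => ∑ j, h (y j) :=
      Finset.measurable_sum univ fun j _ => hm.comp (measurable_pi_apply j)
    set S : (Fin n → Z) → E := fun y => ∑ j, h (y j) with hSdef
    have hSbound : ∀ y, ‖S y‖ ≤ n * C := by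
      intro y
      calc ‖S y‖ ≤ ∑ j : Fin n, ‖h (y j)‖ := norm_sum_le _ _
        _ ≤ ∑ _j : Fin n, C := Finset.sum_le_sum fun j _ => hC (y j)
        _ = n * C := by simp [mul_comm]
    have MP := measurePreserving_piFinSuccAbove (fun _ : Fin (n + 1) => μ) 0
    set e := MeasurableEquiv.piFinSuccAbove (fun _ : Fin (n + 1) => Z) 0 with he
    set G : Z × (Fin n → Z) → ℝ := fun q => ‖h q.1 + S q.2‖ ^ 2 with hGdef
    have hFeq : ∀ β : Fin (n + 1) → Z, ‖∑ i, h (β i)‖ ^ 2 = G (e β) := by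
      intro β
      have : (∑ i, h (β i)) = h (β 0) + ∑ j : Fin n, h (β (Fin.succAbove 0 j)) := by
        rw [Fin.sum_univ_succAbove (fun i => h (β i)) 0]
      rw [this]
      rfl
    have step1 : ∫ β, ‖∑ i, h (β i)‖ ^ 2 ∂(Measure.pi fun _ : Fin (n + 1) => μ)
        = ∫ q, G q ∂(μ.prod πn) := by
      rw [show (fun β : Fin (n+1) → Z => ‖∑ i, h (β i)‖ ^ 2) = fun β => G (e β) from
        funext hFeq]
      exact MP.integral_comp' G
    -- expand G
    have hGmeas : Measurable G := by
      have : Measurable fun q : Z × (Fin n → Z) => h q.1 + S q.2 :=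
        (hm.comp measurable_fst).add (hS_meas.comp measurable_snd)
      exact (this.norm.pow_const 2)
    haveI : IsProbabilityMeasure (μ.prod πn) := by infer_instance
    have hkey : ∀ q : Z × (Fin n → Z),
        G q = ‖h q.1‖ ^ 2 + 2 * ⟪h q.1, S q.2⟫ + ‖S q.2‖ ^ 2 := by
      intro q
      rw [hGdef]
      simp only
      rw [← real_inner_self_eq_norm_sq, ← real_inner_self_eq_norm_sq,
        ← real_inner_self_eq_norm_sq, inner_add_add_self,
        real_inner_comm (S q.2) (h q.1)]
      ring
    have hi1 : Integrable (fun q : Z × (Fin n → Z) => ‖h q.1‖ ^ 2) (μ.prod πn) := by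
      refine aux_int _ (((hm.comp measurable_fst).norm.pow_const 2).aestronglyMeasurable)
        (C ^ 2) ?_
      intro q
      have := hC q.1
      simp only [norm_pow, norm_norm]
      exact pow_le_pow_left₀ (norm_nonneg _) this 2
    have hi2 : Integrable (fun q : Z × (Fin n → Z) => 2 * ⟪h q.1, S q.2⟫) (μ.prod πn) := by
      refine aux_int _ ?_ (2 * (C * (n * C))) ?_
      · exact (((hm.comp measurable_fst).inner (hS_meas.comp measurable_snd)).const_mul
          2).aestronglyMeasurable
      · intro q
        have h1 := abs_real_inner_le_norm (h q.1) (S q.2)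
        have h2 : ‖h q.1‖ * ‖S q.2‖ ≤ C * (n * C) := by
          apply mul_le_mul (hC q.1) (hSbound q.2) (norm_nonneg _) (le_trans (norm_nonneg _) (hC q.1))
        rw [norm_mul, Real.norm_ofNat, Real.norm_eq_abs]
        nlinarith [abs_nonneg ⟪h q.1, S q.2⟫]
    have hi3 : Integrable (fun q : Z × (Fin n → Z) => ‖S q.2‖ ^ 2) (μ.prod πn) := by
      refine aux_int _ (((hS_meas.comp measurable_snd).norm.pow_const 2).aestronglyMeasurable)
        ((n * C) ^ 2) ?_
      intro q
      simp only [norm_pow, norm_norm]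
      exact pow_le_pow_left₀ (norm_nonneg _) (hSbound q.2) 2
    have step2 : ∫ q, G q ∂(μ.prod πn)
        = (∫ q, ‖h q.1‖ ^ 2 ∂(μ.prod πn)) + (∫ q, 2 * ⟪h q.1, S q.2⟫ ∂(μ.prod πn))
          + ∫ q, ‖S q.2‖ ^ 2 ∂(μ.prod πn) := by
      rw [show G = fun q => ‖h q.1‖ ^ 2 + 2 * ⟪h q.1, S q.2⟫ + ‖S q.2‖ ^ 2 from funext hkey]
      rw [integral_add (f := fun q : Z × (Fin n → Z) => ‖h q.1‖ ^ 2 + 2 * ⟪h q.1, S q.2⟫)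
        (g := fun q : Z × (Fin n → Z) => ‖S q.2‖ ^ 2) (hi1.add hi2) hi3,
        integral_add hi1 hi2]
    have A : ∫ q, ‖h q.1‖ ^ 2 ∂(μ.prod πn) = ∫ z, ‖h z‖ ^ 2 ∂μ := by
      rw [integral_prod _ hi1]
      simp
    have B : ∫ q, 2 * ⟪h q.1, S q.2⟫ ∂(μ.prod πn) = 0 := by
      rw [integral_prod_symm _ hi2]
      have : ∀ y, ∫ z, 2 * ⟪h z, S y⟫ ∂μ = 0 := by
        intro y
        rw [integral_const_mul]
        rw [show (fun z => ⟪h z, S y⟫) = fun z => ⟪S y, h z⟫ by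
          funext z; rw [real_inner_comm]]
        rw [integral_inner (aux_int h hm.aestronglyMeasurable C hC) (S y), h0]
        simp
      simp only [this, integral_zero]
    have Cc : ∫ q, ‖S q.2‖ ^ 2 ∂(μ.prod πn) = n * ∫ z, ‖h z‖ ^ 2 ∂μ := by
      rw [integral_prod _ hi3]
      simp only [integral_const, measure_univ, ENNReal.toReal_one, probReal_univ, one_smul]
      exact ih
    rw [step1, step2, A, B, Cc]
    push_cast
    ring

lemma aux_fderiv_coord_meas (p : ℕ) {Z : Type*} [MeasurableSpace Z]
    (ℓ : EuclideanSpace ℝ (Fin p) → Z → ℝ) (hmeas : Measurable (Function.uncurry ℓ))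
    (hdiff : ∀ z, Differentiable ℝ (fun w => ℓ w z)) (w v : EuclideanSpace ℝ (Fin p)) :
    Measurable fun z => fderiv ℝ (fun w' => ℓ w' z) w v := by
  have hq : ∀ n : ℕ, Measurable fun z =>
      ((n : ℝ) + 1) * (ℓ (w + ((n : ℝ) + 1)⁻¹ • v) z - ℓ w z) := by
    intro n
    have h1 : Measurable fun z => ℓ (w + ((n : ℝ) + 1)⁻¹ • v) z :=
      hmeas.comp (measurable_const.prodMk measurable_id)
    have h2 : Measurable fun z => ℓ w z :=
      hmeas.comp (measurable_const.prodMk measurable_id)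
    exact (h1.sub h2).const_mul _
  apply measurable_of_tendsto_metrizable hq
  rw [tendsto_pi_nhds]
  intro z
  -- the difference quotient tends to the directional derivative
  have hφ : HasDerivAt (fun t : ℝ => ℓ (w + t • v) z) (fderiv ℝ (fun w' => ℓ w' z) w v) 0 := by
    have hline : HasDerivAt (fun t : ℝ => w + t • v) v 0 := by
      simpa using ((hasDerivAt_id (0:ℝ)).smul_const v).const_add w
    have hf : HasFDerivAt (fun w' => ℓ w' z) (fderiv ℝ (fun w' => ℓ w' z) w) (w + (0:ℝ) • v) := by
      rw [show w + (0:ℝ) • v = w by simp]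
      exact ((hdiff z) w).hasFDerivAt
    exact hf.comp_hasDerivAt 0 hline
  have hslope := hasDerivAt_iff_tendsto_slope.1 hφ
  have hseq : Filter.Tendsto (fun n : ℕ => ((n : ℝ) + 1)⁻¹) Filter.atTop (nhdsWithin 0 {(0:ℝ)}ᶜ) := by
    rw [tendsto_nhdsWithin_iff]
    constructor
    · simpa only [one_div] using tendsto_one_div_add_atTop_nhds_zero_nat (𝕜 := ℝ)
    · refine Filter.Eventually.of_forall fun n => ?_
      simp only [Set.mem_compl_iff, Set.mem_singleton_iff]
      exact ne_of_gt (by positivity)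
  have := hslope.comp hseq
  have heq : ∀ n : ℕ, slope (fun t : ℝ => ℓ (w + t • v) z) 0 (((n : ℝ) + 1)⁻¹)
      = ((n : ℝ) + 1) * (ℓ (w + ((n : ℝ) + 1)⁻¹ • v) z - ℓ w z) := by
    intro n
    rw [slope_def_field]
    simp only [zero_smul, add_zero, sub_zero]
    rw [div_eq_inv_mul, inv_inv]
  refine this.congr fun n => (heq n)

lemma aux_grad_meas (p : ℕ) {Z : Type*} [MeasurableSpace Z]
    (ℓ : EuclideanSpace ℝ (Fin p) → Z → ℝ) (hmeas : Measurable (Function.uncurry ℓ))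
    (hdiff : ∀ z, Differentiable ℝ (fun w => ℓ w z)) (w : EuclideanSpace ℝ (Fin p)) :
    Measurable fun z => gradient (fun w' => ℓ w' z) w := by
  set b := EuclideanSpace.basisFun (Fin p) ℝ with hb
  have hgrad_inner : ∀ z u, ⟪gradient (fun w' => ℓ w' z) w, u⟫
      = fderiv ℝ (fun w' => ℓ w' z) w u := by
    intro z u
    have h1 := ((hdiff z) w).hasGradientAt
    have h2 := ((hdiff z) w).hasFDerivAt
    have h3 := h1.hasFDerivAt.unique h2
    rw [← h3, InnerProductSpace.toDual_apply_apply]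
  have hrep : (fun z => gradient (fun w' => ℓ w' z) w)
      = fun z => ∑ k : Fin p, (fderiv ℝ (fun w' => ℓ w' z) w (b k)) • (b k : EuclideanSpace ℝ (Fin p)) := by
    funext z
    rw [← OrthonormalBasis.sum_repr b (gradient (fun w' => ℓ w' z) w)]
    congr 1
    funext k
    rw [OrthonormalBasis.repr_apply_apply, real_inner_comm, hgrad_inner]
  rw [hrep]
  exact Finset.measurable_sum univ fun k _ =>
    (aux_fderiv_coord_meas p ℓ hmeas hdiff w (b k)).smul_const _

lemma aux_grad_add {f g : E → ℝ} {a c x : E}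
    (hf : HasGradientAt f a x) (hg : HasGradientAt g c x) :
    HasGradientAt (fun y => f y + g y) (a + c) x := by
  rw [hasGradientAt_iff_hasFDerivAt] at *
  rw [map_add]; exact hf.add hg

lemma aux_cont_of_lip (g : E → E) (K : ℝ)
    (h : ∀ x y, ‖g x - g y‖ ≤ K * ‖x - y‖) : Continuous g := by
  have : LipschitzWith (Real.toNNReal K) g := by
    apply LipschitzWith.of_dist_le_mul
    intro x y
    rw [dist_eq_norm, dist_eq_norm]
    refine (h x y).trans (mul_le_mul_of_nonneg_right ?_ (norm_nonneg _))
    exact Real.le_coe_toNNReal K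
  exact this.continuous

lemma aux_quad {m ε N r : ℝ} (hm : 0 < m) (hε : 0 ≤ ε) (hN : 0 ≤ N) (hr : 0 ≤ r)
    (h : m / 2 * r ^ 2 ≤ ε + N * r) : r ^ 2 ≤ 8 / m ^ 2 * N ^ 2 + 4 * ε / m := by
  have h2 : m ^ 2 * r ^ 2 ≤ 4 * N ^ 2 + 4 * ε * m := by
    nlinarith [sq_nonneg (m * r - 2 * N), mul_le_mul_of_nonneg_left h hm.le]
  have hm2 : 0 < m ^ 2 := by positivity
  rw [div_mul_eq_mul_div, div_add_div _ _ (ne_of_gt hm2) (ne_of_gt hm), le_div_iff₀ (by positivity)]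
  nlinarith [h2, hm.le, hε, sq_nonneg N]

end Aux

section Main
open InnerProductSpace
set_option maxHeartbeats 4000000

/-- Second-moment gradient bound for the minibatch stochastic proximal point
oracle: with a `G`-Lipschitz, `L`-smooth loss, `0 < η < 1/L`, `0 ≤ ε ≤ G²η/(8b²)`, and `w_B` a
measurable selection of `ε`-inexact minimizers of `w ↦ R_B(w) + ‖w − w₀‖²/(2η)` over an i.i.d.
minibatch `B ∼ 𝒟^b`, one has `E_B‖∇R(w_B) − E_B[∇R(w_B)]‖² ≤ 25L²G²η²/((1 − ηL)²b)`. -/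
theorem minibatch_prox_gradient_variance_bound
    {Z : Type*} [MeasurableSpace Z] (p b : ℕ) (hb : 1 ≤ b)
    (μ : Measure Z) [IsProbabilityMeasure μ]
    (G L η ε : ℝ) (hG : 0 ≤ G) (hL : 0 < L)
    (hη0 : 0 < η) (hηL : η < 1 / L)
    (hε0 : 0 ≤ ε) (hε : ε ≤ G ^ 2 * η / (8 * b ^ 2))
    (ℓ : EuclideanSpace ℝ (Fin p) → Z → ℝ)
    (hmeas : Measurable (Function.uncurry ℓ))
    (hlip : ∀ z w w', |ℓ w z - ℓ w' z| ≤ G * ‖w - w'‖)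
    (hdiff : ∀ z, Differentiable ℝ (fun w => ℓ w z))
    (hsmooth : ∀ z w w',
      ‖gradient (fun w => ℓ w z) w - gradient (fun w => ℓ w z) w'‖ ≤ L * ‖w - w'‖)
    (hint : ∀ w, Integrable (fun z => ℓ w z) μ)
    (R : EuclideanSpace ℝ (Fin p) → ℝ) (hR : ∀ w, R w = ∫ z, ℓ w z ∂μ)
    (w0 : EuclideanSpace ℝ (Fin p))
    (wB : (Fin b → Z) → EuclideanSpace ℝ (Fin p)) (hwBmeas : Measurable wB)
    (hinexact : ∀ β : Fin b → Z,
      ((b : ℝ)⁻¹ * ∑ i, ℓ (wB β) (β i)) + ‖wB β - w0‖ ^ 2 / (2 * η)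
        ≤ (⨅ w, ((b : ℝ)⁻¹ * ∑ i, ℓ w (β i)) + ‖w - w0‖ ^ 2 / (2 * η)) + ε) :
    ∫ β, ‖gradient R (wB β)
        - ∫ β', gradient R (wB β') ∂(Measure.pi fun _ : Fin b => μ)‖ ^ 2
        ∂(Measure.pi fun _ : Fin b => μ)
      ≤ 25 * L ^ 2 * G ^ 2 * η ^ 2 / ((1 - η * L) ^ 2 * b) := by
  classical
  set π : Measure (Fin b → Z) := Measure.pi fun _ : Fin b => μ with hπ
  haveI : IsProbabilityMeasure π := by rw [hπ]; infer_instance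
  have hbR : (0:ℝ) < b := by exact_mod_cast Nat.lt_of_lt_of_le Nat.zero_lt_one hb
  have hbne : (b:ℝ) ≠ 0 := ne_of_gt hbR
  have hA : 0 < 1 - η * L := by
    have : η * L < 1 := (lt_div_iff₀ hL).1 hηL
    linarith
  set m : ℝ := 1 / η - L with hmdef
  have hm : 0 < m := by
    rw [hmdef]
    have : L < 1 / η := by
      rw [lt_div_iff₀ hη0]
      calc L * η = η * L := mul_comm L η
        _ < 1 := by linarith
    linarith
  have hmA : m = (1 - η * L) / η := by rw [hmdef]; field_simp
  -- abbreviation for the pointwise gradients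
  set gl : Z → EuclideanSpace ℝ (Fin p) → EuclideanSpace ℝ (Fin p) := fun z w => gradient (fun w' => ℓ w' z) w with hgl
  -- Part I : facts about the pointwise gradients and the gradient of R
  have hglmeas : ∀ w : EuclideanSpace ℝ (Fin p), Measurable fun z => gl z w := fun w =>
    aux_grad_meas p ℓ hmeas hdiff w
  have hgl_fderiv : ∀ z w, (toDual ℝ (EuclideanSpace ℝ (Fin p))) (gl z w) = fderiv ℝ (fun w' => ℓ w' z) w := by
    intro z w
    exact ((hdiff z) w).hasGradientAt.hasFDerivAt.unique ((hdiff z) w).hasFDerivAt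
  have hgl_norm : ∀ z w, ‖gl z w‖ ≤ G := by
    intro z w
    have h1 : ‖gl z w‖ = ‖(toDual ℝ (EuclideanSpace ℝ (Fin p))) (gl z w)‖ := ((toDual ℝ (EuclideanSpace ℝ (Fin p))).norm_map _).symm
    rw [h1, hgl_fderiv z w]
    refine norm_fderiv_le_of_lip' ℝ hG ?_
    refine Filter.Eventually.of_forall fun x => ?_
    have := hlip z x w
    simpa [Real.norm_eq_abs] using this
  have hglint : ∀ w : EuclideanSpace ℝ (Fin p), Integrable (fun z => gl z w) μ := fun w =>
    aux_int _ (hglmeas w).aestronglyMeasurable G (fun z => hgl_norm z w)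
  have hRgrad : ∀ w : EuclideanSpace ℝ (Fin p), HasGradientAt R (∫ z, gl z w ∂μ) w := by
    intro w
    have key : HasFDerivAt (fun w' => ∫ z, ℓ w' z ∂μ)
        (∫ z, fderiv ℝ (fun w'' => ℓ w'' z) w ∂μ) w := by
      apply hasFDerivAt_integral_of_dominated_of_fderiv_le
        (F' := fun x z => fderiv ℝ (fun w'' => ℓ w'' z) x)
        (bound := fun _ => G) (s := Metric.ball w 1) (Metric.ball_mem_nhds w one_pos)
      · exact Filter.Eventually.of_forall fun x =>
          (hmeas.comp (measurable_const.prodMk measurable_id)).aestronglyMeasurable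
      · exact hint w
      · have : (fun z => fderiv ℝ (fun w'' => ℓ w'' z) w)
            = fun z => (toDual ℝ (EuclideanSpace ℝ (Fin p))) (gl z w) := funext fun z => (hgl_fderiv z w).symm
        rw [this]
        exact (toDual ℝ (EuclideanSpace ℝ (Fin p))).continuous.comp_aestronglyMeasurable
          (hglmeas w).aestronglyMeasurable
      · refine Filter.Eventually.of_forall fun z => fun x _ => ?_
        rw [← hgl_fderiv z x, (toDual ℝ (EuclideanSpace ℝ (Fin p))).norm_map]
        exact hgl_norm z x
      · exact integrable_const G
      · exact Filter.Eventually.of_forall fun z => fun x _ => ((hdiff z) x).hasFDerivAt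
    have hfun : (fun w' => ∫ z, ℓ w' z ∂μ) = R := funext fun w' => (hR w').symm
    rw [hfun] at key
    rw [hasGradientAt_iff_hasFDerivAt]
    have hcomm : ∫ z, fderiv ℝ (fun w'' => ℓ w'' z) w ∂μ = (toDual ℝ (EuclideanSpace ℝ (Fin p))) (∫ z, gl z w ∂μ) := by
      have h1 : (fun z => fderiv ℝ (fun w'' => ℓ w'' z) w)
          = fun z => (toDual ℝ (EuclideanSpace ℝ (Fin p))).toLinearIsometry (gl z w) := by
        funext z
        rw [← hgl_fderiv z w]; rfl
      rw [h1, LinearIsometry.integral_comp_comm]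
      rfl
    rwa [hcomm] at key
  have hgradR : ∀ w : EuclideanSpace ℝ (Fin p), gradient R w = ∫ z, gl z w ∂μ := fun w => (hRgrad w).gradient
  have hRdiff : ∀ w : EuclideanSpace ℝ (Fin p), DifferentiableAt ℝ R w := fun w => (hRgrad w).differentiableAt
  have hgradR_lip : ∀ x y : EuclideanSpace ℝ (Fin p), ‖gradient R x - gradient R y‖ ≤ L * ‖x - y‖ := by
    intro x y
    rw [hgradR, hgradR, ← integral_sub (hglint x) (hglint y)]
    calc ‖∫ z, (gl z x - gl z y) ∂μ‖ ≤ ∫ z, ‖gl z x - gl z y‖ ∂μ := norm_integral_le_integral_norm _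
      _ ≤ ∫ _z, L * ‖x - y‖ ∂μ := by
          apply integral_mono_of_nonneg (Filter.Eventually.of_forall fun z => norm_nonneg _)
            (integrable_const _) (Filter.Eventually.of_forall fun z => hsmooth z x y)
      _ = L * ‖x - y‖ := by simp
  have hgradR_cont : Continuous (gradient R) := aux_cont_of_lip _ L hgradR_lip
  have hgradR_norm : ∀ w : EuclideanSpace ℝ (Fin p), ‖gradient R w‖ ≤ G := by
    intro w
    rw [hgradR]
    calc ‖∫ z, gl z w ∂μ‖ ≤ ∫ z, ‖gl z w‖ ∂μ := norm_integral_le_integral_norm _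
      _ ≤ ∫ _z, G ∂μ := integral_mono_of_nonneg
          (Filter.Eventually.of_forall fun z => norm_nonneg _) (integrable_const _)
          (Filter.Eventually.of_forall fun z => hgl_norm z w)
      _ = G := by simp
  have hRlipc : ∀ x y : EuclideanSpace ℝ (Fin p), |R x - R y| ≤ G * ‖x - y‖ := by
    intro x y
    rw [hR x, hR y, ← integral_sub (hint x) (hint y)]
    calc |∫ z, (ℓ x z - ℓ y z) ∂μ| ≤ ∫ z, |ℓ x z - ℓ y z| ∂μ := by
          simpa [Real.norm_eq_abs] using
            norm_integral_le_integral_norm (fun z => ℓ x z - ℓ y z) (μ := μ)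
      _ ≤ ∫ _z, G * ‖x - y‖ ∂μ := integral_mono_of_nonneg
          (Filter.Eventually.of_forall fun z => abs_nonneg _)
          (integrable_const _) (Filter.Eventually.of_forall fun z => hlip z x y)
      _ = G * ‖x - y‖ := by simp

  -- Part II : the population proximal problem and its minimizer
  set Qpop : EuclideanSpace ℝ (Fin p) → ℝ := fun w => R w + ‖w - w0‖ ^ 2 / (2 * η) with hQpopdef
  set Gpop : EuclideanSpace ℝ (Fin p) → EuclideanSpace ℝ (Fin p) :=
    fun w => gradient R w + η⁻¹ • (w - w0) with hGpopdef
  have hquad : ∀ x : EuclideanSpace ℝ (Fin p),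
      HasGradientAt (fun w => ‖w - w0‖ ^ 2 / (2 * η)) (η⁻¹ • (x - w0)) x := by
    intro x
    have h1 : HasFDerivAt (fun w : EuclideanSpace ℝ (Fin p) => w - w0)
        (ContinuousLinearMap.id ℝ (EuclideanSpace ℝ (Fin p))) x := (hasFDerivAt_id x).sub_const w0
    have h2 := (h1.inner ℝ h1).const_mul ((2 * η)⁻¹)
    have hfun : (fun w : EuclideanSpace ℝ (Fin p) => ‖w - w0‖ ^ 2 / (2 * η))
        = fun w => (2 * η)⁻¹ * ⟪w - w0, w - w0⟫ := by
      funext w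
      rw [real_inner_self_eq_norm_sq]
      ring
    rw [hasGradientAt_iff_hasFDerivAt, hfun]
    refine h2.congr_fderiv ?_
    refine (ContinuousLinearMap.ext fun y => ?_).symm
    simp only [ContinuousLinearMap.smul_apply, ContinuousLinearMap.coe_comp', Function.comp_apply,
      ContinuousLinearMap.prod_apply, ContinuousLinearMap.coe_id', id_eq,
      fderivInnerCLM_apply, InnerProductSpace.toDual_apply_apply, real_inner_smul_left]
    rw [real_inner_comm y (x - w0)]
    have hηne : η ≠ 0 := ne_of_gt hη0
    field_simp
    rw [smul_eq_mul, one_add_one_eq_two]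
    field_simp
  have hQpop_grad : ∀ x, HasGradientAt Qpop (Gpop x) x := fun x =>
    aux_grad_add (hRgrad x).differentiableAt.hasGradientAt (hquad x)
  have hQpop_cont : Continuous Qpop := by
    apply Continuous.add
    · exact Differentiable.continuous (fun w => hRdiff w)
    · exact ((continuous_id.sub continuous_const).norm.pow 2).div_const (2 * η)
  have hmono : ∀ (gr : EuclideanSpace ℝ (Fin p) → EuclideanSpace ℝ (Fin p)),
      (∀ x y, ‖gr x - gr y‖ ≤ L * ‖x - y‖) → ∀ x y,
      m * ‖x - y‖ ^ 2 ≤ ⟪(gr x + η⁻¹ • (x - w0)) - (gr y + η⁻¹ • (y - w0)), x - y⟫ := by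
    intro gr hgr x y
    have e1 : (gr x + η⁻¹ • (x - w0)) - (gr y + η⁻¹ • (y - w0))
        = (gr x - gr y) + η⁻¹ • (x - y) := by module
    rw [e1, inner_add_left, real_inner_smul_left, real_inner_self_eq_norm_sq]
    have h2 : -(L * ‖x - y‖ ^ 2) ≤ ⟪gr x - gr y, x - y⟫ := by
      have hcs := abs_real_inner_le_norm (gr x - gr y) (x - y)
      have hb := mul_le_mul_of_nonneg_right (hgr x y) (norm_nonneg (x - y))
      have := neg_abs_le ⟪gr x - gr y, x - y⟫
      nlinarith [this, hcs, hb]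
    have hinveq : η⁻¹ = 1 / η := (one_div η).symm
    rw [hmdef]
    nlinarith [h2]
  -- existence of the population minimizer
  obtain ⟨wbar, hwbar_mem, hwbar_min⟩ :=
    (isCompact_closedBall w0 (2 * η * G + 1)).exists_isMinOn
      ⟨w0, by simp [Metric.mem_closedBall]; positivity⟩ hQpop_cont.continuousOn
  have hwbar_glob : ∀ w, Qpop wbar ≤ Qpop w := by
    intro w
    by_cases hw : w ∈ Metric.closedBall w0 (2 * η * G + 1)
    · exact hwbar_min hw
    · have h1 : Qpop wbar ≤ Qpop w0 :=
        hwbar_min (by simp [Metric.mem_closedBall]; positivity)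
    
      have hd : 2 * η * G + 1 < ‖w - w0‖ := by
        simpa [Metric.mem_closedBall, dist_eq_norm, not_le] using hw
      have h2 : Qpop w0 ≤ Qpop w := by
        rw [hQpopdef]
        simp only [sub_self, norm_zero]
        have habs := (abs_le.1 (hRlipc w0 w)).2
        have hnn : (0:ℝ) ≤ ‖w - w0‖ := norm_nonneg _
        have hsq : ‖w - w0‖ ^ 2 = ‖w - w0‖ * ‖w - w0‖ := sq ‖w - w0‖
        have hwn : ‖w0 - w‖ = ‖w - w0‖ := norm_sub_rev _ _
        rw [hwn] at habs
        rw [zero_pow (by norm_num), zero_div]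
        have ht0 : (0:ℝ) < ‖w - w0‖ := lt_of_le_of_lt (by positivity) hd
        have hkey : G * ‖w - w0‖ ≤ ‖w - w0‖ ^ 2 / (2 * η) := by
          rw [le_div_iff₀ (by positivity : (0:ℝ) < 2 * η)]
          nlinarith [mul_lt_mul_of_pos_left hd ht0, hη0, hG, ht0,
            mul_nonneg (mul_nonneg hη0.le hG) hnn]
        linarith [habs, hkey]
      linarith
  have hGpop_wbar : Gpop wbar = 0 := by
    have hloc : IsLocalMin Qpop wbar := Filter.Eventually.of_forall hwbar_glob
    have h0 := hloc.hasFDerivAt_eq_zero (hQpop_grad wbar).hasFDerivAt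
    have : (toDual ℝ (EuclideanSpace ℝ (Fin p))) (Gpop wbar)
        = (toDual ℝ (EuclideanSpace ℝ (Fin p))) 0 := by rw [h0, map_zero]
    exact (toDual ℝ (EuclideanSpace ℝ (Fin p))).injective this
  have hc_eq : η⁻¹ • (wbar - w0) = -(gradient R wbar) := by
    have := hGpop_wbar
    rw [hGpopdef] at this
    simp only at this
    linear_combination (norm := module) this

  -- Part III : the minibatch proximal objectives
  set c : EuclideanSpace ℝ (Fin p) := gradient R wbar with hcdef
  set GB : (Fin b → Z) → EuclideanSpace ℝ (Fin p) → EuclideanSpace ℝ (Fin p) :=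
    fun β x => (b:ℝ)⁻¹ • ∑ i, gl (β i) x + η⁻¹ • (x - w0) with hGBdef
  have hsum_grad : ∀ (β : Fin b → Z) (x : EuclideanSpace ℝ (Fin p)),
      HasGradientAt (fun w => (b:ℝ)⁻¹ * ∑ i, ℓ w (β i)) ((b:ℝ)⁻¹ • ∑ i, gl (β i) x) x := by
    intro β x
    rw [hasGradientAt_iff_hasFDerivAt]
    have hs : HasFDerivAt (fun w => ∑ i : Fin b, ℓ w (β i))
        (∑ i : Fin b, fderiv ℝ (fun w' => ℓ w' (β i)) x) x :=
      HasFDerivAt.fun_sum fun i _ => ((hdiff (β i)) x).hasFDerivAt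
    have h2 := hs.const_mul ((b:ℝ)⁻¹)
    have h3 : (toDual ℝ (EuclideanSpace ℝ (Fin p))) ((b:ℝ)⁻¹ • ∑ i, gl (β i) x)
        = (b:ℝ)⁻¹ • ∑ i : Fin b, fderiv ℝ (fun w' => ℓ w' (β i)) x := by
      rw [(toDual ℝ (EuclideanSpace ℝ (Fin p))).map_smul, map_sum]
      congr 1
      exact Finset.sum_congr rfl fun i _ => hgl_fderiv (β i) x
    rw [h3]
    exact h2
  have hQβ_grad : ∀ (β : Fin b → Z) (x : EuclideanSpace ℝ (Fin p)),
      HasGradientAt (fun w => ((b : ℝ)⁻¹ * ∑ i, ℓ w (β i)) + ‖w - w0‖ ^ 2 / (2 * η))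
        (GB β x) x :=
    fun β x => aux_grad_add (hsum_grad β x) (hquad x)
  have hGRβ_lip : ∀ (β : Fin b → Z) (x y : EuclideanSpace ℝ (Fin p)),
      ‖(b:ℝ)⁻¹ • ∑ i, gl (β i) x - (b:ℝ)⁻¹ • ∑ i, gl (β i) y‖ ≤ L * ‖x - y‖ := by
    intro β x y
    rw [← smul_sub, norm_smul, Real.norm_eq_abs, abs_of_nonneg (inv_nonneg.2 hbR.le)]
    have h1 : ‖∑ i : Fin b, gl (β i) x - ∑ i : Fin b, gl (β i) y‖
        ≤ (b:ℝ) * (L * ‖x - y‖) := by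
      rw [← Finset.sum_sub_distrib]
      calc ‖∑ i : Fin b, (gl (β i) x - gl (β i) y)‖
          ≤ ∑ i : Fin b, ‖gl (β i) x - gl (β i) y‖ := norm_sum_le _ _
        _ ≤ ∑ _i : Fin b, L * ‖x - y‖ := Finset.sum_le_sum fun i _ => hsmooth (β i) x y
        _ = (b:ℝ) * (L * ‖x - y‖) := by simp [mul_comm]
    calc (b:ℝ)⁻¹ * ‖∑ i : Fin b, gl (β i) x - ∑ i : Fin b, gl (β i) y‖
        ≤ (b:ℝ)⁻¹ * ((b:ℝ) * (L * ‖x - y‖)) := by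
          exact mul_le_mul_of_nonneg_left h1 (inv_nonneg.2 hbR.le)
      _ = L * ‖x - y‖ := by field_simp
  have hGRβ_norm : ∀ (β : Fin b → Z) (x : EuclideanSpace ℝ (Fin p)),
      ‖(b:ℝ)⁻¹ • ∑ i, gl (β i) x‖ ≤ G := by
    intro β x
    rw [norm_smul, Real.norm_eq_abs, abs_of_nonneg (inv_nonneg.2 hbR.le)]
    have h1 : ‖∑ i : Fin b, gl (β i) x‖ ≤ (b:ℝ) * G := by
      calc ‖∑ i : Fin b, gl (β i) x‖ ≤ ∑ i : Fin b, ‖gl (β i) x‖ := norm_sum_le _ _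
        _ ≤ ∑ _i : Fin b, G := Finset.sum_le_sum fun i _ => hgl_norm (β i) x
        _ = (b:ℝ) * G := by simp [mul_comm]
    calc (b:ℝ)⁻¹ * ‖∑ i : Fin b, gl (β i) x‖ ≤ (b:ℝ)⁻¹ * ((b:ℝ) * G) :=
          mul_le_mul_of_nonneg_left h1 (inv_nonneg.2 hbR.le)
      _ = G := by field_simp
  have hGB_cont : ∀ β : Fin b → Z, Continuous (GB β) := by
    intro β
    apply aux_cont_of_lip _ (L + η⁻¹)
    intro x y
    have e1 : GB β x - GB β y
        = ((b:ℝ)⁻¹ • ∑ i, gl (β i) x - (b:ℝ)⁻¹ • ∑ i, gl (β i) y) + η⁻¹ • (x - y) := by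
      rw [hGBdef]
      simp only
      module
    rw [e1]
    calc ‖_ + η⁻¹ • (x - y)‖ ≤ ‖(b:ℝ)⁻¹ • ∑ i, gl (β i) x - (b:ℝ)⁻¹ • ∑ i, gl (β i) y‖
          + ‖η⁻¹ • (x - y)‖ := norm_add_le _ _
      _ ≤ L * ‖x - y‖ + η⁻¹ * ‖x - y‖ := by
          refine add_le_add (hGRβ_lip β x y) ?_
          rw [norm_smul, Real.norm_eq_abs, abs_of_nonneg (inv_nonneg.2 hη0.le)]
      _ = (L + η⁻¹) * ‖x - y‖ := by ring
  have hGB_mono : ∀ (β : Fin b → Z) (x y : EuclideanSpace ℝ (Fin p)),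
      m * ‖x - y‖ ^ 2 ≤ ⟪GB β x - GB β y, x - y⟫ :=
    fun β x y => hmono (fun x => (b:ℝ)⁻¹ • ∑ i, gl (β i) x) (hGRβ_lip β) x y
  have hQβ_bdd : ∀ β : Fin b → Z, BddBelow (Set.range
      fun w => ((b : ℝ)⁻¹ * ∑ i, ℓ w (β i)) + ‖w - w0‖ ^ 2 / (2 * η)) := by
    intro β
    refine ⟨(((b : ℝ)⁻¹ * ∑ i, ℓ w0 (β i)) + ‖w0 - w0‖ ^ 2 / (2 * η)) - G ^ 2 / (2 * m), ?_⟩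
    rintro q ⟨w, rfl⟩
    have hsc := aux_strong_lb _ (GB β) m (hGB_cont β) (hQβ_grad β) (hGB_mono β) w0 w
    have hGBw0 : GB β w0 = (b:ℝ)⁻¹ • ∑ i, gl (β i) w0 := by
      rw [hGBdef]; simp
    have hCS : -(G * ‖w - w0‖) ≤ ⟪GB β w0, w - w0⟫ := by
      have h1 := abs_real_inner_le_norm (GB β w0) (w - w0)
      have h2 : ‖GB β w0‖ * ‖w - w0‖ ≤ G * ‖w - w0‖ := by
        apply mul_le_mul_of_nonneg_right _ (norm_nonneg _)
        rw [hGBw0]; exact hGRβ_norm β w0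
      have h3 := neg_abs_le ⟪GB β w0, w - w0⟫
      linarith
    have hq : - (G * ‖w - w0‖) + m / 2 * ‖w - w0‖ ^ 2 ≥ - (G ^ 2 / (2 * m)) := by
      rw [ge_iff_le, neg_le_iff_add_nonneg]
      have expand : m / 2 * ‖w - w0‖ ^ 2 - G * ‖w - w0‖ + G ^ 2 / (2 * m)
          = (m * ‖w - w0‖ - G) ^ 2 / (2 * m) := by
        field_simp
        ring
      have h5 : (0:ℝ) ≤ (m * ‖w - w0‖ - G) ^ 2 / (2 * m) := by positivity
      nlinarith [h5, expand]
    linarith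
  have hkeyβ : ∀ β : Fin b → Z, ‖gradient R (wB β) - c‖ ^ 2
      ≤ L ^ 2 * (8 / m ^ 2 * ‖GB β wbar‖ ^ 2 + 4 * ε / m) := by
    intro β
    have hsc := aux_strong_lb _ (GB β) m (hGB_cont β) (hQβ_grad β) (hGB_mono β) wbar (wB β)
    have hinf_le : (⨅ w, ((b : ℝ)⁻¹ * ∑ i, ℓ w (β i)) + ‖w - w0‖ ^ 2 / (2 * η))
        ≤ ((b : ℝ)⁻¹ * ∑ i, ℓ wbar (β i)) + ‖wbar - w0‖ ^ 2 / (2 * η) :=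
      ciInf_le (hQβ_bdd β) wbar
    have hle := (hinexact β).trans (add_le_add_left hinf_le ε)
    have hCS : -(‖GB β wbar‖ * ‖wB β - wbar‖) ≤ ⟪GB β wbar, wB β - wbar⟫ := by
      have h1 := abs_real_inner_le_norm (GB β wbar) (wB β - wbar)
      have h3 := neg_abs_le ⟪GB β wbar, wB β - wbar⟫
      linarith
    have h1 : m / 2 * ‖wB β - wbar‖ ^ 2 ≤ ε + ‖GB β wbar‖ * ‖wB β - wbar‖ := by
      linarith [hsc, hle, hCS]
    have h2 := aux_quad hm hε0 (norm_nonneg (GB β wbar)) (norm_nonneg (wB β - wbar)) h1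
    have h3 : ‖gradient R (wB β) - c‖ ≤ L * ‖wB β - wbar‖ := hgradR_lip (wB β) wbar
    calc ‖gradient R (wB β) - c‖ ^ 2 ≤ (L * ‖wB β - wbar‖) ^ 2 := by
          exact pow_le_pow_left₀ (norm_nonneg _) h3 2
      _ = L ^ 2 * ‖wB β - wbar‖ ^ 2 := by ring
      _ ≤ L ^ 2 * (8 / m ^ 2 * ‖GB β wbar‖ ^ 2 + 4 * ε / m) :=
          mul_le_mul_of_nonneg_left h2 (sq_nonneg L)
  -- rewrite GB β wbar as a centered sum
  have hGBwbar : ∀ β : Fin b → Z,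
      GB β wbar = (b:ℝ)⁻¹ • ∑ i : Fin b, (gl (β i) wbar - c) := by
    intro β
    have h1 : GB β wbar = (b:ℝ)⁻¹ • ∑ i, gl (β i) wbar + η⁻¹ • (wbar - w0) := rfl
    rw [h1, hc_eq, Finset.sum_sub_distrib, smul_sub]
    have h2 : (b:ℝ)⁻¹ • (∑ _i : Fin b, c) = c := by
      rw [Finset.sum_const, Finset.card_univ, Fintype.card_fin,
        ← Nat.cast_smul_eq_nsmul ℝ b c, smul_smul, inv_mul_cancel₀ hbne, one_smul]
    rw [h2]
    abel
  -- Part IV : integration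
  have hDmeas : Measurable fun β : Fin b → Z => gradient R (wB β) :=
    hgradR_cont.measurable.comp hwBmeas
  have hGBmeas : Measurable fun β : Fin b → Z => GB β wbar := by
    rw [hGBdef]
    simp only
    apply Measurable.add_const
    refine (Measurable.const_smul ?_ _ : Measurable ((b:ℝ)⁻¹ • fun β : Fin b → Z => ∑ i, gl (β i) wbar))
    exact Finset.measurable_sum univ fun i _ => (hglmeas wbar).comp (measurable_pi_apply i)
  have hcnorm : ‖c‖ ≤ G := hgradR_norm wbar
  have hGBnorm : ∀ β : Fin b → Z, ‖GB β wbar‖ ≤ 2 * G := by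
    intro β
    have h1 : GB β wbar = (b:ℝ)⁻¹ • ∑ i, gl (β i) wbar + η⁻¹ • (wbar - w0) := rfl
    rw [h1, hc_eq]
    calc ‖(b:ℝ)⁻¹ • ∑ i, gl (β i) wbar + -c‖
        ≤ ‖(b:ℝ)⁻¹ • ∑ i, gl (β i) wbar‖ + ‖-c‖ := norm_add_le _ _
      _ ≤ G + G := by
          refine add_le_add (hGRβ_norm β wbar) ?_
          rw [norm_neg]; exact hcnorm
      _ = 2 * G := by ring
  have int_N2 : Integrable (fun β : Fin b → Z => ‖GB β wbar‖ ^ 2) π := by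
    refine aux_int _ ((hGBmeas.norm.pow_const 2).aestronglyMeasurable) ((2*G) ^ 2) ?_
    intro β
    simp only [norm_pow, norm_norm]
    exact pow_le_pow_left₀ (norm_nonneg _) (hGBnorm β) 2
  have int_lhs : Integrable (fun β : Fin b → Z => ‖gradient R (wB β) - c‖ ^ 2) π := by
    refine aux_int _ (((hDmeas.sub measurable_const).norm.pow_const 2).aestronglyMeasurable)
      ((2*G) ^ 2) ?_
    intro β
    simp only [norm_pow, norm_norm]
    refine pow_le_pow_left₀ (norm_nonneg _) ?_ 2
    calc ‖gradient R (wB β) - c‖ ≤ ‖gradient R (wB β)‖ + ‖c‖ := norm_sub_le _ _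
      _ ≤ G + G := add_le_add (hgradR_norm _) hcnorm
      _ = 2 * G := by ring
  have stepA : ∫ β, ‖gradient R (wB β) - ∫ β', gradient R (wB β') ∂π‖ ^ 2 ∂π
      ≤ ∫ β, ‖gradient R (wB β) - c‖ ^ 2 ∂π :=
    aux_var_le π (fun β => gradient R (wB β)) hDmeas.aestronglyMeasurable G
      (fun β => hgradR_norm _) c
  have stepB : ∫ β, ‖gradient R (wB β) - c‖ ^ 2 ∂π
      ≤ ∫ β, (L ^ 2 * (8 / m ^ 2 * ‖GB β wbar‖ ^ 2 + 4 * ε / m)) ∂π := by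
    refine integral_mono int_lhs ?_ hkeyβ
    exact (((int_N2.const_mul (8 / m ^ 2)).add (integrable_const _)).const_mul (L ^ 2))
  have stepC : ∫ β, (L ^ 2 * (8 / m ^ 2 * ‖GB β wbar‖ ^ 2 + 4 * ε / m)) ∂π
      = L ^ 2 * (8 / m ^ 2 * (∫ β, ‖GB β wbar‖ ^ 2 ∂π) + 4 * ε / m) := by
    rw [integral_const_mul]
    congr 1
    rw [integral_add (int_N2.const_mul (8 / m ^ 2)) (integrable_const _),
      integral_const_mul, integral_const]
    simp
  have hsum0 : ∫ z, (gl z wbar - c) ∂μ = 0 := by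
    rw [integral_sub (hglint wbar) (integrable_const c), integral_const]
    simp [hcdef, hgradR wbar]
  have stepD : ∫ β, ‖GB β wbar‖ ^ 2 ∂π ≤ G ^ 2 / b := by
    have hsum := aux_sum_sq μ (fun z => gl z wbar - c)
      ((hglmeas wbar).sub measurable_const) (2*G)
      (fun z => by
        calc ‖gl z wbar - c‖ ≤ ‖gl z wbar‖ + ‖c‖ := norm_sub_le _ _
          _ ≤ G + G := add_le_add (hgl_norm z wbar) hcnorm
          _ = 2 * G := by ring) hsum0 b
    have hGB2 : ∀ β : Fin b → Z, ‖GB β wbar‖ ^ 2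
        = ((b:ℝ)⁻¹) ^ 2 * ‖∑ i : Fin b, (gl (β i) wbar - c)‖ ^ 2 := by
      intro β
      rw [hGBwbar β, norm_smul, Real.norm_eq_abs, abs_of_nonneg (inv_nonneg.2 hbR.le), mul_pow]
    have hσ : ∫ z, ‖gl z wbar - c‖ ^ 2 ∂μ ≤ G ^ 2 := by
      have h1 := aux_var_le μ (fun z => gl z wbar) (hglmeas wbar).aestronglyMeasurable G
        (fun z => hgl_norm z wbar) 0
      have h2 : ∫ y, gl y wbar ∂μ = c := by rw [hcdef, hgradR wbar]
      rw [h2] at h1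
      refine h1.trans ?_
      have h3 : ∫ z, ‖gl z wbar - 0‖ ^ 2 ∂μ = ∫ z, ‖gl z wbar‖ ^ 2 ∂μ := by simp
      rw [h3]
      calc ∫ z, ‖gl z wbar‖ ^ 2 ∂μ ≤ ∫ _z, G ^ 2 ∂μ := by
            refine integral_mono ?_ (integrable_const _) ?_
            · exact aux_int _ (((hglmeas wbar).norm.pow_const 2).aestronglyMeasurable) (G ^ 2)
                (fun z => by
                  simp only [norm_pow, norm_norm]
                  exact pow_le_pow_left₀ (norm_nonneg _) (hgl_norm z wbar) 2)
            · intro z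
              exact pow_le_pow_left₀ (norm_nonneg _) (hgl_norm z wbar) 2
        _ = G ^ 2 := by simp
    calc ∫ β, ‖GB β wbar‖ ^ 2 ∂π
        = ∫ β, ((b:ℝ)⁻¹) ^ 2 * ‖∑ i : Fin b, (gl (β i) wbar - c)‖ ^ 2 ∂π := by
          exact integral_congr_ae (Filter.Eventually.of_forall hGB2)
      _ = ((b:ℝ)⁻¹) ^ 2 * ∫ β, ‖∑ i : Fin b, (gl (β i) wbar - c)‖ ^ 2 ∂π :=
          integral_const_mul _ _
      _ = ((b:ℝ)⁻¹) ^ 2 * ((b:ℝ) * ∫ z, ‖gl z wbar - c‖ ^ 2 ∂μ) := by rw [hsum]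
      _ = (b:ℝ)⁻¹ * ∫ z, ‖gl z wbar - c‖ ^ 2 ∂μ := by
          field_simp
      _ ≤ (b:ℝ)⁻¹ * G ^ 2 := mul_le_mul_of_nonneg_left hσ (inv_nonneg.2 hbR.le)
      _ = G ^ 2 / b := by rw [inv_mul_eq_div]

  -- final arithmetic
  have hb1 : (1:ℝ) ≤ b := by exact_mod_cast hb
  have hA1 : 1 - η * L ≤ 1 := by nlinarith [mul_pos hη0 hL]
  have hεb' : ε * (8 * (b:ℝ) ^ 2) ≤ G ^ 2 * η := (le_div_iff₀ (by positivity)).1 hε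
  have S : 8 / m ^ 2 * (G ^ 2 / (b:ℝ)) + 4 * ε / m
      ≤ 25 * G ^ 2 * η ^ 2 / ((1 - η * L) ^ 2 * (b:ℝ)) := by
    rw [hmA, ← sub_nonneg]
    have hηne : η ≠ 0 := ne_of_gt hη0
    have hAne : (1 - η * L) ≠ 0 := ne_of_gt hA
    have expr : 25 * G ^ 2 * η ^ 2 / ((1 - η * L) ^ 2 * (b:ℝ))
          - (8 / ((1 - η * L) / η) ^ 2 * (G ^ 2 / (b:ℝ)) + 4 * ε / ((1 - η * L) / η))
        = (17 * G ^ 2 * η ^ 2 - 4 * ε * η * ((1 - η * L) * (b:ℝ)))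
          / ((1 - η * L) ^ 2 * (b:ℝ)) := by
      field_simp
      ring
    rw [expr]
    apply div_nonneg _ (by positivity)
    have hab : (1 - η * L) * (b:ℝ) ≤ (b:ℝ) ^ 2 := by nlinarith [hb1, hA1, hbR]
    have h4 : 4 * ε * η * ((1 - η * L) * (b:ℝ)) ≤ 4 * ε * η * ((b:ℝ) ^ 2) :=
      mul_le_mul_of_nonneg_left hab (by positivity)
    have h5 : 4 * ε * η * ((b:ℝ) ^ 2) = (η / 2) * (ε * (8 * (b:ℝ) ^ 2)) := by ring
    have h6 : (η / 2) * (ε * (8 * (b:ℝ) ^ 2)) ≤ (η / 2) * (G ^ 2 * η) :=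
      mul_le_mul_of_nonneg_left hεb' (by positivity)
    nlinarith [h4, h5, h6, mul_nonneg (sq_nonneg G) (sq_nonneg η)]
  calc ∫ β, ‖gradient R (wB β) - ∫ β', gradient R (wB β') ∂π‖ ^ 2 ∂π
      ≤ ∫ β, ‖gradient R (wB β) - c‖ ^ 2 ∂π := stepA
    _ ≤ ∫ β, (L ^ 2 * (8 / m ^ 2 * ‖GB β wbar‖ ^ 2 + 4 * ε / m)) ∂π := stepB
    _ = L ^ 2 * (8 / m ^ 2 * (∫ β, ‖GB β wbar‖ ^ 2 ∂π) + 4 * ε / m) := stepC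
    _ ≤ L ^ 2 * (8 / m ^ 2 * (G ^ 2 / (b:ℝ)) + 4 * ε / m) := by
        refine mul_le_mul_of_nonneg_left ?_ (sq_nonneg L)
        refine add_le_add_left ?_ _
        exact mul_le_mul_of_nonneg_left stepD (by positivity)
    _ ≤ L ^ 2 * (25 * G ^ 2 * η ^ 2 / ((1 - η * L) ^ 2 * (b:ℝ))) :=
        mul_le_mul_of_nonneg_left S (sq_nonneg L)
    _ = 25 * L ^ 2 * G ^ 2 * η ^ 2 / ((1 - η * L) ^ 2 * (b:ℝ)) := by ring



end Main
end
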